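/- arXiv:2101.08041 — 5 statements merged into one kernel-verified Lean document; each statement's English description precedes it below -/
import Mathlib

section
/- For ε > 0 and δ > 1, there exists a twice continuously differentiable function Φ : ℝ → ℝ with Φ ≥ 0, |x| ≤ ε + Φ(x) for all x ∈ ℝ, |Φ'(x)| ≤ 1 for all x, and 0 ≤ Φ''(x) ≤ (2/(|x| log δ))·1_{[ε/δ, ε]}(|x|) ≤ 2δ/(ε log δ) for all x ∈ ℝ. -/
open Set

noncomputable section YW

namespace YW

/-- clamp to [0,1] -/
def cl (u : ℝ) : ℝ := min 1 (max 0 u)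

/-- C¹ smoothstep -/
def w (u : ℝ) : ℝ := (cl u)^2 * (3 - 2 * cl u)

def w' (u : ℝ) : ℝ := 6 * cl u * (1 - cl u)

lemma cl_nonneg (u : ℝ) : 0 ≤ cl u := le_min one_pos.le (le_max_left _ _)

lemma cl_le_one (u : ℝ) : cl u ≤ 1 := min_le_left _ _

lemma cl_of_nonpos {u : ℝ} (h : u ≤ 0) : cl u = 0 := by
  simp [cl, max_eq_left h]

lemma cl_of_one_le {u : ℝ} (h : 1 ≤ u) : cl u = 1 := by
  have : (0:ℝ) ≤ u := le_trans zero_le_one h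
  simp [cl, max_eq_right this, min_eq_left h]

lemma cl_of_mem {u : ℝ} (h0 : 0 ≤ u) (h1 : u ≤ 1) : cl u = u := by
  simp [cl, max_eq_right h0, min_eq_right h1]

lemma w_nonneg (u : ℝ) : 0 ≤ w u := by
  have h0 := cl_nonneg u; have h1 := cl_le_one u
  unfold w; nlinarith

lemma w_le_one (u : ℝ) : w u ≤ 1 := by
  have h0 := cl_nonneg u; have h1 := cl_le_one u
  unfold w; nlinarith [sq_nonneg (1 - cl u)]

lemma w_of_nonpos {u : ℝ} (h : u ≤ 0) : w u = 0 := by simp [w, cl_of_nonpos h]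

lemma w_of_one_le {u : ℝ} (h : 1 ≤ u) : w u = 1 := by norm_num [w, cl_of_one_le h]

lemma w'_nonneg (u : ℝ) : 0 ≤ w' u := by
  have h0 := cl_nonneg u; have h1 := cl_le_one u
  unfold w'; nlinarith

lemma w'_le_two (u : ℝ) : w' u ≤ 2 := by
  have h0 := cl_nonneg u; have h1 := cl_le_one u
  unfold w'; nlinarith [sq_nonneg (1 - 2 * cl u)]

lemma w'_of_nonpos {u : ℝ} (h : u ≤ 0) : w' u = 0 := by simp [w', cl_of_nonpos h]

lemma w'_of_one_le {u : ℝ} (h : 1 ≤ u) : w' u = 0 := by simp [w', cl_of_one_le h]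

lemma continuous_cl : Continuous cl :=
  continuous_const.min (continuous_const.max continuous_id)

lemma continuous_w' : Continuous w' := by
  unfold w'
  exact (continuous_const.mul continuous_cl).mul (continuous_const.sub continuous_cl)

/-- the unclamped cubic -/
lemma hasDerivAt_cubic (u : ℝ) :
    HasDerivAt (fun v : ℝ => v^2 * (3 - 2 * v)) (6 * u * (1 - u)) u := by
  have h : HasDerivAt (fun v : ℝ => 3 * v^2 - 2 * v^3)
      (3 * ((2:ℕ) * u^(2-1)) - 2 * ((3:ℕ) * u^(3-1))) u :=
    ((hasDerivAt_pow 2 u).const_mul 3).sub ((hasDerivAt_pow 3 u).const_mul 2)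
  have hf : (fun v : ℝ => v^2 * (3 - 2*v)) = fun v : ℝ => 3 * v^2 - 2 * v^3 := by
    funext v; ring
  rw [hf, show (6 * u * (1 - u) : ℝ)
      = 3 * ((2:ℕ) * u^(2-1)) - 2 * ((3:ℕ) * u^(3-1)) by push_cast; ring]
  exact h

lemma hasDerivAt_union {f : ℝ → ℝ} {c x : ℝ} (hl : HasDerivWithinAt f c (Iic x) x)
    (hr : HasDerivWithinAt f c (Ici x) x) : HasDerivAt f c x := by
  have := hl.union hr
  rw [Iic_union_Ici] at this
  exact hasDerivWithinAt_univ.mp this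

lemma hasDerivAt_w (u : ℝ) : HasDerivAt w (w' u) u := by
  rcases lt_trichotomy u 0 with h | h | h
  · have he : w =ᶠ[nhds u] fun _ => 0 := by
      filter_upwards [Iio_mem_nhds h] with v hv
      exact w_of_nonpos (le_of_lt hv)
    rw [w'_of_nonpos h.le]
    exact (hasDerivAt_const u 0).congr_of_eventuallyEq he
  · subst h
    rw [w'_of_nonpos le_rfl]
    apply hasDerivAt_union
    · apply ((hasDerivAt_const (0:ℝ) 0).hasDerivWithinAt).congr_of_eventuallyEq
      · filter_upwards [self_mem_nhdsWithin] with v hv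
        exact w_of_nonpos hv
      · exact w_of_nonpos le_rfl
    · have h1 : HasDerivWithinAt (fun v : ℝ => v^2 * (3 - 2 * v)) 0 (Ici 0) 0 := by
        have := (hasDerivAt_cubic 0).hasDerivWithinAt (s := Ici 0)
        simpa using this
      apply h1.congr_of_eventuallyEq
      · filter_upwards [self_mem_nhdsWithin,
          nhdsWithin_le_nhds (Iio_mem_nhds one_pos)] with v hv hv'
        simp [w, cl_of_mem hv (le_of_lt hv')]
      · simp [w, cl_of_mem le_rfl zero_le_one]
  · rcases lt_trichotomy u 1 with h1 | h1 | h1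
    · have he : w =ᶠ[nhds u] fun v => v^2 * (3 - 2 * v) := by
        filter_upwards [Ioo_mem_nhds h h1] with v hv
        simp [w, cl_of_mem hv.1.le hv.2.le]
      have : HasDerivAt w (6 * u * (1 - u)) u :=
        (hasDerivAt_cubic u).congr_of_eventuallyEq he
      rw [w', cl_of_mem h.le h1.le]
      exact this
    · subst h1
      rw [w'_of_one_le le_rfl]
      apply hasDerivAt_union
      · have h1 : HasDerivWithinAt (fun v : ℝ => v^2 * (3 - 2 * v)) 0 (Iic 1) 1 := by
          have := (hasDerivAt_cubic 1).hasDerivWithinAt (s := Iic 1)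
          simpa using this
        apply h1.congr_of_eventuallyEq
        · filter_upwards [self_mem_nhdsWithin,
            nhdsWithin_le_nhds (Ioi_mem_nhds one_pos)] with v hv hv'
          simp [w, cl_of_mem (le_of_lt hv') hv]
        · norm_num [w, cl_of_one_le le_rfl]
      · apply ((hasDerivAt_const (1:ℝ) 1).hasDerivWithinAt).congr_of_eventuallyEq
        · filter_upwards [self_mem_nhdsWithin] with v hv
          simp [w_of_one_le hv]
        · simp [w_of_one_le le_rfl]
    · have he : w =ᶠ[nhds u] fun _ => 1 := by
        filter_upwards [Ioi_mem_nhds h1] with v hv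
        exact w_of_one_le hv.le
      rw [w'_of_one_le h1.le]
      exact (hasDerivAt_const u 1).congr_of_eventuallyEq he

variable (a L : ℝ)

def psi (x : ℝ) : ℝ := w (Real.log (max (x / a) 1) / L)

def psiD (x : ℝ) : ℝ :=
  if 0 < x then w' (Real.log (max (x / a) 1) / L) / (x * L) else 0

def phi (x : ℝ) : ℝ := psi a L x - psi a L (-x)

def phiD (x : ℝ) : ℝ := psiD a L x + psiD a L (-x)

def Phi (x : ℝ) : ℝ := ∫ t in (0:ℝ)..x, phi a L t

variable {a L}

lemma psi_of_le (ha : 0 < a) {x : ℝ} (hx : x ≤ a) : psi a L x = 0 := by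
  have : x / a ≤ 1 := (div_le_one ha).mpr hx
  simp [psi, max_eq_right this, w_of_nonpos]

lemma psiD_of_le (ha : 0 < a) {x : ℝ} (hx : x ≤ a) : psiD a L x = 0 := by
  rcases le_or_gt x 0 with h | h
  · simp [psiD, not_lt.mpr h]
  · have : x / a ≤ 1 := (div_le_one ha).mpr hx
    simp [psiD, h, max_eq_right this, w'_of_nonpos]

lemma psi_nonneg (x : ℝ) : 0 ≤ psi a L x := w_nonneg _

lemma psi_le_one (x : ℝ) : psi a L x ≤ 1 := w_le_one _

lemma psiD_nonneg (hL : 0 < L) (x : ℝ) : 0 ≤ psiD a L x := by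
  unfold psiD
  split
  · rename_i h
    exact div_nonneg (w'_nonneg _) (mul_nonneg h.le hL.le)
  · exact le_rfl

lemma one_le_u (ha : 0 < a) (hL : 0 < L) {x : ℝ} (hx : a * Real.exp L ≤ x) :
    (1:ℝ) ≤ Real.log (max (x / a) 1) / L := by
  have h1 : (1:ℝ) ≤ Real.exp L := Real.one_le_exp hL.le
  have hxa : Real.exp L ≤ x / a := (le_div_iff₀ ha).mpr (by linarith [mul_comm a (Real.exp L)])
  have h2 : (1:ℝ) ≤ x / a := le_trans h1 hxa
  rw [max_eq_left h2, le_div_iff₀ hL]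
  calc 1 * L = Real.log (Real.exp L) := by rw [Real.log_exp]; ring
  _ ≤ Real.log (x / a) := Real.log_le_log (Real.exp_pos L) hxa

lemma psi_of_ge (ha : 0 < a) (hL : 0 < L) {x : ℝ} (hx : a * Real.exp L ≤ x) :
    psi a L x = 1 :=
  w_of_one_le (one_le_u ha hL hx)

lemma psiD_of_ge (ha : 0 < a) (hL : 0 < L) {x : ℝ} (hx : a * Real.exp L ≤ x) :
    psiD a L x = 0 := by
  have hx0 : 0 < x := lt_of_lt_of_le (by positivity) hx
  simp [psiD, hx0, w'_of_one_le (one_le_u ha hL hx)]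

/-- the smooth formula valid on `(0, ∞)` -/
lemma hasDerivAt_g (ha : 0 < a) (hL : 0 < L) {x : ℝ} (hx : 0 < x) :
    HasDerivAt (fun y => w (Real.log (y / a) / L))
      (w' (Real.log (x / a) / L) / (x * L)) x := by
  have h1 : HasDerivAt (fun y : ℝ => y / a) (1 / a) x := by
    simpa using (hasDerivAt_id x).div_const a
  have h2 : HasDerivAt Real.log (x / a)⁻¹ (x / a) :=
    Real.hasDerivAt_log (ne_of_gt (div_pos hx ha))
  have h3 : HasDerivAt (fun y : ℝ => Real.log (y / a)) ((x / a)⁻¹ * (1 / a)) x :=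
    HasDerivAt.comp x (h := fun y : ℝ => y / a) h2 h1
  have h4 := h3.div_const L
  have h5 := (hasDerivAt_w (Real.log (x / a) / L)).comp x h4
  have hxne : x ≠ 0 := ne_of_gt hx
  have hane : a ≠ 0 := ne_of_gt ha
  have hLne : L ≠ 0 := ne_of_gt hL
  rw [show (x / a)⁻¹ * (1 / a) / L = 1 / (x * L) by field_simp, mul_one_div] at h5
  exact h5

lemma hasDerivAt_psi (ha : 0 < a) (hL : 0 < L) (x : ℝ) :
    HasDerivAt (psi a L) (psiD a L x) x := by
  rcases lt_trichotomy x a with h | h | h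
  · have he : psi a L =ᶠ[nhds x] fun _ => 0 := by
      filter_upwards [Iio_mem_nhds h] with y hy
      exact psi_of_le ha (le_of_lt hy)
    rw [psiD_of_le ha h.le]
    exact (hasDerivAt_const x 0).congr_of_eventuallyEq he
  · rw [psiD_of_le ha h.le, h]
    apply hasDerivAt_union
    · apply ((hasDerivAt_const a (0:ℝ)).hasDerivWithinAt).congr_of_eventuallyEq
      · filter_upwards [self_mem_nhdsWithin] with y hy
        exact psi_of_le ha hy
      · exact psi_of_le ha le_rfl
    · have hg := (hasDerivAt_g ha hL ha).hasDerivWithinAt (s := Ici a)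
      have hval : w' (Real.log (a / a) / L) / (a * L) = 0 := by
        rw [div_self (ne_of_gt ha), Real.log_one, zero_div, w'_of_nonpos le_rfl, zero_div]
      rw [hval] at hg
      apply hg.congr_of_eventuallyEq
      · filter_upwards [self_mem_nhdsWithin] with y hy
        have : (1:ℝ) ≤ y / a := (one_le_div ha).mpr hy
        simp [psi, max_eq_left this]
      · have : (1:ℝ) ≤ a / a := by rw [div_self (ne_of_gt ha)]
        simp [psi, max_eq_left this]
  · have hx0 : 0 < x := lt_trans ha h
    have he : psi a L =ᶠ[nhds x] fun y => w (Real.log (y / a) / L) := by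
      filter_upwards [Ioi_mem_nhds h] with y hy
      have : (1:ℝ) ≤ y / a := (one_le_div ha).mpr hy.le
      simp [psi, max_eq_left this]
    have hg := (hasDerivAt_g ha hL hx0).congr_of_eventuallyEq he
    have hD : psiD a L x = w' (Real.log (x / a) / L) / (x * L) := by
      have h1 : (1:ℝ) ≤ x / a := (one_le_div ha).mpr h.le
      simp [psiD, hx0, max_eq_left h1]
    rw [hD]
    exact hg

lemma hasDerivAt_phi (ha : 0 < a) (hL : 0 < L) (x : ℝ) :
    HasDerivAt (phi a L) (phiD a L x) x := by
  have h1 := hasDerivAt_psi ha hL x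
  have h2 : HasDerivAt (fun y => psi a L (-y)) (psiD a L (-x) * (-1)) x :=
    (hasDerivAt_psi ha hL (-x)).comp x (hasDerivAt_neg x)
  have := h1.sub h2
  rw [show phiD a L x = psiD a L x - psiD a L (-x) * (-1) by unfold phiD; ring]
  exact this

lemma continuous_phi (ha : 0 < a) (hL : 0 < L) : Continuous (phi a L) :=
  continuous_iff_continuousAt.mpr fun x =>
    (hasDerivAt_phi ha hL x).differentiableAt.continuousAt

lemma continuous_psiD (ha : 0 < a) (hL : 0 < L) : Continuous (psiD a L) := by
  rw [continuous_iff_continuousAt]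
  intro x
  rcases lt_or_ge x a with h | h
  · have he : (fun _ => (0:ℝ)) =ᶠ[nhds x] psiD a L := by
      filter_upwards [Iio_mem_nhds h] with y hy
      exact (psiD_of_le ha hy.le).symm
    exact continuousAt_const.congr he
  · have hx0 : 0 < x := lt_of_lt_of_le ha h
    have he : (fun y => w' (Real.log (max (y / a) 1) / L) / (y * L)) =ᶠ[nhds x] psiD a L := by
      filter_upwards [Ioi_mem_nhds hx0] with y hy
      simp only [psiD]
      rw [if_pos (mem_Ioi.mp hy)]
    apply ContinuousAt.congr _ he
    apply ContinuousAt.div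
    · apply continuous_w'.continuousAt.comp
      apply ContinuousAt.div_const
      apply ContinuousAt.log
      · exact (continuousAt_id.div_const a).max continuousAt_const
      · have : (1:ℝ) ≤ max (x / a) 1 := le_max_right _ _
        linarith
    · exact continuousAt_id.mul continuousAt_const
    · exact ne_of_gt (mul_pos hx0 hL)

lemma continuous_phiD (ha : 0 < a) (hL : 0 < L) : Continuous (phiD a L) :=
  (continuous_psiD ha hL).add ((continuous_psiD ha hL).comp continuous_neg)

lemma hasDerivAt_Phi (ha : 0 < a) (hL : 0 < L) (x : ℝ) :
    HasDerivAt (Phi a L) (phi a L x) x := by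
  apply intervalIntegral.integral_hasDerivAt_right
    ((continuous_phi ha hL).intervalIntegrable _ _)
    ((continuous_phi ha hL).stronglyMeasurableAtFilter _ _)
    (continuous_phi ha hL).continuousAt

lemma Phi_even (x : ℝ) : Phi a L (-x) = Phi a L x := by
  have key : ∫ t in (0:ℝ)..x, phi a L (-t) = ∫ t in (-x)..(0:ℝ), phi a L t := by
    simpa using intervalIntegral.integral_comp_neg (a := 0) (b := x) (fun t => phi a L t)
  have hodd : ∀ t, phi a L (-t) = -phi a L t := by
    intro t; unfold phi; rw [neg_neg]; ring
  have lhs : ∫ t in (0:ℝ)..x, phi a L (-t) = -Phi a L x := by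
    rw [show (fun t => phi a L (-t)) = fun t => -phi a L t from funext hodd]
    rw [intervalIntegral.integral_neg]; rfl
  have rhs : ∫ t in (-x)..(0:ℝ), phi a L t = -Phi a L (-x) := by
    rw [intervalIntegral.integral_symm 0 (-x)]; rfl
  rw [lhs, rhs] at key
  linarith

lemma phi_nonneg_of_nonneg (ha : 0 < a) {x : ℝ} (hx : 0 ≤ x) : 0 ≤ phi a L x := by
  unfold phi
  have h1 : psi a L (-x) = 0 := psi_of_le ha (le_trans (neg_nonpos.mpr hx) ha.le)
  rw [h1, sub_zero]
  exact psi_nonneg _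

lemma Phi_nonneg (ha : 0 < a) (x : ℝ) : 0 ≤ Phi a L x := by
  rcases le_or_gt 0 x with h | h
  · exact intervalIntegral.integral_nonneg h fun t ht => phi_nonneg_of_nonneg ha ht.1
  · rw [← Phi_even (a := a) (L := L) x, show -x = |x| by rw [abs_of_neg h]]
    exact intervalIntegral.integral_nonneg (abs_nonneg x) fun t ht =>
      phi_nonneg_of_nonneg ha ht.1

lemma phi_of_ge (ha : 0 < a) (hL : 0 < L) {x : ℝ} (hx : a * Real.exp L ≤ x) :
    phi a L x = 1 := by
  have hx0 : 0 < x := lt_of_lt_of_le (by positivity) hx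
  unfold phi
  rw [psi_of_ge ha hL hx, psi_of_le ha (le_trans (neg_nonpos.mpr hx0.le) ha.le), sub_zero]

lemma Phi_ge (ha : 0 < a) (hL : 0 < L) {x : ℝ} (hx : a * Real.exp L ≤ x) :
    x - a * Real.exp L ≤ Phi a L x := by
  set b := a * Real.exp L with hb
  have hb0 : 0 < b := by positivity
  have hsplit : Phi a L x = (∫ t in (0:ℝ)..b, phi a L t) + ∫ t in b..x, phi a L t := by
    rw [intervalIntegral.integral_add_adjacent_intervals
      ((continuous_phi ha hL).intervalIntegrable _ _)
      ((continuous_phi ha hL).intervalIntegrable _ _)]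
    rfl
  have h1 : 0 ≤ ∫ t in (0:ℝ)..b, phi a L t :=
    intervalIntegral.integral_nonneg hb0.le fun t ht => phi_nonneg_of_nonneg ha ht.1
  have h2 : (∫ t in b..x, phi a L t) = x - b := by
    rw [intervalIntegral.integral_congr (g := fun _ => (1:ℝ))]
    · simp
    · intro t ht
      rw [uIcc_of_le hx] at ht
      exact phi_of_ge ha hL ht.1
  rw [hsplit, h2]
  linarith

end YW

end YW

open YW in
theorem yamada_watanabe_smoothing (ε δ : ℝ) (hε : 0 < ε) (hδ : 1 < δ) :
    ∃ Φ : ℝ → ℝ, ContDiff ℝ 2 Φ ∧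
      (∀ x, 0 ≤ Φ x) ∧
      (∀ x, |x| ≤ ε + Φ x) ∧
      (∀ x, |deriv Φ x| ≤ 1) ∧
      (∀ x, 0 ≤ deriv (deriv Φ) x ∧
        deriv (deriv Φ) x ≤
          (Icc (ε / δ) ε).indicator (fun y => 2 / (y * Real.log δ)) |x| ∧
        (Icc (ε / δ) ε).indicator (fun y => 2 / (y * Real.log δ)) |x| ≤
          2 * δ / (ε * Real.log δ)) := by
  have hδ0 : 0 < δ := lt_trans one_pos hδ
  set a := ε / δ with hadef
  set L := Real.log δ with hLdef
  have ha : 0 < a := div_pos hε hδ0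
  have hL : 0 < L := Real.log_pos hδ
  have hbε : a * Real.exp L = ε := by
    rw [hLdef, Real.exp_log hδ0, hadef]
    field_simp
  refine ⟨Phi a L, ?_, Phi_nonneg ha, ?_, ?_, ?_⟩
  · -- ContDiff
    have hΦd : deriv (Phi a L) = phi a L :=
      funext fun x => (hasDerivAt_Phi ha hL x).deriv
    have hφd : deriv (phi a L) = phiD a L :=
      funext fun x => (hasDerivAt_phi ha hL x).deriv
    rw [show (2 : WithTop ℕ∞) = 1 + 1 by norm_num]
    refine contDiff_succ_iff_deriv.mpr
      ⟨fun x => (hasDerivAt_Phi ha hL x).differentiableAt, by simp, ?_⟩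
    rw [hΦd]
    refine contDiff_one_iff_deriv.mpr
      ⟨fun x => (hasDerivAt_phi ha hL x).differentiableAt, ?_⟩
    rw [hφd]
    exact continuous_phiD ha hL
  · -- |x| ≤ ε + Φ x
    intro x
    rcases le_or_gt |x| ε with h | h
    · linarith [Phi_nonneg ha (L := L) x]
    · have habs : Phi a L |x| = Phi a L x := by
        rcases le_or_gt 0 x with h0 | h0
        · rw [abs_of_nonneg h0]
        · rw [abs_of_neg h0]; exact Phi_even x
      have := Phi_ge ha hL (x := |x|) (by rw [hbε]; exact h.le)
      rw [hbε, habs] at this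
      linarith
  · -- |deriv Φ| ≤ 1
    intro x
    rw [(hasDerivAt_Phi ha hL x).deriv]
    have h1 : 0 ≤ psi a L x := psi_nonneg x
    have h2 : psi a L x ≤ 1 := psi_le_one x
    have h3 : 0 ≤ psi a L (-x) := psi_nonneg (-x)
    have h4 : psi a L (-x) ≤ 1 := psi_le_one (-x)
    rw [abs_le]
    constructor
    · unfold phi; linarith
    · unfold phi; linarith
  · -- second derivative
    intro x
    have hΦd : deriv (Phi a L) = phi a L :=
      funext fun x => (hasDerivAt_Phi ha hL x).deriv
    have hdd : deriv (deriv (Phi a L)) x = phiD a L x := by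
      rw [hΦd]; exact (hasDerivAt_phi ha hL x).deriv
    have habs : phiD a L x = psiD a L |x| := by
      rcases le_or_gt 0 x with h0 | h0
      · rw [abs_of_nonneg h0]
        unfold phiD
        rw [psiD_of_le ha (le_trans (neg_nonpos.mpr h0) ha.le), add_zero]
      · rw [abs_of_neg h0]
        unfold phiD
        rw [psiD_of_le ha (le_trans h0.le ha.le), zero_add]
    rw [hdd, habs]
    by_cases hmem : |x| ∈ Icc a ε
    · rw [indicator_of_mem hmem]
      obtain ⟨hm1, hm2⟩ := hmem
      have hx0 : 0 < |x| := lt_of_lt_of_le ha hm1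
      refine ⟨psiD_nonneg hL _, ?_, ?_⟩
      · have hD : psiD a L |x| = w' (Real.log (max (|x| / a) 1) / L) / (|x| * L) := by
          simp [psiD, hx0]
        rw [hD]
        gcongr
        exact w'_le_two _
      · have h1 : 2 / (|x| * L) ≤ 2 / (a * L) := by
          gcongr
        have h2 : 2 / (a * L) = 2 * δ / (ε * L) := by
          rw [hadef]; field_simp
        linarith
    · rw [indicator_of_notMem hmem]
      have hzero : psiD a L |x| = 0 := by
        rcases not_and_or.mp hmem with h | h
        · exact psiD_of_le ha (le_of_not_ge h)
        · apply psiD_of_ge ha hL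
          rw [hbε]
          exact (le_of_not_ge h)
      rw [hzero]
      exact ⟨le_rfl, le_rfl, by positivity⟩
end

section
/- Let μ : [0,∞) → [0,∞) be continuous, non-decreasing, μ(0)=0, and let f : ℝ × ℝ → ℝ be continuous, bounded in its first argument, locally Lipschitz in its second argument, and of linear growth in its second argument uniformly over the first argument in compacts. Let s : [0,∞) → ℝ be continuous. Then for every x₀ ∈ ℝ there exists a unique continuous Y : [0,∞) → ℝ satisfying Y(t) = x₀ + ∫₀^t f(s(u), Y(u)) dμ(u) for all t ∈ [0,∞), where the integral is a Riemann–Stieltjes integral. -/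
open Set MeasureTheory Filter Topology

namespace SODE

variable {F : StieltjesFunction ℝ}

lemma noAtoms (hFc : Continuous F) : NullSingletonClass F.measure := by
  constructor
  intro a
  rw [F.measure_singleton]
  have h1 : Function.leftLim F a = F a :=
    leftLim_eq_of_tendsto
      ((hFc.tendsto a).mono_left nhdsWithin_le_nhds)
  simp [h1]

lemma toReal_Ioc {a b : ℝ} (hab : a ≤ b) :
    (F.measure (Ioc a b)).toReal = F b - F a := by
  rw [F.measure_Ioc, ENNReal.toReal_ofReal (sub_nonneg.2 (F.mono hab))]

lemma integral_abs_bound {h : ℝ → ℝ} {a b M : ℝ} (hab : a ≤ b)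
    (hm : AEStronglyMeasurable h (F.measure.restrict (Ioc a b)))
    (hM : ∀ u ∈ Ioc a b, |h u| ≤ M) :
    |∫ u in Ioc a b, h u ∂F.measure| ≤ M * (F b - F a) := by
  have := norm_setIntegral_le_of_norm_le_const (μ := F.measure) (s := Ioc a b) (C := M) (f := h)
    (by rw [F.measure_Ioc]; exact ENNReal.ofReal_lt_top) (fun x hx => hM x hx)
  rwa [Real.norm_eq_abs, measureReal_def, toReal_Ioc hab] at this

lemma integral_split {h : ℝ → ℝ} (hh : Continuous h) {a c b : ℝ} (hac : a ≤ c) (hcb : c ≤ b) :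
    ∫ u in Ioc a b, h u ∂F.measure
      = (∫ u in Ioc a c, h u ∂F.measure) + ∫ u in Ioc c b, h u ∂F.measure := by
  rw [← Ioc_union_Ioc_eq_Ioc hac hcb,
    setIntegral_union (Ioc_disjoint_Ioc_of_le le_rfl) measurableSet_Ioc
      hh.integrableOn_Ioc hh.integrableOn_Ioc]

lemma exists_local (hFc : Continuous F) {g : ℝ → ℝ → ℝ}
    (hgc : Continuous fun p : ℝ × ℝ => g p.1 p.2) {L : ℝ} (hL0 : 0 ≤ L)
    (hglip : ∀ u y y', |g u y - g u y'| ≤ L * |y - y'|)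
    {a b : ℝ} (hab : a ≤ b) (hsmall : L * (F b - F a) ≤ 1 / 2) (y₀ : ℝ) :
    ∃ Y : ℝ → ℝ, Continuous Y ∧
      ∀ t : ℝ, Y t = y₀ + ∫ u in Ioc a (max a (min t b)), g u (Y u) ∂F.measure := by
  haveI : NullSingletonClass F.measure := noAtoms hFc
  haveI : Nonempty (Icc a b) := (nonempty_Icc.2 hab).to_subtype
  -- extension of a continuous map on Icc a b to ℝ
  let ext : C(Icc a b, ℝ) → ℝ → ℝ := fun Y u => Y (projIcc a b hab u)
  have hext : ∀ Y : C(Icc a b, ℝ), Continuous (ext Y) := fun Y =>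
    Y.continuous.comp continuous_projIcc
  have hint : ∀ Y : C(Icc a b, ℝ), Continuous fun u => g u (ext Y u) := fun Y =>
    hgc.comp (continuous_id.prodMk (hext Y))
  let Φ : C(Icc a b, ℝ) → C(Icc a b, ℝ) := fun Y =>
    ⟨fun t => y₀ + ∫ u in a..(t : ℝ), g u (ext Y u) ∂F.measure, by
      exact continuous_const.add
        ((intervalIntegral.continuous_primitive
          (fun c d => (hint Y).intervalIntegrable c d) a).comp continuous_subtype_val)⟩
  have hΦeq : ∀ (Y : C(Icc a b, ℝ)) (t : Icc a b),
      Φ Y t = y₀ + ∫ u in Ioc a (t : ℝ), g u (ext Y u) ∂F.measure := by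
    intro Y t
    show y₀ + _ = _
    rw [intervalIntegral.integral_of_le t.2.1]
  have hlipΦ : LipschitzWith (1 / 2 : NNReal) Φ := by
    apply LipschitzWith.of_dist_le_mul
    intro Y Z
    rw [ContinuousMap.dist_le (by positivity)]
    intro t
    rw [Real.dist_eq, hΦeq Y t, hΦeq Z t]
    have hI : |∫ u in Ioc a (t : ℝ), (g u (ext Y u) - g u (ext Z u)) ∂F.measure|
        ≤ (L * dist Y Z) * (F b - F a) := by
      have h1 : |∫ u in Ioc a (t : ℝ), (g u (ext Y u) - g u (ext Z u)) ∂F.measure|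
          ≤ (L * dist Y Z) * (F (t : ℝ) - F a) := by
        apply integral_abs_bound t.2.1
          (((hint Y).sub (hint Z)).aestronglyMeasurable.restrict)
        intro u _
        calc |g u (ext Y u) - g u (ext Z u)| ≤ L * |ext Y u - ext Z u| := hglip _ _ _
          _ ≤ L * dist Y Z := by
              apply mul_le_mul_of_nonneg_left _ hL0
              rw [← Real.dist_eq]
              exact ContinuousMap.dist_apply_le_dist _
      refine h1.trans ?_
      apply mul_le_mul_of_nonneg_left (sub_le_sub_right (F.mono t.2.2) _) (by positivity)
    have heq : (y₀ + ∫ u in Ioc a (t : ℝ), g u (ext Y u) ∂F.measure)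
        - (y₀ + ∫ u in Ioc a (t : ℝ), g u (ext Z u) ∂F.measure)
        = ∫ u in Ioc a (t : ℝ), (g u (ext Y u) - g u (ext Z u)) ∂F.measure := by
      rw [integral_sub ((hint Y).integrableOn_Ioc) ((hint Z).integrableOn_Ioc)]
      ring
    rw [heq]
    refine hI.trans ?_
    have : L * (F b - F a) * dist Y Z ≤ 1 / 2 * dist Y Z :=
      mul_le_mul_of_nonneg_right hsmall dist_nonneg
    calc (L * dist Y Z) * (F b - F a) = L * (F b - F a) * dist Y Z := by ring
      _ ≤ 1 / 2 * dist Y Z := this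
      _ = (1 / 2 : NNReal) * dist Y Z := by norm_num
  have hcontr : ContractingWith (1 / 2 : NNReal) Φ := ⟨by rw [show (1/2 : NNReal) = 2⁻¹ by norm_num]; exact inv_lt_one_of_one_lt₀ one_lt_two, hlipΦ⟩
  set Ys := hcontr.fixedPoint Φ with hYs
  have hfix : Φ Ys = Ys := hcontr.fixedPoint_isFixedPt
  refine ⟨ext Ys, hext Ys, fun t => ?_⟩
  have hmem : max a (min t b) ∈ Icc a b := ⟨le_max_left _ _, max_le hab (min_le_right _ _)⟩
  have hproj : projIcc a b hab t = ⟨max a (min t b), hmem⟩ :=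
    Subtype.ext (by simp [projIcc, min_comm])
  have h1 : ext Ys t = Φ Ys (projIcc a b hab t) := by
    show Ys (projIcc a b hab t) = _
    rw [hfix]
  rw [h1, hproj, hΦeq]

lemma exists_glob (hFc : Continuous F) {g : ℝ → ℝ → ℝ}
    (hgc : Continuous fun p : ℝ × ℝ => g p.1 p.2) {L : ℝ} (hL0 : 0 ≤ L)
    (hglip : ∀ u y y', |g u y - g u y'| ≤ L * |y - y'|) :
    ∀ n : ℕ, ∀ a b : ℝ, a ≤ b → L * (F b - F a) ≤ n / 2 →
    ∀ y₀ : ℝ, ∃ Y : ℝ → ℝ, Continuous Y ∧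
      ∀ t : ℝ, Y t = y₀ + ∫ u in Ioc a (max a (min t b)), g u (Y u) ∂F.measure := by
  intro n
  induction n with
  | zero =>
    intro a b hab hn y₀
    refine exists_local hFc hgc hL0 hglip hab (le_trans ?_ (by norm_num : (0:ℝ) ≤ 1/2)) y₀
    simpa using hn
  | succ n ih =>
    intro a b hab hn y₀
    by_cases hsmall : L * (F b - F a) ≤ 1 / 2
    · exact exists_local hFc hgc hL0 hglip hab hsmall y₀
    · push_neg at hsmall
      have hFab : 0 ≤ F b - F a := sub_nonneg.2 (F.mono hab)
      have hL : 0 < L := by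
        rcases hL0.lt_or_eq with h | h
        · exact h
        · exfalso; rw [← h] at hsmall; simp at hsmall; linarith
      have hδpos : 0 < 1 / (2 * L) := by positivity
      have hLδ : L * (1 / (2 * L)) = 1 / 2 := by field_simp
      have hmem : F a + 1 / (2 * L) ∈ Icc (F a) (F b) := by
        constructor
        · linarith
        · nlinarith
      obtain ⟨c, hc, hFceq⟩ := intermediate_value_Icc hab hFc.continuousOn hmem
      have h1 : L * (F c - F a) ≤ 1 / 2 := by rw [hFceq]; rw [add_sub_cancel_left]; linarith
      have h2 : L * (F b - F c) ≤ n / 2 := by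
        rw [hFceq]
        push_cast at hn
        nlinarith
      obtain ⟨Y₁, hY₁c, hY₁⟩ := exists_local hFc hgc hL0 hglip hc.1 h1 y₀
      obtain ⟨Y₂, hY₂c, hY₂⟩ := ih c b hc.2 h2 (Y₁ c)
      have hY₂atc : Y₂ c = Y₁ c := by
        have h := hY₂ c
        rw [min_eq_left hc.2, max_self, Ioc_self] at h
        simpa using h
      set Y : ℝ → ℝ := fun t => if t ≤ c then Y₁ t else Y₂ t with hYdef
      have hYle : ∀ u, u ≤ c → Y u = Y₁ u := fun u h => if_pos h
      have hYgt : ∀ u, c < u → Y u = Y₂ u := fun u h => if_neg (not_le.2 h)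
      have hYcont : Continuous Y := by
        apply Continuous.if_le hY₁c hY₂c continuous_id continuous_const
        intro x hx
        simp only [id_eq] at hx
        rw [hx, hY₂atc]
      have hintY : Continuous fun u => g u (Y u) := hgc.comp (continuous_id.prodMk hYcont)
      have hintY₁ : Continuous fun u => g u (Y₁ u) := hgc.comp (continuous_id.prodMk hY₁c)
      have hintY₂ : Continuous fun u => g u (Y₂ u) := hgc.comp (continuous_id.prodMk hY₂c)
      refine ⟨Y, hYcont, fun t => ?_⟩
      by_cases ht : t ≤ c
      · have hmin1 : min t b = t := min_eq_left (ht.trans hc.2)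
        have hmin2 : min t c = t := min_eq_left ht
        have hcongr : ∀ u ∈ Ioc a (max a t), g u (Y u) = g u (Y₁ u) := fun u hu =>
          congrArg (g u) (hYle u (hu.2.trans (max_le hc.1 ht)))
        calc Y t = Y₁ t := hYle t ht
          _ = y₀ + ∫ u in Ioc a (max a (min t c)), g u (Y₁ u) ∂F.measure := hY₁ t
          _ = y₀ + ∫ u in Ioc a (max a t), g u (Y u) ∂F.measure := by
              have hcongr' : ∫ u in Ioc a (max a t), g u (Y₁ u) ∂F.measure
                  = ∫ u in Ioc a (max a t), g u (Y u) ∂F.measure :=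
                setIntegral_congr_fun measurableSet_Ioc
                  (fun u hu => (hcongr u hu).symm)
              rw [hmin2, hcongr']
          _ = y₀ + ∫ u in Ioc a (max a (min t b)), g u (Y u) ∂F.measure := by rw [hmin1]
      · push_neg at ht
        have hct : c ≤ min t b := le_min ht.le hc.2
        have hat : a ≤ min t b := hc.1.trans hct
        have hτ : max a (min t b) = min t b := max_eq_right hat
        have hY₁atc : Y₁ c = y₀ + ∫ u in Ioc a c, g u (Y u) ∂F.measure := by
          have h := hY₁ c
          rw [min_self, max_eq_right hc.1] at h
          have hcongr : ∫ u in Ioc a c, g u (Y₁ u) ∂F.measure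
              = ∫ u in Ioc a c, g u (Y u) ∂F.measure :=
            setIntegral_congr_fun measurableSet_Ioc
              (fun u hu => congrArg (g u) (hYle u hu.2).symm)
          rw [h, hcongr]
        calc Y t = Y₂ t := hYgt t ht
          _ = Y₁ c + ∫ u in Ioc c (max c (min t b)), g u (Y₂ u) ∂F.measure := hY₂ t
          _ = Y₁ c + ∫ u in Ioc c (min t b), g u (Y u) ∂F.measure := by
              have hcongr2 : ∫ u in Ioc c (min t b), g u (Y₂ u) ∂F.measure
                  = ∫ u in Ioc c (min t b), g u (Y u) ∂F.measure :=
                setIntegral_congr_fun measurableSet_Ioc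
                  (fun u hu => congrArg (g u) (hYgt u hu.1).symm)
              rw [max_eq_right hct, hcongr2]
          _ = y₀ + ∫ u in Ioc a (max a (min t b)), g u (Y u) ∂F.measure := by
              rw [hτ, integral_split hintY hc.1 hct, hY₁atc]
              ring

lemma unique_small (hFc : Continuous F) {L a b : ℝ} (hL0 : 0 ≤ L) (hab : a ≤ b)
    (hsmall : L * (F b - F a) ≤ 1 / 2) {Y Z p q : ℝ → ℝ}
    (hYc : Continuous Y) (hZc : Continuous Z) (hpc : Continuous p) (hqc : Continuous q)
    (hpq : ∀ u ∈ Icc a b, |p u - q u| ≤ L * |Y u - Z u|)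
    (hYeq : ∀ t ∈ Icc a b, Y t = Y a + ∫ u in Ioc a t, p u ∂F.measure)
    (hZeq : ∀ t ∈ Icc a b, Z t = Z a + ∫ u in Ioc a t, q u ∂F.measure)
    (haz : Y a = Z a) : ∀ t ∈ Icc a b, Y t = Z t := by
  obtain ⟨u₀, hu₀, hmax⟩ := isCompact_Icc.exists_isMaxOn (nonempty_Icc.2 hab)
    ((hYc.sub hZc).abs.continuousOn)
  set M := |Y u₀ - Z u₀| with hMdef
  have hM0 : 0 ≤ M := abs_nonneg _
  have hMb : ∀ u ∈ Icc a b, |Y u - Z u| ≤ M := fun u hu => hmax hu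
  have key : M ≤ 1 / 2 * M := by
    show |Y u₀ - Z u₀| ≤ 1 / 2 * M
    have hdiff : Y u₀ - Z u₀ = ∫ u in Ioc a u₀, (p u - q u) ∂F.measure := by
      rw [hYeq u₀ hu₀, hZeq u₀ hu₀, haz,
        integral_sub hpc.integrableOn_Ioc hqc.integrableOn_Ioc]
      ring
    rw [hdiff]
    have hb := integral_abs_bound (F := F) (M := L * M) (h := fun u => p u - q u) hu₀.1
      ((hpc.sub hqc).aestronglyMeasurable.restrict)
      (fun u hu => (hpq u ⟨hu.1.le, hu.2.trans hu₀.2⟩).trans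
        (mul_le_mul_of_nonneg_left (hMb u ⟨hu.1.le, hu.2.trans hu₀.2⟩) hL0))
    refine hb.trans ?_
    calc L * M * (F u₀ - F a) = L * (F u₀ - F a) * M := by ring
      _ ≤ 1 / 2 * M := by
          refine mul_le_mul_of_nonneg_right ?_ hM0
          refine le_trans ?_ hsmall
          exact mul_le_mul_of_nonneg_left (sub_le_sub_right (F.mono hu₀.2) _) hL0
  have hM : M ≤ 0 := by linarith
  intro t ht
  have h1 := (hMb t ht).trans hM
  have h2 := abs_nonneg (Y t - Z t)
  have h3 : |Y t - Z t| = 0 := le_antisymm h1 h2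
  have := abs_eq_zero.1 h3
  linarith

lemma unique_glob (hFc : Continuous F) {L : ℝ} (hL0 : 0 ≤ L) :
    ∀ n : ℕ, ∀ a b : ℝ, a ≤ b → L * (F b - F a) ≤ n / 2 →
    ∀ Y Z p q : ℝ → ℝ, Continuous Y → Continuous Z → Continuous p → Continuous q →
    (∀ u ∈ Icc a b, |p u - q u| ≤ L * |Y u - Z u|) →
    (∀ t ∈ Icc a b, Y t = Y a + ∫ u in Ioc a t, p u ∂F.measure) →
    (∀ t ∈ Icc a b, Z t = Z a + ∫ u in Ioc a t, q u ∂F.measure) →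
    Y a = Z a → ∀ t ∈ Icc a b, Y t = Z t := by
  intro n
  induction n with
  | zero =>
    intro a b hab hn Y Z p q hYc hZc hpc hqc hpq hYeq hZeq haz
    refine unique_small hFc hL0 hab (le_trans ?_ (by norm_num : (0:ℝ) ≤ 1/2))
      hYc hZc hpc hqc hpq hYeq hZeq haz
    simpa using hn
  | succ n ih =>
    intro a b hab hn Y Z p q hYc hZc hpc hqc hpq hYeq hZeq haz
    by_cases hsmall : L * (F b - F a) ≤ 1 / 2
    · exact unique_small hFc hL0 hab hsmall hYc hZc hpc hqc hpq hYeq hZeq haz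
    · push_neg at hsmall
      have hFab : 0 ≤ F b - F a := sub_nonneg.2 (F.mono hab)
      have hL : 0 < L := by
        rcases hL0.lt_or_eq with h | h
        · exact h
        · exfalso; rw [← h] at hsmall; simp at hsmall; linarith
      have hδpos : 0 < 1 / (2 * L) := by positivity
      have hLδ : L * (1 / (2 * L)) = 1 / 2 := by field_simp
      have hmem : F a + 1 / (2 * L) ∈ Icc (F a) (F b) := by
        constructor
        · linarith
        · nlinarith
      obtain ⟨c, hc, hFceq⟩ := intermediate_value_Icc hab hFc.continuousOn hmem
      have h1 : L * (F c - F a) ≤ 1 / 2 := by rw [hFceq, add_sub_cancel_left]; linarith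
      have h2 : L * (F b - F c) ≤ n / 2 := by
        rw [hFceq]
        push_cast at hn
        nlinarith
      have hsubac : Icc a c ⊆ Icc a b := Icc_subset_Icc le_rfl hc.2
      have hsubcb : Icc c b ⊆ Icc a b := Icc_subset_Icc hc.1 le_rfl
      have hfirst : ∀ t ∈ Icc a c, Y t = Z t :=
        unique_small hFc hL0 hc.1 h1 hYc hZc hpc hqc
          (fun u hu => hpq u (hsubac hu))
          (fun t htt => hYeq t (hsubac htt)) (fun t htt => hZeq t (hsubac htt)) haz
      have hYatc : ∀ t ∈ Icc c b, Y t = Y c + ∫ u in Ioc c t, p u ∂F.measure := by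
        intro t htt
        rw [hYeq t ⟨hc.1.trans htt.1, htt.2⟩, hYeq c hc,
          integral_split hpc hc.1 htt.1]
        ring
      have hZatc : ∀ t ∈ Icc c b, Z t = Z c + ∫ u in Ioc c t, q u ∂F.measure := by
        intro t htt
        rw [hZeq t ⟨hc.1.trans htt.1, htt.2⟩, hZeq c hc,
          integral_split hqc hc.1 htt.1]
        ring
      have hsecond := ih c b hc.2 h2 Y Z p q hYc hZc hpc hqc
        (fun u hu => hpq u (hsubcb hu)) hYatc hZatc (hfirst c ⟨hc.1, le_rfl⟩)
      intro t htt
      rcases le_total t c with h | h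
      · exact hfirst t ⟨htt.1, h⟩
      · exact hsecond t ⟨h, htt.2⟩

lemma integral_le_of_le {φ : ℝ → ℝ} (hφc : Continuous φ) {a b M : ℝ} (hab : a ≤ b)
    (hφ0 : ∀ u, 0 ≤ φ u) (hM : ∀ u ∈ Ioc a b, φ u ≤ M) :
    ∫ u in Ioc a b, φ u ∂F.measure ≤ M * (F b - F a) := by
  refine le_trans (le_abs_self _) ?_
  exact integral_abs_bound hab hφc.aestronglyMeasurable.restrict
    (fun u hu => by rw [abs_of_nonneg (hφ0 u)]; exact hM u hu)

lemma gronwall_small (hFc : Continuous F) {C a b A : ℝ} (hC : 0 ≤ C) (hA : 0 ≤ A) (hab : a ≤ b)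
    (hsmall : C * (F b - F a) ≤ 1 / 2) {φ : ℝ → ℝ} (hφc : Continuous φ) (hφ0 : ∀ u, 0 ≤ φ u)
    (hyp : ∀ t ∈ Icc a b, φ t ≤ A + C * ∫ u in Ioc a t, φ u ∂F.measure) :
    ∀ t ∈ Icc a b, φ t ≤ 2 * A := by
  obtain ⟨u₀, hu₀, hmax⟩ := isCompact_Icc.exists_isMaxOn (nonempty_Icc.2 hab) hφc.continuousOn
  have hM0 : 0 ≤ φ u₀ := hφ0 u₀
  have hint : ∫ u in Ioc a u₀, φ u ∂F.measure ≤ φ u₀ * (F u₀ - F a) :=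
    integral_le_of_le hφc hu₀.1 hφ0 (fun u hu => hmax ⟨hu.1.le, hu.2.trans hu₀.2⟩)
  have hM : φ u₀ ≤ A + 1 / 2 * φ u₀ := by
    refine (hyp u₀ hu₀).trans ?_
    have h1 : C * ∫ u in Ioc a u₀, φ u ∂F.measure ≤ C * (F u₀ - F a) * φ u₀ := by
      refine le_trans (mul_le_mul_of_nonneg_left hint hC) ?_
      ring_nf; exact le_rfl
    have h2 : C * (F u₀ - F a) * φ u₀ ≤ 1 / 2 * φ u₀ := by
      refine mul_le_mul_of_nonneg_right (le_trans ?_ hsmall) hM0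
      exact mul_le_mul_of_nonneg_left (sub_le_sub_right (F.mono hu₀.2) _) hC
    linarith
  intro t ht
  have h4 : φ t ≤ φ u₀ := hmax ht
  linarith

lemma gronwall (hFc : Continuous F) {C : ℝ} (hC : 0 ≤ C) :
    ∀ n : ℕ, ∀ a b A : ℝ, a ≤ b → 0 ≤ A → C * (F b - F a) ≤ n / 2 →
    ∀ φ : ℝ → ℝ, Continuous φ → (∀ u, 0 ≤ φ u) →
    (∀ t ∈ Icc a b, φ t ≤ A + C * ∫ u in Ioc a t, φ u ∂F.measure) →
    ∀ t ∈ Icc a b, φ t ≤ 3 ^ n * A := by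
  intro n
  induction n with
  | zero =>
    intro a b A hab hA hn φ hφc hφ0 hyp t ht
    have hn' : C * (F b - F a) ≤ 0 := by simpa using hn
    rcases hC.lt_or_eq with hC0 | hC0
    · have hFb : F b - F a ≤ 0 := by nlinarith
      have hFt : F t - F a ≤ 0 := by
        have := F.mono ht.2
        linarith
      have hμ : F.measure (Ioc a t) = 0 := by
        rw [F.measure_Ioc]
        exact ENNReal.ofReal_eq_zero.2 hFt
      have h := hyp t ht
      rw [Measure.restrict_eq_zero.2 hμ, integral_zero_measure] at h
      simpa using h
    · have h := hyp t ht
      rw [← hC0] at h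
      simpa using h
  | succ n ih =>
    intro a b A hab hA hn φ hφc hφ0 hyp
    have h23 : (2 : ℝ) ≤ 3 ^ (n + 1) := by
      calc (2:ℝ) ≤ 3 := by norm_num
        _ ≤ 3 ^ (n+1) := le_self_pow₀ (by norm_num) (Nat.succ_ne_zero n)
    by_cases hsmall : C * (F b - F a) ≤ 1 / 2
    · intro t ht
      refine (gronwall_small hFc hC hA hab hsmall hφc hφ0 hyp t ht).trans ?_
      exact mul_le_mul_of_nonneg_right h23 hA
    · push_neg at hsmall
      have hFab : 0 ≤ F b - F a := sub_nonneg.2 (F.mono hab)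
      have hCpos : 0 < C := by
        rcases hC.lt_or_eq with h | h
        · exact h
        · exfalso; rw [← h] at hsmall; simp at hsmall; linarith
      have hδpos : 0 < 1 / (2 * C) := by positivity
      have hCδ : C * (1 / (2 * C)) = 1 / 2 := by field_simp
      have hmem : F a + 1 / (2 * C) ∈ Icc (F a) (F b) := by
        constructor
        · linarith
        · nlinarith
      obtain ⟨c, hc, hFceq⟩ := intermediate_value_Icc hab hFc.continuousOn hmem
      have h1 : C * (F c - F a) ≤ 1 / 2 := by rw [hFceq, add_sub_cancel_left]; linarith
      have h2 : C * (F b - F c) ≤ n / 2 := by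
        rw [hFceq]
        push_cast at hn
        nlinarith
      have hsubac : Icc a c ⊆ Icc a b := Icc_subset_Icc le_rfl hc.2
      have hfirst : ∀ t ∈ Icc a c, φ t ≤ 2 * A :=
        gronwall_small hFc hC hA hc.1 h1 hφc hφ0 (fun t htt => hyp t (hsubac htt))
      have hyp' : ∀ t ∈ Icc c b, φ t ≤ 2 * A + C * ∫ u in Ioc c t, φ u ∂F.measure := by
        intro t htt
        have h := hyp t ⟨hc.1.trans htt.1, htt.2⟩
        rw [integral_split hφc hc.1 htt.1] at h
        have hint : ∫ u in Ioc a c, φ u ∂F.measure ≤ 2 * A * (F c - F a) :=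
          integral_le_of_le hφc hc.1 hφ0 (fun u hu => hfirst u ⟨hu.1.le, hu.2⟩)
        have he : C * (2 * A * (F c - F a)) = A := by
          rw [hFceq, add_sub_cancel_left]
          field_simp
        have : C * ∫ u in Ioc a c, φ u ∂F.measure ≤ A :=
          le_of_le_of_eq (mul_le_mul_of_nonneg_left hint hC) he
        rw [mul_add] at h
        linarith
      have hsecond := ih c b (2 * A) hc.2 (by linarith) h2 φ hφc hφ0 hyp'
      intro t ht
      rcases le_total t c with h | h
      · refine (hfirst t ⟨ht.1, h⟩).trans ?_
        exact mul_le_mul_of_nonneg_right h23 hA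
      · refine (hsecond t ⟨h, ht.2⟩).trans ?_
        calc (3:ℝ) ^ n * (2 * A) = 2 * 3 ^ n * A := by ring
          _ ≤ 3 ^ (n+1) * A := by
              refine mul_le_mul_of_nonneg_right ?_ hA
              have : (3:ℝ)^(n+1) = 3 * 3^n := by ring
              rw [this]
              have h3 : (0:ℝ) < 3 ^ n := by positivity
              linarith
  
lemma clamp_lip {R : ℝ} (y y' : ℝ) :
    |max (-R) (min R y) - max (-R) (min R y')| ≤ |y - y'| := by
  have h1 : |max (min R y) (-R) - max (min R y') (-R)| ≤ |min R y - min R y'| :=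
    abs_max_sub_max_le_abs _ _ _
  have h2 : |min R y - min R y'| ≤ max |R - R| |y - y'| := abs_min_sub_min_le_max _ _ _ _
  rw [max_comm (-R) (min R y), max_comm (-R) (min R y')]
  refine h1.trans (h2.trans ?_)
  simp

lemma clamp_mem {R : ℝ} (hR : 0 ≤ R) (y : ℝ) : max (-R) (min R y) ∈ Icc (-R) R :=
  ⟨le_max_left _ _, max_le (by linarith) (min_le_left _ _)⟩

lemma clamp_abs_le {R : ℝ} (hR : 0 ≤ R) (y : ℝ) : |max (-R) (min R y)| ≤ |y| := by
  rw [abs_le]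
  constructor
  · exact le_trans (le_min (by linarith [abs_nonneg y]) (neg_abs_le y)) (le_max_right _ _)
  · exact max_le (by linarith [abs_nonneg y]) ((min_le_right _ _).trans (le_abs_self y))

lemma clamp_eq {R y : ℝ} (h : |y| ≤ R) : max (-R) (min R y) = y := by
  rw [min_eq_right (abs_le.1 h).2, max_eq_right (abs_le.1 h).1]

lemma solves_onT (hFc : Continuous F) {f : ℝ → ℝ → ℝ}
    (hfc : Continuous fun p : ℝ × ℝ => f p.1 p.2)
    (hlip : ∀ R > (0 : ℝ), ∃ L ≥ (0 : ℝ), ∀ x : ℝ, ∀ y ∈ Icc (-R) R, ∀ y' ∈ Icc (-R) R,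
      |f x y - f x y'| ≤ L * |y - y'|)
    (hgrowth : ∀ K : Set ℝ, IsCompact K → ∃ C : ℝ, ∀ x ∈ K, ∀ y : ℝ,
      |f x y| ≤ C * (1 + |y|))
    {s : ℝ → ℝ} (hs : Continuous s) (x₀ : ℝ) {T : ℝ} (hT : 0 ≤ T) :
    ∃ Y : ℝ → ℝ, Continuous Y ∧
      ∀ t ∈ Icc (0 : ℝ) T, Y t = x₀ + ∫ u in Ioc (0 : ℝ) t, f (s u) (Y u) ∂F.measure := by
  obtain ⟨C₀, hC₀⟩ := hgrowth (s '' Icc 0 T) (isCompact_Icc.image hs)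
  set C := max C₀ 0 with hCdef
  have hC : 0 ≤ C := le_max_right _ _
  have hCb : ∀ u ∈ Icc (0:ℝ) T, ∀ y : ℝ, |f (s u) y| ≤ C * (1 + |y|) := by
    intro u hu y
    refine (hC₀ (s u) (mem_image_of_mem s hu) y).trans ?_
    have h1 : (0:ℝ) ≤ 1 + |y| := by positivity
    exact mul_le_mul_of_nonneg_right (le_max_left _ _) h1
  have hF0T : 0 ≤ F T - F 0 := sub_nonneg.2 (F.mono hT)
  set A := 1 + |x₀| with hAdef
  have hA : 0 ≤ A := by positivity
  obtain ⟨nG, hnG⟩ := exists_nat_ge (2 * (C * (F T - F 0)))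
  have hnG' : C * (F T - F 0) ≤ nG / 2 := by linarith
  set B := 3 ^ nG * A with hBdef
  have hAB : A ≤ B := by
    have h1 : (1:ℝ) ≤ 3 ^ nG := one_le_pow₀ (by norm_num)
    nlinarith
  have hB : 0 ≤ B := hA.trans hAB
  set R := B + 1 with hRdef
  have hR : 0 < R := by nlinarith
  obtain ⟨L, hL0, hLip⟩ := hlip R hR
  set g : ℝ → ℝ → ℝ := fun u y => f (s u) (max (-R) (min R y)) with hgdef
  have hclampc : Continuous fun y : ℝ => max (-R) (min R y) :=
    continuous_const.max (continuous_const.min continuous_id)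
  have hgc : Continuous fun p : ℝ × ℝ => g p.1 p.2 :=
    hfc.comp ((hs.comp continuous_fst).prodMk (hclampc.comp continuous_snd))
  have hglip : ∀ u y y', |g u y - g u y'| ≤ L * |y - y'| := by
    intro u y y'
    refine (hLip (s u) _ (clamp_mem hR.le y) _ (clamp_mem hR.le y')).trans ?_
    exact mul_le_mul_of_nonneg_left (clamp_lip y y') hL0
  obtain ⟨nL, hnL⟩ := exists_nat_ge (2 * (L * (F T - F 0)))
  have hnL' : L * (F T - F 0) ≤ nL / 2 := by linarith
  obtain ⟨Y, hYc, hYeq⟩ := exists_glob hFc hgc hL0 hglip nL 0 T hT hnL' x₀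
  have hYeq' : ∀ t ∈ Icc (0:ℝ) T, Y t = x₀ + ∫ u in Ioc 0 t, g u (Y u) ∂F.measure := by
    intro t ht
    have h := hYeq t
    rwa [min_eq_left ht.2, max_eq_right ht.1] at h
  have hintc : Continuous fun u => g u (Y u) := hgc.comp (continuous_id.prodMk hYc)
  -- Gronwall a priori bound
  set φ : ℝ → ℝ := fun u => 1 + |Y u| with hφdef
  have hφc : Continuous φ := continuous_const.add hYc.abs
  have hφ0 : ∀ u, 0 ≤ φ u := fun u => by positivity
  have hyp : ∀ t ∈ Icc (0:ℝ) T, φ t ≤ A + C * ∫ u in Ioc 0 t, φ u ∂F.measure := by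
    intro t ht
    have h1 : |Y t - x₀| ≤ ∫ u in Ioc 0 t, C * φ u ∂F.measure := by
      have h2 : Y t - x₀ = ∫ u in Ioc 0 t, g u (Y u) ∂F.measure := by
        rw [hYeq' t ht]; ring
      rw [h2, ← Real.norm_eq_abs]
      refine (norm_integral_le_integral_norm _).trans ?_
      refine setIntegral_mono_on hintc.norm.integrableOn_Ioc
        ((continuous_const.mul hφc).integrableOn_Ioc) measurableSet_Ioc ?_
      intro u hu
      have h3 : |g u (Y u)| ≤ C * (1 + |max (-R) (min R (Y u))|) :=
        hCb u ⟨hu.1.le, hu.2.trans ht.2⟩ _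
      refine h3.trans ?_
      refine mul_le_mul_of_nonneg_left ?_ hC
      have := clamp_abs_le hR.le (Y u)
      simp only [hφdef]
      linarith
    have h4 : ∫ u in Ioc 0 t, C * φ u ∂F.measure = C * ∫ u in Ioc 0 t, φ u ∂F.measure :=
      integral_const_mul C φ
    have h5 : |Y t| - |x₀| ≤ |Y t - x₀| := by
      have := abs_sub_abs_le_abs_sub (Y t) x₀
      linarith
    simp only [hφdef, hAdef]
    rw [h4] at h1
    linarith
  have hbound : ∀ u ∈ Icc (0:ℝ) T, |Y u| ≤ R := by
    intro u hu
    have := gronwall hFc hC nG 0 T A hT hA hnG' φ hφc hφ0 hyp u hu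
    simp only [hφdef] at this
    rw [hRdef, hBdef]
    linarith
  refine ⟨Y, hYc, fun t ht => ?_⟩
  rw [hYeq' t ht]
  congr 1
  refine setIntegral_congr_fun measurableSet_Ioc (fun u hu => ?_)
  show g u (Y u) = f (s u) (Y u)
  rw [hgdef]
  simp only
  rw [clamp_eq (hbound u ⟨hu.1.le, hu.2.trans ht.2⟩)]

lemma unique_onT (hFc : Continuous F) {f : ℝ → ℝ → ℝ}
    (hfc : Continuous fun p : ℝ × ℝ => f p.1 p.2)
    (hlip : ∀ R > (0 : ℝ), ∃ L ≥ (0 : ℝ), ∀ x : ℝ, ∀ y ∈ Icc (-R) R, ∀ y' ∈ Icc (-R) R,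
      |f x y - f x y'| ≤ L * |y - y'|)
    {s : ℝ → ℝ} (hs : Continuous s) (x₀ : ℝ) {T : ℝ} (hT : 0 ≤ T)
    {Y Z : ℝ → ℝ} (hYc : Continuous Y) (hZc : Continuous Z)
    (hYeq : ∀ t ∈ Icc (0:ℝ) T, Y t = x₀ + ∫ u in Ioc (0:ℝ) t, f (s u) (Y u) ∂F.measure)
    (hZeq : ∀ t ∈ Icc (0:ℝ) T, Z t = x₀ + ∫ u in Ioc (0:ℝ) t, f (s u) (Z u) ∂F.measure) :
    ∀ t ∈ Icc (0:ℝ) T, Y t = Z t := by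
  obtain ⟨uY, huY, hmY⟩ := isCompact_Icc.exists_isMaxOn (nonempty_Icc.2 hT) hYc.abs.continuousOn
  obtain ⟨uZ, huZ, hmZ⟩ := isCompact_Icc.exists_isMaxOn (nonempty_Icc.2 hT) hZc.abs.continuousOn
  set R := max |Y uY| |Z uZ| + 1 with hRdef
  have h0R : 0 ≤ max |Y uY| |Z uZ| := le_trans (abs_nonneg _) (le_max_left _ _)
  have hRpos : 0 < R := by linarith
  obtain ⟨L, hL0, hLip⟩ := hlip R hRpos
  have hYmem : ∀ u ∈ Icc (0:ℝ) T, Y u ∈ Icc (-R) R := by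
    intro u hu
    have h1 : |Y u| ≤ max |Y uY| |Z uZ| := le_trans (hmY hu) (le_max_left _ _)
    have := abs_le.1 h1
    constructor <;> [linarith [this.1]; linarith [this.2]]
  have hZmem : ∀ u ∈ Icc (0:ℝ) T, Z u ∈ Icc (-R) R := by
    intro u hu
    have h1 : |Z u| ≤ max |Y uY| |Z uZ| := le_trans (hmZ hu) (le_max_right _ _)
    have := abs_le.1 h1
    constructor <;> [linarith [this.1]; linarith [this.2]]
  have hpc : Continuous fun u => f (s u) (Y u) := hfc.comp (hs.prodMk hYc)
  have hqc : Continuous fun u => f (s u) (Z u) := hfc.comp (hs.prodMk hZc)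
  have hpq : ∀ u ∈ Icc (0:ℝ) T, |f (s u) (Y u) - f (s u) (Z u)| ≤ L * |Y u - Z u| :=
    fun u hu => hLip (s u) _ (hYmem u hu) _ (hZmem u hu)
  have hY0 : Y 0 = x₀ := by
    have h := hYeq 0 ⟨le_rfl, hT⟩
    rw [Ioc_self] at h
    simpa using h
  have hZ0 : Z 0 = x₀ := by
    have h := hZeq 0 ⟨le_rfl, hT⟩
    rw [Ioc_self] at h
    simpa using h
  obtain ⟨n, hn⟩ := exists_nat_ge (2 * (L * (F T - F 0)))
  exact unique_glob hFc hL0 n 0 T hT (by linarith) Y Z _ _ hYc hZc hpc hqc hpq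
    (fun t ht => by rw [hYeq t ht, hY0]) (fun t ht => by rw [hZeq t ht, hZ0])
    (hY0.trans hZ0.symm)

end SODE

open SODE in
theorem stieltjes_ode_exists_unique
    (F : StieltjesFunction ℝ) (hFc : Continuous F) (hF0 : F 0 = 0)
    (f : ℝ → ℝ → ℝ)
    (hfc : Continuous fun p : ℝ × ℝ => f p.1 p.2)
    -- bounded in the first argument
    (hbdd : ∀ y : ℝ, ∃ C : ℝ, ∀ x : ℝ, |f x y| ≤ C)
    -- locally Lipschitz in the second argument, uniformly in the first
    (hlip : ∀ R > (0 : ℝ), ∃ L ≥ (0 : ℝ), ∀ x : ℝ, ∀ y ∈ Icc (-R) R, ∀ y' ∈ Icc (-R) R,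
      |f x y - f x y'| ≤ L * |y - y'|)
    -- linear growth in the second argument, uniformly over the first in compacts
    (hgrowth : ∀ K : Set ℝ, IsCompact K → ∃ C : ℝ, ∀ x ∈ K, ∀ y : ℝ,
      |f x y| ≤ C * (1 + |y|))
    (s : ℝ → ℝ) (hs : Continuous s) (x₀ : ℝ) :
    ∃ Y : ℝ → ℝ,
      (Continuous Y ∧
        ∀ t ≥ (0 : ℝ), Y t = x₀ + ∫ u in Ioc (0 : ℝ) t, f (s u) (Y u) ∂F.measure) ∧
      ∀ Z : ℝ → ℝ, Continuous Z →
        (∀ t ≥ (0 : ℝ), Z t = x₀ + ∫ u in Ioc (0 : ℝ) t, f (s u) (Z u) ∂F.measure) →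
        ∀ t ≥ (0 : ℝ), Z t = Y t := by
  have hexists : ∀ n : ℕ, ∃ Y : ℝ → ℝ, Continuous Y ∧
      ∀ t ∈ Icc (0:ℝ) (n:ℝ), Y t = x₀ + ∫ u in Ioc (0:ℝ) t, f (s u) (Y u) ∂F.measure :=
    fun n => solves_onT hFc hfc hlip hgrowth hs x₀ (Nat.cast_nonneg n)
  choose Ysol hYsolc hYsoleq using hexists
  have hagree : ∀ m n : ℕ, m ≤ n → ∀ t ∈ Icc (0:ℝ) (m:ℝ), Ysol m t = Ysol n t := by
    intro m n hmn
    exact unique_onT hFc hfc hlip hs x₀ (Nat.cast_nonneg m) (hYsolc m) (hYsolc n)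
      (hYsoleq m) (fun t ht => hYsoleq n t ⟨ht.1, ht.2.trans (Nat.cast_le.2 hmn)⟩)
  set nn : ℝ → ℕ := fun t => ⌈max t 0⌉₊ + 1 with hnn
  have hmemnn : ∀ t : ℝ, max t 0 ∈ Icc (0:ℝ) ((nn t : ℝ)) := by
    intro t
    refine ⟨le_max_right _ _, ?_⟩
    simp only [hnn]
    push_cast
    have := Nat.le_ceil (max t 0)
    linarith
  set Y : ℝ → ℝ := fun t => Ysol (nn t) (max t 0) with hY
  have hYagree : ∀ (t : ℝ) (m : ℕ), nn t ≤ m → Y t = Ysol m (max t 0) :=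
    fun t m hm => hagree (nn t) m hm (max t 0) (hmemnn t)
  have hnnmono : ∀ {u v : ℝ}, u ≤ v → nn u ≤ nn v := by
    intro u v huv
    simp only [hnn]
    have := Nat.ceil_le_ceil (R := ℝ) (max_le_max huv (le_refl (0:ℝ)))
    omega
  have hYcont : Continuous Y := by
    rw [continuous_iff_continuousAt]
    intro t₀
    set m := ⌈max t₀ 0⌉₊ + 2 with hm
    have hev : ∀ u ∈ Iio (t₀ + 1), Y u = Ysol m (max u 0) := by
      intro u hu
      apply hYagree
      simp only [hnn, hm]
      have h1 : max u 0 ≤ max t₀ 0 + 1 := by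
        have h2 : u < t₀ + 1 := hu
        have h3 := le_max_left t₀ (0:ℝ)
        have h4 := le_max_right t₀ (0:ℝ)
        exact max_le (by linarith) (by linarith)
      have h2 : ⌈max u 0⌉₊ ≤ ⌈max t₀ 0 + 1⌉₊ := Nat.ceil_le_ceil h1
      rw [Nat.ceil_add_one (le_max_right t₀ 0)] at h2
      omega
    have hc : ContinuousAt (fun u => Ysol m (max u 0)) t₀ :=
      ((hYsolc m).comp (continuous_id.max continuous_const)).continuousAt
    exact ContinuousAt.congr hc (Filter.eventuallyEq_of_mem
      (Iio_mem_nhds (lt_add_one t₀)) (fun u hu => hev u hu)).symm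
  have hYeqn : ∀ t ≥ (0:ℝ), Y t = x₀ + ∫ u in Ioc (0:ℝ) t, f (s u) (Y u) ∂F.measure := by
    intro t ht
    have hmax : max t 0 = t := max_eq_left ht
    have htm : t ∈ Icc (0:ℝ) ((nn t : ℝ)) := by
      have := hmemnn t
      rwa [hmax] at this
    have h1 : Y t = Ysol (nn t) t := by rw [hY]; simp only; rw [hmax]
    rw [h1, hYsoleq (nn t) t htm]
    congr 1
    refine setIntegral_congr_fun measurableSet_Ioc (fun u hu => ?_)
    have h2 : Y u = Ysol (nn t) u := by
      rw [hYagree u (nn t) (hnnmono hu.2), max_eq_left hu.1.le]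
    show f (s u) (Ysol (nn t) u) = f (s u) (Y u)
    rw [h2]
  refine ⟨Y, ⟨hYcont, hYeqn⟩, ?_⟩
  intro Z hZc hZeq t ht
  exact unique_onT hFc hfc hlip hs x₀ ht hZc hYcont
    (fun t' ht' => hZeq t' ht'.1) (fun t' ht' => hYeqn t' ht'.1) t ⟨ht, le_rfl⟩
end

section
/- Let μ : [0,∞) → [0,∞) be continuous non-decreasing with μ(0)=0, f : ℝ × ℝ → ℝ continuous, bounded in the first variable, locally Lipschitz with linear growth in the second variable, and let sₙ, s : [0,∞) → ℝ be continuous with sₙ → s locally uniformly. Let Yₙ and Y be the unique solutions of Yₙ(t) = x₀ + ∫₀^t f(sₙ(u), Yₙ(u)) dμ(u) and Y(t) = x₀ + ∫₀^t f(s(u), Y(u)) dμ(u). Then Yₙ → Y locally uniformly on [0,∞). -/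
open Set MeasureTheory Filter

set_option maxHeartbeats 1000000

private lemma stieltjes_Ioc_lt_top (F : StieltjesFunction ℝ) (a b : ℝ) :
    F.measure (Ioc a b) < ⊤ := by
  rw [F.measure_Ioc]; exact ENNReal.ofReal_lt_top

private lemma stieltjes_toReal_Ioc (F : StieltjesFunction ℝ) {a b : ℝ} (hab : a ≤ b) :
    (F.measure (Ioc a b)).toReal = F b - F a := by
  rw [F.measure_Ioc, ENNReal.toReal_ofReal (sub_nonneg.2 (F.mono hab))]

private lemma setint_le_const (F : StieltjesFunction ℝ) {g : ℝ → ℝ} (hg : Continuous g)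
    {a b B : ℝ} (hB : ∀ u ∈ Ioc a b, |g u| ≤ B) :
    ∫ u in Ioc a b, g u ∂F.measure ≤ B * (F.measure (Ioc a b)).toReal := by
  refine le_trans (le_abs_self _) ?_
  rw [← Real.norm_eq_abs]
  exact norm_setIntegral_le_of_norm_le_const (stieltjes_Ioc_lt_top F a b)
    (fun x hx => by simpa [Real.norm_eq_abs] using hB x hx)

private lemma gronwall_aux (F : StieltjesFunction ℝ) (hFc : Continuous F) (L T : ℝ)
    (hL : 0 ≤ L) (hT : 0 ≤ T) :
    ∃ K : ℝ, 1 ≤ K ∧ ∀ (g : ℝ → ℝ) (a : ℝ), Continuous g → 0 ≤ a →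
      (∀ t ∈ Icc 0 T, 0 ≤ g t) →
      (∀ t ∈ Icc 0 T, g t ≤ a + L * ∫ u in Ioc 0 t, g u ∂F.measure) →
      ∀ t ∈ Icc 0 T, g t ≤ K * a := by
  set Φ : ℝ := F T - F 0 with hΦdef
  clear_value Φ
  have hΦ : 0 ≤ Φ := hΦdef ▸ sub_nonneg.2 (F.mono hT)
  have hucF := (isCompact_Icc : IsCompact (Icc (0:ℝ) T)).uniformContinuousOn_of_continuous
    hFc.continuousOn
  rw [Metric.uniformContinuousOn_iff] at hucF
  obtain ⟨δ, hδ0, hδ⟩ := hucF (1 / (2 * (L + 1))) (by positivity)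
  obtain ⟨N, hN1, hTN⟩ : ∃ N : ℕ, 1 ≤ N ∧ T / N < δ := by
    refine ⟨⌈T / δ⌉₊ + 1, Nat.le_add_left 1 _, ?_⟩
    have hNpos : (0:ℝ) < ((⌈T / δ⌉₊ + 1 : ℕ) : ℝ) := by positivity
    have h1 : T / δ < ((⌈T / δ⌉₊ + 1 : ℕ) : ℝ) := by
      push_cast; linarith [Nat.le_ceil (T / δ)]
    rw [div_lt_iff₀ hδ0] at h1
    rw [div_lt_iff₀ hNpos, mul_comm]
    exact h1
  have hNpos : 0 < (N : ℝ) := by exact_mod_cast hN1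
  set c : ℝ := 2 + 2 * L * Φ with hcdef
  clear_value c
  have hc1 : 1 ≤ c := by nlinarith
  refine ⟨c ^ N, one_le_pow₀ hc1, ?_⟩
  intro g a hgc ha hnn hineq
  have hHP : ∀ i : ℕ, i ≤ N → ∀ t ∈ Icc 0 ((i : ℝ) * (T / N)), g t ≤ c ^ i * a := by
    intro i
    induction i with
    | zero =>
      intro _ t ht
      simp only [Nat.cast_zero, zero_mul] at ht
      have ht0 : t = 0 := le_antisymm ht.2 ht.1
      have := hineq 0 ⟨le_rfl, hT⟩
      simpa [ht0, Set.Ioc_self] using this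
    | succ i IH =>
      intro hiN t ht
      have hiN' : i ≤ N := Nat.le_of_succ_le hiN
      have hTNnn : 0 ≤ T / N := by positivity
      set p : ℝ := (i : ℝ) * (T / N) with hpdef
      set q : ℝ := ((i : ℝ) + 1) * (T / N) with hqdef
      clear_value p q
      have hp0 : 0 ≤ p := by rw [hpdef]; positivity
      have hpq : p ≤ q := by nlinarith
      have hqT : q ≤ T := by
        have : ((i : ℝ) + 1) ≤ (N : ℝ) := by exact_mod_cast hiN
        calc q ≤ (N : ℝ) * (T / N) := by nlinarith
        _ = T := by field_simp
      obtain ⟨t', ht'mem, ht'max⟩ := (isCompact_Icc : IsCompact (Icc 0 q)).exists_isMaxOn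
        ⟨0, ⟨le_rfl, hp0.trans hpq⟩⟩ hgc.continuousOn
      have ht'T : t' ∈ Icc 0 T := ⟨ht'mem.1, ht'mem.2.trans hqT⟩
      have hgt'0 : 0 ≤ g t' := hnn t' ht'T
      have hci : (1 : ℝ) ≤ c ^ i := one_le_pow₀ hc1
      suffices hmain : g t' ≤ c ^ (i + 1) * a by
        have htq : t ∈ Icc 0 q := by rw [hqdef]; exact_mod_cast ht
        exact le_trans (ht'max htq) hmain
      rcases le_or_gt t' p with hcase | hcase
      · have := IH hiN' t' ⟨ht'mem.1, hcase⟩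
        calc g t' ≤ c ^ i * a := this
        _ ≤ c ^ (i + 1) * a := by
            apply mul_le_mul_of_nonneg_right _ ha
            exact pow_le_pow_right₀ hc1 (Nat.le_succ i)
      · have h1 := hineq t' ht'T
        have hsplit : ∫ u in Ioc 0 t', g u ∂F.measure
            = (∫ u in Ioc 0 p, g u ∂F.measure) + ∫ u in Ioc p t', g u ∂F.measure := by
          rw [← setIntegral_union (Set.Ioc_disjoint_Ioc_of_le le_rfl) measurableSet_Ioc
            hgc.integrableOn_Ioc hgc.integrableOn_Ioc, Set.Ioc_union_Ioc_eq_Ioc hp0 hcase.le]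
        have hI1 : ∫ u in Ioc 0 p, g u ∂F.measure ≤ (c ^ i * a) * Φ := by
          have hb : ∀ u ∈ Ioc 0 p, |g u| ≤ c ^ i * a := by
            intro u hu
            have huT : u ∈ Icc 0 T := ⟨hu.1.le, hu.2.trans (hpq.trans hqT)⟩
            rw [abs_of_nonneg (hnn u huT)]
            exact IH hiN' u ⟨hu.1.le, hu.2⟩
          refine le_trans (setint_le_const F hgc hb) ?_
          rw [stieltjes_toReal_Ioc F hp0]
          have : F p - F 0 ≤ Φ := by
            have := F.mono (hpq.trans hqT)
            rw [hΦdef]; linarith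
          exact mul_le_mul_of_nonneg_left this (mul_nonneg (zero_le_one.trans hci) ha)
        have hI2 : ∫ u in Ioc p t', g u ∂F.measure ≤ g t' * (F t' - F p) := by
          have hb : ∀ u ∈ Ioc p t', |g u| ≤ g t' := by
            intro u hu
            have huq : u ∈ Icc 0 q := ⟨hp0.trans hu.1.le, hu.2.trans ht'mem.2⟩
            have huT : u ∈ Icc 0 T := ⟨huq.1, huq.2.trans hqT⟩
            rw [abs_of_nonneg (hnn u huT)]
            exact ht'max huq
          refine le_trans (setint_le_const F hgc hb) ?_
          rw [stieltjes_toReal_Ioc F hcase.le]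
        have hsmall : F t' - F p < 1 / (2 * (L + 1)) := by
          have hdist : dist t' p < δ := by
            rw [Real.dist_eq, abs_of_nonneg (by linarith [hcase.le] : (0:ℝ) ≤ t' - p)]
            have : t' - p ≤ T / N := by
              have := ht'mem.2
              rw [hqdef] at this; nlinarith
            linarith [hTN]
          have := hδ t' ht'T p ⟨hp0, hpq.trans hqT⟩ hdist
          rw [Real.dist_eq, abs_of_nonneg (sub_nonneg.2 (F.mono hcase.le))] at this
          exact this
        have hLhalf : L * (g t' * (F t' - F p)) ≤ g t' / 2 := by
          have h2 : 0 ≤ F t' - F p := sub_nonneg.2 (F.mono hcase.le)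
          have h3 : L * (F t' - F p) ≤ 1 / 2 := by
            rcases eq_or_lt_of_le hL with h | h
            · nlinarith
            · have := mul_le_mul_of_nonneg_left hsmall.le hL
              calc L * (F t' - F p) ≤ L * (1 / (2 * (L + 1))) := this
              _ ≤ 1 / 2 := by
                  rw [mul_one_div, div_le_div_iff₀ (by positivity) (by norm_num)]
                  nlinarith
          calc L * (g t' * (F t' - F p)) = g t' * (L * (F t' - F p)) := by ring
          _ ≤ g t' * (1 / 2) := mul_le_mul_of_nonneg_left h3 hgt'0
          _ = g t' / 2 := by ring
        have hcomb : g t' ≤ a + L * ((c ^ i * a) * Φ) + g t' / 2 := by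
          rw [hsplit, mul_add] at h1
          linarith [mul_le_mul_of_nonneg_left hI1 hL, mul_le_mul_of_nonneg_left hI2 hL]
        have : g t' ≤ 2 * a + 2 * L * Φ * (c ^ i * a) := by linarith [mul_nonneg hL hΦ]
        calc g t' ≤ 2 * a + 2 * L * Φ * (c ^ i * a) := this
        _ ≤ c ^ (i + 1) * a := by
            rw [pow_succ]
            have hexp : c ^ i * c * a = 2 * (c ^ i * a) + 2 * L * Φ * (c ^ i * a) := by
              rw [hcdef]; ring
            linarith [hexp, mul_le_mul_of_nonneg_right hci ha]
  intro t ht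
  have hN0 : (N : ℝ) ≠ 0 := ne_of_gt hNpos
  have : t ∈ Icc 0 ((N : ℝ) * (T / N)) := by
    rw [mul_div_cancel₀ _ hN0]; exact ht
  exact hHP N le_rfl t this


theorem stieltjes_ode_stability
    (F : StieltjesFunction ℝ) (hFc : Continuous F) (hF0 : F 0 = 0)
    (f : ℝ → ℝ → ℝ)
    (hfc : Continuous fun p : ℝ × ℝ => f p.1 p.2)
    (hbdd : ∀ y : ℝ, ∃ C : ℝ, ∀ x : ℝ, |f x y| ≤ C)
    (hlip : ∀ R > (0 : ℝ), ∃ L ≥ (0 : ℝ), ∀ x : ℝ, ∀ y ∈ Icc (-R) R, ∀ y' ∈ Icc (-R) R,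
      |f x y - f x y'| ≤ L * |y - y'|)
    (hgrowth : ∀ K : Set ℝ, IsCompact K → ∃ C : ℝ, ∀ x ∈ K, ∀ y : ℝ,
      |f x y| ≤ C * (1 + |y|))
    (s : ℝ → ℝ) (hs : Continuous s)
    (sn : ℕ → ℝ → ℝ) (hsn : ∀ n, Continuous (sn n))
    (hconv : ∀ T > (0 : ℝ), TendstoUniformlyOn (fun n t => sn n t) s atTop (Icc 0 T))
    (x₀ : ℝ)
    (Yn : ℕ → ℝ → ℝ) (Y : ℝ → ℝ)
    (hYnc : ∀ n, Continuous (Yn n)) (hYc : Continuous Y)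
    (hYneq : ∀ n : ℕ, ∀ t ≥ (0 : ℝ),
      Yn n t = x₀ + ∫ u in Ioc (0 : ℝ) t, f (sn n u) (Yn n u) ∂F.measure)
    (hYeq : ∀ t ≥ (0 : ℝ),
      Y t = x₀ + ∫ u in Ioc (0 : ℝ) t, f (s u) (Y u) ∂F.measure) :
    ∀ T > (0 : ℝ), TendstoUniformlyOn (fun n t => Yn n t) Y atTop (Icc 0 T) := by
  intro T hT
  have hT0 : (0:ℝ) ≤ T := hT.le
  have hΦ0 : 0 ≤ F T - F 0 := sub_nonneg.2 (F.mono hT0)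
  have hconvT := hconv T hT
  rw [Metric.tendstoUniformlyOn_iff] at hconvT
  obtain ⟨N₀, hN₀⟩ := eventually_atTop.mp (hconvT 1 one_pos)
  set Kc : Set ℝ := (⋃ i ∈ Iio N₀, sn i '' Icc 0 T) ∪ Metric.cthickening 1 (s '' Icc 0 T)
    with hKcdef
  have hKcpt : IsCompact Kc := by
    refine IsCompact.union ?_ ((isCompact_Icc.image hs).cthickening)
    exact (Set.finite_Iio N₀).isCompact_biUnion (fun i _ => isCompact_Icc.image (hsn i))
  have hmem_s : ∀ u ∈ Icc (0:ℝ) T, s u ∈ Kc := fun u hu =>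
    Set.mem_union_right _ (Metric.self_subset_cthickening _ (mem_image_of_mem s hu))
  have hmem_sn : ∀ n, ∀ u ∈ Icc (0:ℝ) T, sn n u ∈ Kc := by
    intro n u hu
    rcases lt_or_ge n N₀ with h | h
    · exact Set.mem_union_left _ (Set.mem_biUnion h (mem_image_of_mem (sn n) hu))
    · refine Set.mem_union_right _
        (Metric.mem_cthickening_of_dist_le (sn n u) (s u) 1 _ (mem_image_of_mem s hu) ?_)
      have h2 := hN₀ n h u hu
      rw [dist_comm] at h2
      exact h2.le
  obtain ⟨C, hC⟩ := hgrowth Kc hKcpt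
  have hC0 : 0 ≤ C := by
    have h1 := hC (s 0) (hmem_s 0 ⟨le_rfl, hT0⟩) 0
    have h2 := abs_nonneg (f (s 0) 0)
    simp only [abs_zero] at h1
    nlinarith
  obtain ⟨K₁, hK₁1, hK₁⟩ := gronwall_aux F hFc C T hC0 hT0
  set a₀ : ℝ := |x₀| + C * (F T - F 0) with ha₀def
  have ha₀ : 0 ≤ a₀ := add_nonneg (abs_nonneg _) (mul_nonneg hC0 hΦ0)
  have key : ∀ (σ Z : ℝ → ℝ), Continuous σ → Continuous Z →
      (∀ u ∈ Icc (0:ℝ) T, σ u ∈ Kc) →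
      (∀ t ≥ (0:ℝ), Z t = x₀ + ∫ u in Ioc (0 : ℝ) t, f (σ u) (Z u) ∂F.measure) →
      ∀ t ∈ Icc (0:ℝ) T, |Z t| ≤ K₁ * a₀ := by
    intro σ Z hσ hZ hσmem heq
    refine hK₁ (fun t => |Z t|) a₀ hZ.abs ha₀ (fun t _ => abs_nonneg _) ?_
    intro t ht
    have hfZ : Continuous fun u => f (σ u) (Z u) := hfc.comp (hσ.prodMk hZ)
    have step1 : |Z t| ≤ |x₀| + ∫ u in Ioc (0:ℝ) t, |f (σ u) (Z u)| ∂F.measure := by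
      rw [heq t ht.1]
      refine le_trans (abs_add_le _ _) ?_
      gcongr
      simpa [Real.norm_eq_abs] using
        norm_integral_le_integral_norm (μ := F.measure.restrict (Ioc 0 t))
          (fun u => f (σ u) (Z u))
    have step2 : ∫ u in Ioc (0:ℝ) t, |f (σ u) (Z u)| ∂F.measure
        ≤ ∫ u in Ioc (0:ℝ) t, C * (1 + |Z u|) ∂F.measure := by
      refine setIntegral_mono_on hfZ.abs.integrableOn_Ioc
        (continuous_const.mul (continuous_const.add hZ.abs)).integrableOn_Ioc
        measurableSet_Ioc ?_
      intro u hu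
      exact hC (σ u) (hσmem u ⟨hu.1.le, hu.2.trans ht.2⟩) (Z u)
    have step3 : ∫ u in Ioc (0:ℝ) t, C * (1 + |Z u|) ∂F.measure
        = C * (F.measure (Ioc 0 t)).toReal + C * ∫ u in Ioc (0:ℝ) t, |Z u| ∂F.measure := by
      rw [integral_const_mul,
        integral_add (integrableOn_const (C := (1:ℝ)) (stieltjes_Ioc_lt_top F 0 t).ne)
          hZ.abs.integrableOn_Ioc,
        setIntegral_const, smul_eq_mul, Measure.real]
      ring
    have step4 : C * (F.measure (Ioc 0 t)).toReal ≤ C * (F T - F 0) := by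
      rw [stieltjes_toReal_Ioc F ht.1]
      refine mul_le_mul_of_nonneg_left ?_ hC0
      linarith [F.mono ht.2]
    show |Z t| ≤ a₀ + C * ∫ u in Ioc (0:ℝ) t, |Z u| ∂F.measure
    rw [ha₀def]
    linarith [step1, step2, step3, step4]
  have hYnbd : ∀ n, ∀ t ∈ Icc (0:ℝ) T, |Yn n t| ≤ K₁ * a₀ :=
    fun n => key (sn n) (Yn n) (hsn n) (hYnc n) (hmem_sn n) (hYneq n)
  have hYbd : ∀ t ∈ Icc (0:ℝ) T, |Y t| ≤ K₁ * a₀ := key s Y hs hYc hmem_s hYeq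
  set R : ℝ := K₁ * a₀ + 1 with hRdef
  have hKa₀ : 0 ≤ K₁ * a₀ := mul_nonneg (zero_le_one.trans hK₁1) ha₀
  have hRpos : 0 < R := by rw [hRdef]; linarith
  have hmemIcc : ∀ w : ℝ, |w| ≤ K₁ * a₀ → w ∈ Icc (-R) R := by
    intro w hw
    exact abs_le.mp (hw.trans (by rw [hRdef]; linarith))
  obtain ⟨L, hL0, hLip⟩ := hlip R hRpos
  obtain ⟨K₂, hK₂1, hK₂⟩ := gronwall_aux F hFc L T hL0 hT0
  have hK₂0 : 0 < K₂ := lt_of_lt_of_le zero_lt_one hK₂1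
  have huc := (hKcpt.prod (isCompact_Icc :
    IsCompact (Icc (-R) R))).uniformContinuousOn_of_continuous hfc.continuousOn
  rw [Metric.uniformContinuousOn_iff] at huc
  rw [Metric.tendstoUniformlyOn_iff]
  intro ε hε
  set ε' : ℝ := ε / (2 * K₂ * (F T - F 0 + 1)) with hε'def
  have hd : (0:ℝ) < 2 * K₂ * (F T - F 0 + 1) := by nlinarith
  have hε'pos : 0 < ε' := div_pos hε hd
  obtain ⟨δ, hδ0, hδ⟩ := huc ε' hε'pos
  obtain ⟨N₁, hN₁⟩ := eventually_atTop.mp (hconvT δ hδ0)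
  filter_upwards [eventually_ge_atTop N₁] with n hn
  intro t ht
  have hgb : ∀ t ∈ Icc (0:ℝ) T, |Yn n t - Y t| ≤ K₂ * (ε' * (F T - F 0)) := by
    refine hK₂ (fun t => |Yn n t - Y t|) (ε' * (F T - F 0)) ((hYnc n).sub hYc).abs
      (mul_nonneg hε'pos.le hΦ0) (fun _ _ => abs_nonneg _) ?_
    intro t ht
    have hfn : Continuous fun u => f (sn n u) (Yn n u) := hfc.comp ((hsn n).prodMk (hYnc n))
    have hfY : Continuous fun u => f (s u) (Y u) := hfc.comp (hs.prodMk hYc)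
    have hdiff : Yn n t - Y t
        = ∫ u in Ioc (0:ℝ) t, (f (sn n u) (Yn n u) - f (s u) (Y u)) ∂F.measure := by
      rw [hYneq n t ht.1, hYeq t ht.1,
        integral_sub hfn.integrableOn_Ioc hfY.integrableOn_Ioc]
      ring
    have hbound : ∀ u ∈ Ioc (0:ℝ) t, |f (sn n u) (Yn n u) - f (s u) (Y u)|
        ≤ ε' + L * |Yn n u - Y u| := by
      intro u hu
      have huT : u ∈ Icc (0:ℝ) T := ⟨hu.1.le, hu.2.trans ht.2⟩
      have hYnmem : Yn n u ∈ Icc (-R) R := hmemIcc _ (hYnbd n u huT)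
      have hYmem : Y u ∈ Icc (-R) R := hmemIcc _ (hYbd u huT)
      have h1 : |f (sn n u) (Yn n u) - f (s u) (Yn n u)| ≤ ε' := by
        have hdist : dist ((sn n u, Yn n u) : ℝ × ℝ) (s u, Yn n u) < δ := by
          rw [Prod.dist_eq]
          simp only [dist_self]
          rw [max_eq_left dist_nonneg, dist_comm]
          exact hN₁ n hn u huT
        have h3 := hδ (sn n u, Yn n u) ⟨hmem_sn n u huT, hYnmem⟩
          (s u, Yn n u) ⟨hmem_s u huT, hYnmem⟩ hdist
        rw [Real.dist_eq] at h3
        exact h3.le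
      have h2 : |f (s u) (Yn n u) - f (s u) (Y u)| ≤ L * |Yn n u - Y u| :=
        hLip (s u) (Yn n u) hYnmem (Y u) hYmem
      calc |f (sn n u) (Yn n u) - f (s u) (Y u)|
          ≤ |f (sn n u) (Yn n u) - f (s u) (Yn n u)|
            + |f (s u) (Yn n u) - f (s u) (Y u)| := abs_sub_le _ _ _
      _ ≤ ε' + L * |Yn n u - Y u| := add_le_add h1 h2
    have hI : |Yn n t - Y t|
        ≤ ∫ u in Ioc (0:ℝ) t, (ε' + L * |Yn n u - Y u|) ∂F.measure := by
      rw [hdiff]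
      refine le_trans ?_ (setIntegral_mono_on (hfn.sub hfY).abs.integrableOn_Ioc
        (continuous_const.add (continuous_const.mul ((hYnc n).sub hYc).abs)).integrableOn_Ioc
        measurableSet_Ioc hbound)
      simpa [Real.norm_eq_abs] using
        norm_integral_le_integral_norm (μ := F.measure.restrict (Ioc 0 t))
          (fun u => f (sn n u) (Yn n u) - f (s u) (Y u))
    have hsplit : ∫ u in Ioc (0:ℝ) t, (ε' + L * |Yn n u - Y u|) ∂F.measure
        = ε' * (F.measure (Ioc 0 t)).toReal
          + L * ∫ u in Ioc (0:ℝ) t, |Yn n u - Y u| ∂F.measure := by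
      rw [integral_add (integrableOn_const (C := ε') (stieltjes_Ioc_lt_top F 0 t).ne)
          (show IntegrableOn (fun u => L * |Yn n u - Y u|) (Ioc 0 t) F.measure from
            (continuous_const.mul ((hYnc n).sub hYc).abs).integrableOn_Ioc),
        setIntegral_const, smul_eq_mul, Measure.real, integral_const_mul]
      ring
    have hmono : ε' * (F.measure (Ioc 0 t)).toReal ≤ ε' * (F T - F 0) := by
      rw [stieltjes_toReal_Ioc F ht.1]
      refine mul_le_mul_of_nonneg_left ?_ hε'pos.le
      linarith [F.mono ht.2]
    show |Yn n t - Y t| ≤ ε' * (F T - F 0)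
        + L * ∫ u in Ioc (0:ℝ) t, |Yn n u - Y u| ∂F.measure
    linarith [hI, hsplit, hmono]
  have hfin : K₂ * (ε' * (F T - F 0)) < ε := by
    have heq2 : ε' * (2 * K₂ * (F T - F 0 + 1)) = ε := div_mul_cancel₀ ε hd.ne'
    nlinarith [mul_pos hK₂0 hε'pos, mul_nonneg (mul_nonneg hK₂0.le hε'pos.le) hΦ0]
  have h5 := hgb t ht
  rw [Real.dist_eq]
  have habs : |Y t - Yn n t| = |Yn n t - Y t| := abs_sub_comm _ _
  linarith [habs.le, habs.ge]
end

section
/- Let μ : [0,∞) → [0,∞) be continuous non-decreasing with μ(0)=0, s : [0,∞) → ℝ continuous of locally bounded variation, b : ℝ → ℝ Lipschitz, σ : ℝ → ℝ Lipschitz. Then for every x₀ ∈ ℝ there exists a unique continuous X : [0,∞) → ℝ solving X(t) = x₀ + ∫₀^t b(X(u)) dμ(u) + ∫₀^t σ(X(u)) ds(u) for all t, where both integrals are Riemann–Stieltjes integrals. -/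
open Set MeasureTheory

namespace BVSDE

open Filter Topology BoundedContinuousFunction NNReal

instance locFinAdd {α : Type*} [TopologicalSpace α] [MeasurableSpace α]
    (m1 m2 : Measure α) [IsLocallyFiniteMeasure m1] [IsLocallyFiniteMeasure m2] :
    IsLocallyFiniteMeasure (m1 + m2) := by
  constructor
  intro x
  obtain ⟨s, hs, h1⟩ := m1.finiteAt_nhds x
  obtain ⟨t, ht, h2⟩ := m2.finiteAt_nhds x
  refine ⟨s ∩ t, inter_mem hs ht, ?_⟩
  have : (m1 + m2) (s ∩ t) ≤ m1 s + m2 t := by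
    rw [Measure.add_apply]
    exact add_le_add (measure_mono inter_subset_left) (measure_mono inter_subset_right)
  exact lt_of_le_of_lt this (ENNReal.add_lt_top.2 ⟨h1, h2⟩)

lemma aux_exp_ineq {x : ℝ} (hx0 : 0 ≤ x) (hx1 : x ≤ 1) : x ≤ 2 * (1 - Real.exp (-x)) := by
  have h : Real.exp (-x) * Real.exp x = 1 := by rw [← Real.exp_add]; simp
  nlinarith [Real.add_one_le_exp x, Real.exp_pos x, Real.exp_pos (-x)]

lemma integral_Ioc_split {m : Measure ℝ} [IsLocallyFiniteMeasure m] {g : ℝ → ℝ}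
    (hg : Continuous g) {a b c : ℝ} (hab : a ≤ b) (hbc : b ≤ c) :
    ∫ u in Ioc a c, g u ∂m = (∫ u in Ioc a b, g u ∂m) + ∫ u in Ioc b c, g u ∂m := by
  rw [← Ioc_union_Ioc_eq_Ioc hab hbc,
    setIntegral_union (Ioc_disjoint_Ioc_of_le le_rfl) measurableSet_Ioc hg.integrableOn_Ioc
      hg.integrableOn_Ioc]

lemma Ioc_finite {m : Measure ℝ} [IsLocallyFiniteMeasure m] (a b : ℝ) : m (Ioc a b) < ⊤ :=
  lt_of_le_of_lt (measure_mono Ioc_subset_Icc_self) isCompact_Icc.measure_lt_top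

lemma setIntegral_Ioc_abs_le {m : Measure ℝ} [IsLocallyFiniteMeasure m] {g : ℝ → ℝ}
    (hg : Continuous g) {C : ℝ} {a b : ℝ} (hC : ∀ x ∈ Ioc a b, |g x| ≤ C) :
    |∫ u in Ioc a b, g u ∂m| ≤ C * (m (Ioc a b)).toReal := by
  rw [← Real.norm_eq_abs]
  exact norm_setIntegral_le_of_norm_le_const (Ioc_finite a b)
    (fun x hx => by rw [Real.norm_eq_abs]; exact hC x hx)

lemma setIntegral_Ioc_abs_le' {m : Measure ℝ} [IsLocallyFiniteMeasure m] {g : ℝ → ℝ}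
    (hg : Continuous g) {C : ℝ} (hC : ∀ x, |g x| ≤ C) {t T : ℝ} (h : t ≤ T) :
    |∫ u in Ioc 0 t, g u ∂m| ≤ C * (m (Ioc 0 T)).toReal := by
  have hC0 : 0 ≤ C := (abs_nonneg _).trans (hC 0)
  refine (setIntegral_Ioc_abs_le hg (fun x _ => hC x)).trans ?_
  exact mul_le_mul_of_nonneg_left
    (ENNReal.toReal_mono (Ioc_finite 0 T).ne (measure_mono (Ioc_subset_Ioc_right h))) hC0

lemma key_exp {ν : Measure ℝ} [IsLocallyFiniteMeasure ν] {G : ℝ → ℝ}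
    (hGm : Monotone G) (hGc : Continuous G)
    (HG : ∀ a b : ℝ, a ≤ b → ν (Ioc a b) = ENNReal.ofReal (G b - G a))
    {c t : ℝ} (hc : 0 < c) (ht : 0 ≤ t) :
    ∫ u in Ioc 0 t, Real.exp (c * G u) ∂ν ≤ 2 * Real.exp (c * G t) / c := by
  have hGt0 : G 0 ≤ G t := hGm ht
  set m : ℕ := ⌈2 * c * (G t - G 0)⌉₊ + 1 with hm
  have hm0 : (0:ℝ) < m := by positivity
  set δ : ℝ := (G t - G 0) / m with hδ
  have hδ0 : 0 ≤ δ := div_nonneg (by linarith) hm0.le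
  have hcδ : c * δ ≤ 1 := by
    have h1 : 2 * c * (G t - G 0) ≤ m := le_trans (Nat.le_ceil _) (by push_cast [hm]; linarith)
    rw [hδ, mul_div_assoc', div_le_one hm0]
    nlinarith
  set v : ℕ → ℝ := fun i => G 0 + i * δ with hv
  have hvmono : ∀ i j : ℕ, i ≤ j → v i ≤ v j := by
    intro i j hij
    have : (i:ℝ) ≤ j := Nat.cast_le.2 hij
    simp only [hv]
    nlinarith
  have hvm : v m = G t := by
    simp only [hv, hδ]
    field_simp
    ring
  set S : ℕ → Set ℝ := fun i => Icc 0 t ∩ {x | v i ≤ G x} with hS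
  have hSclosed : ∀ i, IsClosed (S i) := fun i =>
    isClosed_Icc.inter (isClosed_le continuous_const hGc)
  have hSne : ∀ i, i ≤ m → t ∈ S i := fun i hi =>
    ⟨⟨ht, le_refl t⟩, by simpa [hvm] using hvmono i m hi⟩
  have hbdd : ∀ i, BddBelow (S i) := fun i => ⟨0, fun x hx => hx.1.1⟩
  set u : ℕ → ℝ := fun i => sInf (S i) with hu
  have humem : ∀ i, i ≤ m → u i ∈ S i := fun i hi =>
    (hSclosed i).csInf_mem ⟨t, hSne i hi⟩ (hbdd i)
  have humono : ∀ i j : ℕ, i ≤ j → j ≤ m → u i ≤ u j := by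
    intro i j hij hj
    exact csInf_le_csInf (hbdd i) ⟨t, hSne j hj⟩
      (fun x hx => ⟨hx.1, le_trans (hvmono i j hij) hx.2⟩)
  have hu0 : u 0 = 0 := by
    refine le_antisymm (csInf_le (hbdd 0) ⟨⟨le_refl 0, ht⟩, by simp [hv]⟩) ?_
    exact (humem 0 (Nat.zero_le m)).1.1
  have hGu_le : ∀ i, i ≤ m → G (u i) ≤ v i := by
    intro i hi
    rcases eq_or_lt_of_le (humem i hi).1.1 with h0 | h0
    · rw [← h0]
      simp only [hv]
      have : (0:ℝ) ≤ i * δ := mul_nonneg (Nat.cast_nonneg i) hδ0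
      linarith
    · by_contra hlt
      push_neg at hlt
      have hcont := hGc.continuousAt (x := u i)
      rw [Metric.continuousAt_iff] at hcont
      obtain ⟨ε, hε, hball⟩ := hcont (G (u i) - v i) (by linarith)
      set y := max 0 (u i - ε/2) with hy
      have hy1 : 0 ≤ y := le_max_left _ _
      have hy2 : y < u i := max_lt h0 (by linarith)
      have hdist : dist y (u i) < ε := by
        rw [Real.dist_eq, abs_of_nonpos (by linarith)]
        have : u i - ε/2 ≤ y := le_max_right _ _
        linarith
      have hb := hball hdist
      rw [Real.dist_eq] at hb
      have hGy : v i ≤ G y := by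
        rcases abs_lt.1 hb with ⟨h1, h2⟩
        linarith
      have : u i ≤ y := csInf_le (hbdd i)
        ⟨⟨hy1, hy2.le.trans (humem i hi).1.2⟩, hGy⟩
      linarith
  have hGu : ∀ i, i ≤ m → G (u i) = v i := fun i hi =>
    le_antisymm (hGu_le i hi) (humem i hi).2
  have hexpc : Continuous fun x : ℝ => Real.exp (c * G x) :=
    Real.continuous_exp.comp (continuous_const.mul hGc)
  have hsplit : ∀ k : ℕ, k ≤ m →
      ∫ x in Ioc (u 0) (u k), Real.exp (c * G x) ∂ν
        = ∑ i ∈ Finset.range k, ∫ x in Ioc (u i) (u (i+1)), Real.exp (c * G x) ∂ν := by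
    intro k hk
    induction k with
    | zero => simp
    | succ k ih =>
      rw [integral_Ioc_split hexpc (humono 0 k (Nat.zero_le k) (le_of_lt (Nat.lt_of_succ_le hk)))
          (humono k (k+1) (Nat.le_succ k) hk), ih (le_of_lt (Nat.lt_of_succ_le hk)),
        Finset.sum_range_succ]
  have hterm : ∀ i, i < m →
      ∫ x in Ioc (u i) (u (i+1)), Real.exp (c * G x) ∂ν ≤ Real.exp (c * v (i+1)) * δ := by
    intro i hi
    have hi1 : i + 1 ≤ m := Nat.succ_le_of_lt hi
    have hii : u i ≤ u (i+1) := humono i (i+1) (Nat.le_succ i) hi1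
    have hbound : ∀ x ∈ Ioc (u i) (u (i+1)), |Real.exp (c * G x)| ≤ Real.exp (c * v (i+1)) := by
      intro x hx
      rw [abs_of_pos (Real.exp_pos _)]
      apply Real.exp_le_exp.2
      have : G x ≤ v (i+1) := by
        rw [← hGu (i+1) hi1]; exact hGm hx.2
      nlinarith
    have h2 := setIntegral_Ioc_abs_le (m := ν) hexpc hbound
    have h3 : (ν (Ioc (u i) (u (i+1)))).toReal = δ := by
      rw [HG _ _ hii, ENNReal.toReal_ofReal (sub_nonneg.2 (hGm hii)), hGu i hi.le,
        hGu (i+1) hi1]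
      simp only [hv]
      push_cast
      ring
    calc ∫ x in Ioc (u i) (u (i+1)), Real.exp (c * G x) ∂ν
        ≤ |∫ x in Ioc (u i) (u (i+1)), Real.exp (c * G x) ∂ν| := le_abs_self _
      _ ≤ Real.exp (c * v (i+1)) * (ν (Ioc (u i) (u (i+1)))).toReal := h2
      _ = Real.exp (c * v (i+1)) * δ := by rw [h3]
  have htele : ∑ i ∈ Finset.range m, Real.exp (c * v (i+1)) * δ
      ≤ 2 / c * (Real.exp (c * G t) - Real.exp (c * G 0)) := by
    have hpt : ∀ i : ℕ, Real.exp (c * v (i+1)) * δ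
        ≤ 2 / c * (Real.exp (c * v (i+1)) - Real.exp (c * v i)) := by
      intro i
      have hx := aux_exp_ineq (mul_nonneg hc.le hδ0) hcδ
      have hexp : Real.exp (c * v i) = Real.exp (c * v (i+1)) * Real.exp (-(c*δ)) := by
        rw [← Real.exp_add]
        congr 1
        simp only [hv]
        push_cast
        ring
      rw [hexp, div_mul_eq_mul_div, le_div_iff₀ hc]
      have hE := (Real.exp_pos (c * v (i+1))).le
      nlinarith
    calc ∑ i ∈ Finset.range m, Real.exp (c * v (i+1)) * δ
        ≤ ∑ i ∈ Finset.range m, 2 / c * (Real.exp (c * v (i+1)) - Real.exp (c * v i)) :=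
          Finset.sum_le_sum fun i _ => hpt i
      _ = 2 / c * ∑ i ∈ Finset.range m, (Real.exp (c * v (i+1)) - Real.exp (c * v i)) := by
          rw [Finset.mul_sum]
      _ = 2 / c * (Real.exp (c * v m) - Real.exp (c * v 0)) := by
          rw [Finset.sum_range_sub (fun i => Real.exp (c * v i))]
      _ = 2 / c * (Real.exp (c * G t) - Real.exp (c * G 0)) := by
          rw [hvm]; simp [hv]
  have hum_t : u m ≤ t := (humem m le_rfl).1.2
  have hum_0 : 0 ≤ u m := (humem m le_rfl).1.1
  have hlast : ∫ x in Ioc (u m) t, Real.exp (c * G x) ∂ν = 0 := by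
    have : ν (Ioc (u m) t) = 0 := by
      rw [HG _ _ hum_t, hGu m le_rfl, hvm]
      simp
    rw [Measure.restrict_eq_zero.2 this, integral_zero_measure]
  have hsum := hsplit m le_rfl
  rw [hu0] at hsum
  calc ∫ x in Ioc 0 t, Real.exp (c * G x) ∂ν
      = (∫ x in Ioc 0 (u m), Real.exp (c * G x) ∂ν)
        + ∫ x in Ioc (u m) t, Real.exp (c * G x) ∂ν := integral_Ioc_split hexpc hum_0 hum_t
    _ = ∑ i ∈ Finset.range m, ∫ x in Ioc (u i) (u (i+1)), Real.exp (c * G x) ∂ν := by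
        rw [hsum, hlast, add_zero]
    _ ≤ ∑ i ∈ Finset.range m, Real.exp (c * v (i+1)) * δ :=
        Finset.sum_le_sum fun i hi => hterm i (Finset.mem_range.1 hi)
    _ ≤ 2 / c * (Real.exp (c * G t) - Real.exp (c * G 0)) := htele
    _ ≤ 2 * Real.exp (c * G t) / c := by
        have h := Real.exp_pos (c * G 0)
        rw [div_mul_eq_mul_div, div_le_div_iff₀ hc hc]
        nlinarith

lemma cont_param {m : Measure ℝ} [IsLocallyFiniteMeasure m] {Fc : ℝ → ℝ}
    (hFm : Monotone Fc) (hFcont : Continuous Fc)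
    (hm : ∀ a b : ℝ, a ≤ b → m (Ioc a b) = ENNReal.ofReal (Fc b - Fc a))
    {g : ℝ → ℝ} (hg : Continuous g) {C : ℝ} (hgC : ∀ x, |g x| ≤ C) :
    Continuous fun t => ∫ u in Ioc 0 t, g u ∂m := by
  have hC0 : 0 ≤ C := le_trans (abs_nonneg _) (hgC 0)
  have habs : ∀ a b : ℝ, a ≤ b →
      |∫ u in Ioc a b, g u ∂m| ≤ C * (Fc b - Fc a) := by
    intro a b hab
    have h1 := setIntegral_Ioc_abs_le (m := m) hg (C := C) (a := a) (b := b)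
      (fun x _ => hgC x)
    rwa [hm a b hab, ENNReal.toReal_ofReal (sub_nonneg.2 (hFm hab))] at h1
  have key : ∀ a b : ℝ, a ≤ b →
      |(∫ u in Ioc 0 b, g u ∂m) - ∫ u in Ioc 0 a, g u ∂m| ≤ C * (Fc b - Fc a) := by
    intro a b hab
    rcases le_or_gt 0 a with h0a | h0a
    · rw [integral_Ioc_split hg h0a hab, add_sub_cancel_left]
      exact habs a b hab
    · have ha : Ioc (0:ℝ) a = ∅ := Ioc_eq_empty (not_lt.2 h0a.le)
      rw [ha, setIntegral_empty, sub_zero]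
      rcases le_or_gt b 0 with hb0 | hb0
      · rw [Ioc_eq_empty (not_lt.2 hb0), setIntegral_empty, abs_zero]
        exact mul_nonneg hC0 (sub_nonneg.2 (hFm hab))
      · refine (habs 0 b hb0.le).trans ?_
        have := hFm h0a.le
        nlinarith [sub_nonneg.2 (hFm hab)]
  rw [continuous_iff_continuousAt]
  intro x
  have hkey2 : ∀ y, dist (∫ u in Ioc 0 y, g u ∂m) (∫ u in Ioc 0 x, g u ∂m)
      ≤ C * dist (Fc y) (Fc x) := by
    intro y
    rcases le_total x y with h | h
    · rw [Real.dist_eq, Real.dist_eq, abs_of_nonneg (sub_nonneg.2 (hFm h))]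
      exact key x y h
    · rw [Real.dist_eq, Real.dist_eq, abs_sub_comm, abs_sub_comm (Fc y),
        abs_of_nonneg (sub_nonneg.2 (hFm h))]
      exact key y x h
  have h1 : Tendsto (fun y => C * dist (Fc y) (Fc x)) (𝓝 x) (𝓝 0) := by
    have := (hFcont.tendsto x).dist (tendsto_const_nhds (x := Fc x))
    simpa using tendsto_const_nhds (x := C) |>.mul this
  exact tendsto_iff_dist_tendsto_zero.mpr
    (squeeze_zero (fun y => dist_nonneg) hkey2 h1)

lemma lip_diff {K : NNReal} {f : ℝ → ℝ} (hf : LipschitzWith K f) (x y : ℝ) :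
    |f x - f y| ≤ K * |x - y| := by
  have := hf.dist_le_mul x y
  rwa [Real.dist_eq, Real.dist_eq] at this

lemma lip_bound {K : NNReal} {f : ℝ → ℝ} (hf : LipschitzWith K f) {C : ℝ} (z : ℝ)
    (hz : |z| ≤ C) : |f z| ≤ |f 0| + K * C := by
  have h1 : |f z - f 0| ≤ K * |z - 0| := lip_diff hf z 0
  rw [sub_zero] at h1
  have h2 : (K:ℝ) * |z| ≤ K * C := mul_le_mul_of_nonneg_left hz K.coe_nonneg
  calc |f z| = |f z - f 0 + f 0| := by ring_nf
    _ ≤ |f z - f 0| + |f 0| := abs_add_le _ _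
    _ ≤ K * C + |f 0| := add_le_add (h1.trans h2) le_rfl
    _ = |f 0| + K * C := by ring

noncomputable def Phi (F s1 s2 : StieltjesFunction ℝ) (b sig : ℝ → ℝ) (x₀ T : ℝ)
    (X : ℝ → ℝ) (t : ℝ) : ℝ :=
  x₀ + (∫ u in Ioc 0 (min t T), b (X u) ∂F.measure) +
    ((∫ u in Ioc 0 (min t T), sig (X u) ∂s1.measure) -
      ∫ u in Ioc 0 (min t T), sig (X u) ∂s2.measure)

lemma Phi_cont (F s1 s2 : StieltjesFunction ℝ) (hFc : Continuous F)
    (hs1c : Continuous s1) (hs2c : Continuous s2)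
    {b sig : ℝ → ℝ} {Kb Ks : NNReal} (hb : LipschitzWith Kb b) (hsig : LipschitzWith Ks sig)
    (x₀ T : ℝ) {X : ℝ → ℝ} (hX : Continuous X) {CX : ℝ} (hCX : ∀ u, |X u| ≤ CX) :
    Continuous (Phi F s1 s2 b sig x₀ T X) := by
  have hmin : Continuous fun t : ℝ => min t T := continuous_id.min continuous_const
  have h1 : Continuous fun r => ∫ u in Ioc 0 r, b (X u) ∂F.measure :=
    cont_param F.mono hFc (fun a b' _ => F.measure_Ioc a b') (hb.continuous.comp hX)
      (fun u => lip_bound hb (X u) (hCX u))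
  have h2 : Continuous fun r => ∫ u in Ioc 0 r, sig (X u) ∂s1.measure :=
    cont_param s1.mono hs1c (fun a b' _ => s1.measure_Ioc a b') (hsig.continuous.comp hX)
      (fun u => lip_bound hsig (X u) (hCX u))
  have h3 : Continuous fun r => ∫ u in Ioc 0 r, sig (X u) ∂s2.measure :=
    cont_param s2.mono hs2c (fun a b' _ => s2.measure_Ioc a b') (hsig.continuous.comp hX)
      (fun u => lip_bound hsig (X u) (hCX u))
  exact (continuous_const.add (h1.comp hmin)).add ((h2.comp hmin).sub (h3.comp hmin))

lemma Phi_bdd (F s1 s2 : StieltjesFunction ℝ)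
    {b sig : ℝ → ℝ} {Kb Ks : NNReal} (hb : LipschitzWith Kb b) (hsig : LipschitzWith Ks sig)
    (x₀ T : ℝ) {X : ℝ → ℝ} (hX : Continuous X) {CX : ℝ} (hCX : ∀ u, |X u| ≤ CX) :
    ∃ C, ∀ t, |Phi F s1 s2 b sig x₀ T X t| ≤ C := by
  refine ⟨|x₀| + (|b 0| + Kb * CX) * (F.measure (Ioc 0 T)).toReal
    + ((|sig 0| + Ks * CX) * (s1.measure (Ioc 0 T)).toReal
      + (|sig 0| + Ks * CX) * (s2.measure (Ioc 0 T)).toReal), ?_⟩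
  intro t
  have hA := setIntegral_Ioc_abs_le' (m := F.measure) (hb.continuous.comp hX)
    (fun u => lip_bound hb (X u) (hCX u)) (min_le_right t T)
  have hB := setIntegral_Ioc_abs_le' (m := s1.measure) (hsig.continuous.comp hX)
    (fun u => lip_bound hsig (X u) (hCX u)) (min_le_right t T)
  have hC := setIntegral_Ioc_abs_le' (m := s2.measure) (hsig.continuous.comp hX)
    (fun u => lip_bound hsig (X u) (hCX u)) (min_le_right t T)
  calc |Phi F s1 s2 b sig x₀ T X t|
      ≤ |x₀ + ∫ u in Ioc 0 (min t T), b (X u) ∂F.measure|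
        + |(∫ u in Ioc 0 (min t T), sig (X u) ∂s1.measure)
            - ∫ u in Ioc 0 (min t T), sig (X u) ∂s2.measure| := abs_add_le _ _
    _ ≤ (|x₀| + |∫ u in Ioc 0 (min t T), b (X u) ∂F.measure|)
        + (|∫ u in Ioc 0 (min t T), sig (X u) ∂s1.measure|
            + |∫ u in Ioc 0 (min t T), sig (X u) ∂s2.measure|) :=
        add_le_add (abs_add_le _ _) (abs_sub _ _)
    _ ≤ _ := by
        refine add_le_add (add_le_add le_rfl hA) (add_le_add hB hC) |>.trans ?_
        rw [add_assoc]

lemma Phi_diff (F s1 s2 : StieltjesFunction ℝ) {b sig : ℝ → ℝ} {Kb Ks : NNReal}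
    (hb : LipschitzWith Kb b) (hsig : LipschitzWith Ks sig) (x₀ T : ℝ)
    {X Y : ℝ → ℝ} (hX : Continuous X) (hY : Continuous Y) (t : ℝ) :
    |Phi F s1 s2 b sig x₀ T X t - Phi F s1 s2 b sig x₀ T Y t|
      ≤ ∫ u in Ioc 0 (min t T), (max (Kb:ℝ) (Ks:ℝ)) * |X u - Y u|
          ∂(F.measure + s1.measure + s2.measure) := by
  set L : ℝ := max (Kb:ℝ) (Ks:ℝ) with hL
  set s : Set ℝ := Ioc 0 (min t T) with hs
  set g : ℝ → ℝ := fun u => L * |X u - Y u| with hg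
  have hgc : Continuous g := continuous_const.mul ((hX.sub hY).abs)
  have key : ∀ (m : Measure ℝ), IsLocallyFiniteMeasure m → ∀ (f : ℝ → ℝ) (K : NNReal),
      LipschitzWith K f → (K:ℝ) ≤ L →
      |(∫ u in s, f (X u) ∂m) - ∫ u in s, f (Y u) ∂m| ≤ ∫ u in s, g u ∂m := by
    intro m hm f K hf hKL
    have hcX : Continuous fun u => f (X u) := hf.continuous.comp hX
    have hcY : Continuous fun u => f (Y u) := hf.continuous.comp hY
    have iX : Integrable (fun u => f (X u)) (m.restrict s) := hcX.integrableOn_Ioc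
    have iY : Integrable (fun u => f (Y u)) (m.restrict s) := hcY.integrableOn_Ioc
    have iN : Integrable (fun u => ‖f (X u) - f (Y u)‖) (m.restrict s) :=
      (hcX.sub hcY).norm.integrableOn_Ioc
    have iG : Integrable g (m.restrict s) := hgc.integrableOn_Ioc
    rw [← integral_sub iX iY, ← Real.norm_eq_abs]
    refine (norm_integral_le_integral_norm _).trans ?_
    refine setIntegral_mono_on iN iG measurableSet_Ioc ?_
    intro u _
    rw [Real.norm_eq_abs]
    exact (lip_diff hf _ _).trans (mul_le_mul_of_nonneg_right hKL (abs_nonneg _))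
  have hFkey := key F.measure inferInstance b Kb hb (le_max_left _ _)
  have h1key := key s1.measure inferInstance sig Ks hsig (le_max_right _ _)
  have h2key := key s2.measure inferInstance sig Ks hsig (le_max_right _ _)
  have hsum : ∫ u in s, g u ∂(F.measure + s1.measure + s2.measure)
      = ((∫ u in s, g u ∂F.measure) + ∫ u in s, g u ∂s1.measure)
        + ∫ u in s, g u ∂s2.measure := by
    have i1 : Integrable g (F.measure.restrict s) := hgc.integrableOn_Ioc
    have i2 : Integrable g (s1.measure.restrict s) := hgc.integrableOn_Ioc
    have i3 : Integrable g (s2.measure.restrict s) := hgc.integrableOn_Ioc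
    rw [Measure.restrict_add, Measure.restrict_add,
      integral_add_measure (i1.add_measure i2) i3, integral_add_measure i1 i2]
  have hrepr : Phi F s1 s2 b sig x₀ T X t - Phi F s1 s2 b sig x₀ T Y t
      = ((∫ u in s, b (X u) ∂F.measure) - ∫ u in s, b (Y u) ∂F.measure)
        + ((∫ u in s, sig (X u) ∂s1.measure) - ∫ u in s, sig (Y u) ∂s1.measure)
        + ((∫ u in s, sig (Y u) ∂s2.measure) - ∫ u in s, sig (X u) ∂s2.measure) := by
    simp only [Phi, hs]
    ring
  rw [hrepr, hsum]
  refine (abs_add_three _ _ _).trans ?_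
  rw [abs_sub_comm (∫ u in s, sig (Y u) ∂s2.measure)]
  exact add_le_add (add_le_add hFkey h1key) h2key

lemma exists_sol (F s1 s2 : StieltjesFunction ℝ) (hFc : Continuous F)
    (hs1c : Continuous s1) (hs2c : Continuous s2)
    {b sig : ℝ → ℝ} {Kb Ks : NNReal} (hb : LipschitzWith Kb b) (hsig : LipschitzWith Ks sig)
    (x₀ T : ℝ) (hT : 0 ≤ T) :
    ∃ X : ℝ → ℝ, Continuous X ∧ (∃ C, ∀ t, |X t| ≤ C) ∧
      (∀ t, X t = Phi F s1 s2 b sig x₀ T X t) ∧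
      ∀ Z : ℝ → ℝ, Continuous Z → (∃ C, ∀ t, |Z t| ≤ C) →
        (∀ t, Z t = Phi F s1 s2 b sig x₀ T Z t) → ∀ t, Z t = X t := by
  classical
  set G : ℝ → ℝ := fun t => F t + s1 t + s2 t with hGdef
  have hGm : Monotone G := fun a b' h =>
    add_le_add (add_le_add (F.mono h) (s1.mono h)) (s2.mono h)
  have hGc : Continuous G := (hFc.add hs1c).add hs2c
  set ν : Measure ℝ := F.measure + s1.measure + s2.measure with hνdef
  have HG : ∀ a b' : ℝ, a ≤ b' → ν (Ioc a b') = ENNReal.ofReal (G b' - G a) := by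
    intro a b' h
    simp only [hνdef, Measure.add_apply, StieltjesFunction.measure_Ioc]
    rw [← ENNReal.ofReal_add (sub_nonneg.2 (F.mono h)) (sub_nonneg.2 (s1.mono h)),
      ← ENNReal.ofReal_add
        (add_nonneg (sub_nonneg.2 (F.mono h)) (sub_nonneg.2 (s1.mono h)))
        (sub_nonneg.2 (s2.mono h))]
    congr 1
    simp only [hGdef]
    ring
  set L : ℝ := max (Kb:ℝ) (Ks:ℝ) with hL
  have hL0 : 0 ≤ L := le_trans Kb.coe_nonneg (le_max_left _ _)
  set c : ℝ := 4 * L + 1 with hcdef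
  have hc0 : 0 < c := by rw [hcdef]; linarith
  set τ : ℝ → ℝ := fun t => max 0 (min t T) with hτ
  have hτc : Continuous τ := continuous_const.max (continuous_id.min continuous_const)
  have hτ0 : ∀ t, 0 ≤ τ t := fun t => le_max_left _ _
  have hτT : ∀ t, τ t ≤ T := fun t => max_le hT (min_le_right _ _)
  set E : ℝ → ℝ := fun t => Real.exp (c * G (τ t)) with hE
  have hEc : Continuous E := Real.continuous_exp.comp (continuous_const.mul (hGc.comp hτc))
  have hEpos : ∀ t, 0 < E t := fun t => Real.exp_pos _
  have hEle : ∀ t, E t ≤ Real.exp (c * G T) := fun t =>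
    Real.exp_le_exp.2 (mul_le_mul_of_nonneg_left (hGm (hτT t)) hc0.le)
  set w : ℝ → ℝ := fun t => Real.exp (-(c * G (τ t))) with hw
  have hwc : Continuous w :=
    Real.continuous_exp.comp (continuous_const.mul (hGc.comp hτc)).neg
  have hwpos : ∀ t, 0 < w t := fun t => Real.exp_pos _
  have hwE : ∀ t, w t * E t = 1 := by
    intro t
    simp only [hw, hE]
    rw [← Real.exp_add]
    simp
  have hwle : ∀ t, w t ≤ Real.exp (-(c * G 0)) := fun t =>
    Real.exp_le_exp.2 (neg_le_neg (mul_le_mul_of_nonneg_left (hGm (hτ0 t)) hc0.le))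
  -- the conjugated Picard map
  have hNex : ∀ Y : ℝ →ᵇ ℝ, ∃ Z : ℝ →ᵇ ℝ,
      ∀ t, Z t = w t * Phi F s1 s2 b sig x₀ T (fun u => E u * Y u) t := by
    intro Y
    have hXc : Continuous fun u => E u * Y u := hEc.mul Y.continuous
    have hXb : ∀ u, |E u * Y u| ≤ Real.exp (c * G T) * ‖Y‖ := by
      intro u
      rw [abs_mul, abs_of_pos (hEpos u)]
      refine mul_le_mul (hEle u) ?_ (abs_nonneg _) (Real.exp_pos _).le
      have := Y.norm_coe_le_norm u
      rwa [Real.norm_eq_abs] at this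
    obtain ⟨CP, hCP⟩ := Phi_bdd F s1 s2 hb hsig x₀ T hXc hXb
    have hPc : Continuous (Phi F s1 s2 b sig x₀ T fun u => E u * Y u) :=
      Phi_cont F s1 s2 hFc hs1c hs2c hb hsig x₀ T hXc hXb
    have hCP0 : 0 ≤ CP := (abs_nonneg _).trans (hCP 0)
    refine ⟨BoundedContinuousFunction.ofNormedAddCommGroup _ (hwc.mul hPc)
      (Real.exp (-(c * G 0)) * CP) ?_, fun t => rfl⟩
    intro t
    rw [Real.norm_eq_abs, Pi.mul_apply, abs_mul, abs_of_pos (hwpos t)]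
    exact mul_le_mul (hwle t) (hCP t) (abs_nonneg _) (Real.exp_pos _).le
  choose N hN using hNex
  have hhalf : ((1/2 : ℝ≥0) : ℝ) = 1/2 := by norm_num
  have hcontr : ContractingWith (1/2) N := by
    constructor
    · rw [← NNReal.coe_lt_coe, hhalf]
      norm_num
    · apply LipschitzWith.of_dist_le_mul
      intro Y₁ Y₂
      rw [hhalf, BoundedContinuousFunction.dist_le (by positivity)]
      intro t
      rw [Real.dist_eq, hN Y₁ t, hN Y₂ t]
      have hD0 : (0:ℝ) ≤ dist Y₁ Y₂ := dist_nonneg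
      rcases le_or_gt (min t T) 0 with hmt | hmt
      · have hempty : Ioc (0:ℝ) (min t T) = ∅ := Ioc_eq_empty (not_lt.2 hmt)
        have hval : ∀ X : ℝ → ℝ, Phi F s1 s2 b sig x₀ T X t = x₀ := by
          intro X
          simp [Phi, hempty]
        rw [hval, hval, sub_self, abs_zero]
        positivity
      · have ht'0 : (0:ℝ) ≤ min t T := hmt.le
        have ht'T : min t T ≤ T := min_le_right _ _
        have hτt : τ t = min t T := by
          simp only [hτ]
          exact max_eq_right hmt.le
        have hXc1 : Continuous fun u => E u * Y₁ u := hEc.mul Y₁.continuous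
        have hXc2 : Continuous fun u => E u * Y₂ u := hEc.mul Y₂.continuous
        have h1 := Phi_diff F s1 s2 hb hsig x₀ T hXc1 hXc2 t
        have hpt : ∀ u ∈ Ioc 0 (min t T),
            L * |E u * Y₁ u - E u * Y₂ u| ≤ (L * dist Y₁ Y₂) * Real.exp (c * G u) := by
          intro u hu
          have hτu : τ u = u := by
            simp only [hτ]
            rw [min_eq_left (hu.2.trans ht'T), max_eq_right hu.1.le]
          have he1 : |E u * Y₁ u - E u * Y₂ u| = E u * |Y₁ u - Y₂ u| := by
            rw [← mul_sub, abs_mul, abs_of_pos (hEpos u)]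
          have hEu : E u = Real.exp (c * G u) := by rw [hE]; simp only; rw [hτu]
          have hYD : |Y₁ u - Y₂ u| ≤ dist Y₁ Y₂ := by
            have := BoundedContinuousFunction.dist_coe_le_dist (f := Y₁) (g := Y₂) u
            rwa [Real.dist_eq] at this
          rw [he1, hEu]
          calc L * (Real.exp (c * G u) * |Y₁ u - Y₂ u|)
              ≤ L * (Real.exp (c * G u) * dist Y₁ Y₂) := by
                refine mul_le_mul_of_nonneg_left ?_ hL0
                exact mul_le_mul_of_nonneg_left hYD (Real.exp_pos _).le
            _ = (L * dist Y₁ Y₂) * Real.exp (c * G u) := by ring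
        have hint1 : Integrable (fun u => L * |E u * Y₁ u - E u * Y₂ u|)
            (ν.restrict (Ioc 0 (min t T))) :=
          (continuous_const.mul ((hXc1.sub hXc2).abs)).integrableOn_Ioc
        have hint2 : Integrable (fun u => (L * dist Y₁ Y₂) * Real.exp (c * G u))
            (ν.restrict (Ioc 0 (min t T))) :=
          (continuous_const.mul (Real.continuous_exp.comp
            (continuous_const.mul hGc))).integrableOn_Ioc
        have h2 : ∫ u in Ioc 0 (min t T), L * |E u * Y₁ u - E u * Y₂ u| ∂ν
            ≤ ∫ u in Ioc 0 (min t T), (L * dist Y₁ Y₂) * Real.exp (c * G u) ∂ν :=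
          setIntegral_mono_on hint1 hint2 measurableSet_Ioc hpt
        have h3 : ∫ u in Ioc 0 (min t T), (L * dist Y₁ Y₂) * Real.exp (c * G u) ∂ν
            = (L * dist Y₁ Y₂) * ∫ u in Ioc 0 (min t T), Real.exp (c * G u) ∂ν :=
          integral_const_mul _ _
        have h4 := key_exp hGm hGc HG hc0 ht'0
        have hPhi : |Phi F s1 s2 b sig x₀ T (fun u => E u * Y₁ u) t
            - Phi F s1 s2 b sig x₀ T (fun u => E u * Y₂ u) t|
            ≤ (L * dist Y₁ Y₂) * (2 * Real.exp (c * G (min t T)) / c) := by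
          refine h1.trans (h2.trans ?_)
          rw [h3]
          exact mul_le_mul_of_nonneg_left h4 (by positivity)
        have hwt : w t = Real.exp (-(c * G (min t T))) := by rw [hw]; simp only; rw [hτt]
        calc |w t * Phi F s1 s2 b sig x₀ T (fun u => E u * Y₁ u) t
            - w t * Phi F s1 s2 b sig x₀ T (fun u => E u * Y₂ u) t|
            = w t * |Phi F s1 s2 b sig x₀ T (fun u => E u * Y₁ u) t
                - Phi F s1 s2 b sig x₀ T (fun u => E u * Y₂ u) t| := by
              rw [← mul_sub, abs_mul, abs_of_pos (hwpos t)]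
          _ ≤ w t * ((L * dist Y₁ Y₂) * (2 * Real.exp (c * G (min t T)) / c)) :=
              mul_le_mul_of_nonneg_left hPhi (hwpos t).le
          _ ≤ 1/2 * dist Y₁ Y₂ := by
              rw [hwt]
              have hEE : Real.exp (-(c * G (min t T))) * Real.exp (c * G (min t T)) = 1 := by
                rw [← Real.exp_add]; simp
              have hre : Real.exp (-(c * G (min t T)))
                  * ((L * dist Y₁ Y₂) * (2 * Real.exp (c * G (min t T)) / c))
                  = (2 * L * dist Y₁ Y₂ / c)
                    * (Real.exp (-(c * G (min t T))) * Real.exp (c * G (min t T))) := by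
                ring
              rw [hre, hEE, mul_one, div_le_iff₀ hc0, hcdef]
              nlinarith
  set Ystar : ℝ →ᵇ ℝ := ContractingWith.fixedPoint N hcontr with hYs
  have hfixY : N Ystar = Ystar := hcontr.fixedPoint_isFixedPt
  have hXb : ∀ u, |E u * Ystar u| ≤ Real.exp (c * G T) * ‖Ystar‖ := by
    intro u
    rw [abs_mul, abs_of_pos (hEpos u)]
    refine mul_le_mul (hEle u) ?_ (abs_nonneg _) (Real.exp_pos _).le
    have := Ystar.norm_coe_le_norm u
    rwa [Real.norm_eq_abs] at this
  have hfix : ∀ t, E t * Ystar t = Phi F s1 s2 b sig x₀ T (fun u => E u * Ystar u) t := by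
    intro t
    have h1 : (N Ystar) t = Ystar t := by rw [hfixY]
    rw [hN Ystar t] at h1
    calc E t * Ystar t
        = E t * (w t * Phi F s1 s2 b sig x₀ T (fun u => E u * Ystar u) t) := by rw [h1]
      _ = (w t * E t) * Phi F s1 s2 b sig x₀ T (fun u => E u * Ystar u) t := by ring
      _ = Phi F s1 s2 b sig x₀ T (fun u => E u * Ystar u) t := by rw [hwE t, one_mul]
  refine ⟨fun u => E u * Ystar u, hEc.mul Ystar.continuous,
    ⟨Real.exp (c * G T) * ‖Ystar‖, hXb⟩, hfix, ?_⟩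
  rintro Z hZc ⟨CZ, hCZ⟩ hZfix t
  have hYZex : ∃ YZ : ℝ →ᵇ ℝ, ∀ u, YZ u = w u * Z u := by
    refine ⟨BoundedContinuousFunction.ofNormedAddCommGroup _ (hwc.mul hZc)
      (Real.exp (-(c * G 0)) * CZ) ?_, fun u => rfl⟩
    intro u
    rw [Real.norm_eq_abs, Pi.mul_apply, abs_mul, abs_of_pos (hwpos u)]
    exact mul_le_mul (hwle u) (hCZ u) (abs_nonneg _) (Real.exp_pos _).le
  obtain ⟨YZ, hYZ⟩ := hYZex
  have hXeq : (fun u => E u * YZ u) = Z := by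
    funext u
    rw [hYZ u]
    calc E u * (w u * Z u) = (w u * E u) * Z u := by ring
      _ = Z u := by rw [hwE u, one_mul]
  have hfixYZ : Function.IsFixedPt N YZ := by
    apply BoundedContinuousFunction.ext
    intro r
    rw [hN YZ r, hXeq, hYZ r, ← hZfix r]
  have hYZeq : YZ = Ystar := hcontr.fixedPoint_unique hfixYZ
  calc Z t = (w t * E t) * Z t := by rw [hwE t, one_mul]
    _ = E t * (w t * Z t) := by ring
    _ = E t * YZ t := by rw [hYZ t]
    _ = E t * Ystar t := by rw [hYZeq]

end BVSDE

/- A continuous path `s` of locally bounded variation is encoded by its Jordan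
decomposition `s = s₁ - s₂` into continuous non-decreasing functions (Stieltjes
functions), and `∫ σ(X) ds := ∫ σ(X) ds₁ - ∫ σ(X) ds₂`. -/
theorem bv_driven_sde_exists_unique
    (F : StieltjesFunction ℝ) (hFc : Continuous F) (hF0 : F 0 = 0)
    (s1 s2 : StieltjesFunction ℝ) (hs1 : Continuous s1) (hs2 : Continuous s2)
    (b sig : ℝ → ℝ) (Kb Ks : NNReal)
    (hb : LipschitzWith Kb b) (hsig : LipschitzWith Ks sig)
    (x₀ : ℝ) :
    ∃ X : ℝ → ℝ,
      (Continuous X ∧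
        ∀ t ≥ (0 : ℝ),
          X t = x₀ + (∫ u in Ioc (0 : ℝ) t, b (X u) ∂F.measure) +
            ((∫ u in Ioc (0 : ℝ) t, sig (X u) ∂s1.measure) -
              ∫ u in Ioc (0 : ℝ) t, sig (X u) ∂s2.measure)) ∧
      ∀ Z : ℝ → ℝ, Continuous Z →
        (∀ t ≥ (0 : ℝ),
          Z t = x₀ + (∫ u in Ioc (0 : ℝ) t, b (Z u) ∂F.measure) +
            ((∫ u in Ioc (0 : ℝ) t, sig (Z u) ∂s1.measure) -
              ∫ u in Ioc (0 : ℝ) t, sig (Z u) ∂s2.measure)) →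
        ∀ t ≥ (0 : ℝ), Z t = X t := by
  classical
  have hsol := fun n : ℕ =>
    BVSDE.exists_sol F s1 s2 hFc hs1 hs2 hb hsig x₀ (n : ℝ) (Nat.cast_nonneg n)
  choose Xs hXc hXb hXfix hXuniq using hsol
  -- value for nonpositive times
  have hneg : ∀ (n : ℕ) (t : ℝ), t ≤ 0 → Xs n t = x₀ := by
    intro n t ht
    rw [hXfix n t]
    have hm : min t ((n:ℕ):ℝ) ≤ 0 := le_trans (min_le_left _ _) ht
    have hempty : Ioc (0:ℝ) (min t ((n:ℕ):ℝ)) = ∅ := Ioc_eq_empty (not_lt.2 hm)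
    simp [BVSDE.Phi, hempty]
  -- clipping lemma
  have hclip : ∀ (n : ℕ) (Z : ℝ → ℝ), Continuous Z →
      (∀ r : ℝ, 0 ≤ r → r ≤ (n:ℝ) →
        Z r = x₀ + (∫ u in Ioc (0:ℝ) r, b (Z u) ∂F.measure) +
          ((∫ u in Ioc (0:ℝ) r, sig (Z u) ∂s1.measure) -
            ∫ u in Ioc (0:ℝ) r, sig (Z u) ∂s2.measure)) →
      ∀ t, Z (max 0 (min t (n:ℝ))) = Xs n t := by
    intro n Z hZc hZeq t
    set W : ℝ → ℝ := fun r => Z (max 0 (min r (n:ℝ))) with hW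
    have hclipc : Continuous fun r : ℝ => max 0 (min r (n:ℝ)) :=
      continuous_const.max (continuous_id.min continuous_const)
    have hWc : Continuous W := hZc.comp hclipc
    have hclipmem : ∀ r : ℝ, max 0 (min r (n:ℝ)) ∈ Icc (0:ℝ) (n:ℝ) :=
      fun r => ⟨le_max_left _ _, max_le (Nat.cast_nonneg n) (min_le_right _ _)⟩
    obtain ⟨x', hx'mem, hx'max⟩ :=
      (isCompact_Icc (a := (0:ℝ)) (b := (n:ℝ))).exists_isMaxOn
        ⟨0, left_mem_Icc.2 (Nat.cast_nonneg n)⟩ (hZc.abs.continuousOn)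
    have hCW : ∀ r, |W r| ≤ |Z x'| := fun r => hx'max (hclipmem r)
    have hZ0 : Z 0 = x₀ := by
      have h00 := hZeq 0 le_rfl (Nat.cast_nonneg n)
      rw [Ioc_self] at h00
      simpa using h00
    have hWfix : ∀ r, W r = BVSDE.Phi F s1 s2 b sig x₀ (n:ℝ) W r := by
      intro r
      have hWeq : ∀ u ∈ Ioc (0:ℝ) (min r (n:ℝ)), W u = Z u := by
        intro u hu
        simp only [hW]
        rw [min_eq_left (hu.2.trans (min_le_right _ _)), max_eq_right hu.1.le]
      have hI : ∀ (m : Measure ℝ) (f : ℝ → ℝ),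
          (∫ u in Ioc (0:ℝ) (min r (n:ℝ)), f (W u) ∂m)
            = ∫ u in Ioc (0:ℝ) (min r (n:ℝ)), f (Z u) ∂m := by
        intro m f
        exact setIntegral_congr_fun measurableSet_Ioc fun u hu => by rw [hWeq u hu]
      rcases le_or_gt (min r ((n:ℕ):ℝ)) 0 with hr0 | hr0
      · have hempty : Ioc (0:ℝ) (min r ((n:ℕ):ℝ)) = ∅ := Ioc_eq_empty (not_lt.2 hr0)
        have hW0 : W r = x₀ := by
          simp only [hW]
          rw [max_eq_left hr0, hZ0]
        rw [hW0]
        simp [BVSDE.Phi, hempty]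
      · have h1 : W r = Z (min r (n:ℝ)) := by
          simp only [hW]
          rw [max_eq_right hr0.le]
        rw [h1]
        have h2 := hZeq (min r (n:ℝ)) hr0.le (min_le_right _ _)
        simp only [BVSDE.Phi]
        rw [hI F.measure b, hI s1.measure sig, hI s2.measure sig]
        exact h2
    exact hXuniq n W hWc ⟨|Z x'|, hCW⟩ hWfix t
  -- consistency
  have hcons : ∀ (n m : ℕ), (n:ℝ) ≤ (m:ℝ) → ∀ t, Xs m (max 0 (min t (n:ℝ))) = Xs n t := by
    intro n m hnm t
    refine hclip n (Xs m) (hXc m) ?_ t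
    intro r hr0 hrn
    have hmin : min r ((m:ℕ):ℝ) = r := min_eq_left (hrn.trans hnm)
    rw [hXfix m r]
    simp only [BVSDE.Phi, hmin]
  set X : ℝ → ℝ := fun t => Xs (⌊|t|⌋₊ + 1) t with hX
  have hXagree : ∀ (n : ℕ) (t : ℝ), t ≤ (n:ℝ) → X t = Xs n t := by
    intro n t htn
    show Xs (⌊|t|⌋₊ + 1) t = Xs n t
    rcases le_or_gt t 0 with ht0 | ht0
    · rw [hneg _ t ht0, hneg n t ht0]
    · have htm : t ≤ ((⌊|t|⌋₊ + 1 : ℕ) : ℝ) := by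
        have h1 : t ≤ |t| := le_abs_self t
        have h2 : |t| < (⌊|t|⌋₊ : ℝ) + 1 := Nat.lt_floor_add_one _
        push_cast
        linarith
      set m : ℕ := ⌊|t|⌋₊ + 1 with hm
      have h1 := hcons m (max m n) (Nat.cast_le.2 (le_max_left m n)) t
      have h2 := hcons n (max m n) (Nat.cast_le.2 (le_max_right m n)) t
      rw [min_eq_left htm, max_eq_right ht0.le] at h1
      rw [min_eq_left htn, max_eq_right ht0.le] at h2
      rw [← h1, h2]
  have hXcont : Continuous X := by
    rw [continuous_iff_continuousAt]
    intro t
    have htn : t < ((⌊|t|⌋₊ + 1 : ℕ) : ℝ) := by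
      have h1 : t ≤ |t| := le_abs_self t
      have h2 : |t| < (⌊|t|⌋₊ : ℝ) + 1 := Nat.lt_floor_add_one _
      push_cast
      linarith
    refine ContinuousAt.congr_of_eventuallyEq ((hXc (⌊|t|⌋₊ + 1)).continuousAt) ?_
    exact Filter.eventuallyEq_of_mem (Iio_mem_nhds htn)
      fun y hy => hXagree (⌊|t|⌋₊ + 1) y (le_of_lt hy)
  have hXsol : ∀ t, t ≥ (0:ℝ) →
      X t = x₀ + (∫ u in Ioc (0:ℝ) t, b (X u) ∂F.measure) +
        ((∫ u in Ioc (0:ℝ) t, sig (X u) ∂s1.measure) -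
          ∫ u in Ioc (0:ℝ) t, sig (X u) ∂s2.measure) := by
    intro t ht
    set n : ℕ := ⌊t⌋₊ + 1 with hn
    have htn : t ≤ (n:ℝ) := by
      have h2 : t < (⌊t⌋₊ : ℝ) + 1 := Nat.lt_floor_add_one _
      push_cast [hn]
      linarith
    have hmin : min t ((n:ℕ):ℝ) = t := min_eq_left htn
    have hI : ∀ (m : Measure ℝ) (f : ℝ → ℝ),
        (∫ u in Ioc (0:ℝ) t, f (Xs n u) ∂m) = ∫ u in Ioc (0:ℝ) t, f (X u) ∂m := by
      intro m f
      exact setIntegral_congr_fun measurableSet_Ioc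
        fun u hu => by rw [hXagree n u (hu.2.trans htn)]
    rw [hXagree n t htn, hXfix n t]
    simp only [BVSDE.Phi, hmin]
    rw [hI F.measure b, hI s1.measure sig, hI s2.measure sig]
  refine ⟨X, ⟨hXcont, hXsol⟩, ?_⟩
  intro Z hZc hZeq t ht
  set n : ℕ := ⌊t⌋₊ + 1 with hn
  have htn : t ≤ (n:ℝ) := by
    have h2 : t < (⌊t⌋₊ : ℝ) + 1 := Nat.lt_floor_add_one _
    push_cast [hn]
    linarith
  have h := hclip n Z hZc (fun r hr0 _ => hZeq r hr0) t
  rw [min_eq_left htn, max_eq_right ht] at h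
  rw [h, ← hXagree n t htn]
end

section
/- Let σ : ℝ → ℝ be continuously differentiable with σ' bounded, and g the flow ∂g/∂x = σ(g), g(0,y)=y. Let s : [0,∞) → ℝ be continuous of locally bounded variation, μ continuous non-decreasing with μ(0)=0, b : ℝ → ℝ Lipschitz and bounded, and let Y solve Y(t) = x₀ + ∫₀^t ρ(s(u), Y(u)) b(g(s(u), Y(u))) dμ(u) where ρ(x,y) = (∂g/∂y(x,y))⁻¹. Then X(t) := g(s(t), Y(t)) solves X(t) = x₀ + ∫₀^t σ(X(u)) ds(u) + ∫₀^t b(X(u)) dμ(u) for all t ≥ 0 (Riemann–Stieltjes integrals). -/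
open Set MeasureTheory intervalIntegral

/- Doss–Sussmann transformation with a bounded-variation driver `s = s₁ - s₂`
(Jordan decomposition into continuous Stieltjes functions) and increasing clock `μ = F`. -/
private lemma uIoc_abs {x x' z : ℝ} (hz : z ∈ Set.uIoc x x') :
    |z - x| ≤ |x' - x| ∧ |z| ≤ max |x| |x'| := by
  rcases Set.mem_uIoc.1 hz with ⟨h1, h2⟩ | ⟨h1, h2⟩ <;>
    refine ⟨abs_le.2 ⟨?_, ?_⟩, abs_le.2 ⟨?_, ?_⟩⟩ <;>
    nlinarith [le_abs_self x, neg_abs_le x, le_abs_self x', neg_abs_le x',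
      le_max_left |x| |x'|, le_max_right |x| |x'|, le_abs_self (x' - x), neg_abs_le (x' - x)]

private lemma gron_fwd {M : ℝ} {f f' : ℝ → ℝ}
    (hd : ∀ z, HasDerivAt f (f' z) z) (hb : ∀ z, |f' z| ≤ M * |f z|)
    {x₀ x : ℝ} (hx : x₀ ≤ x) : |f x| ≤ |f x₀| * Real.exp (M * (x - x₀)) := by
  have h := norm_le_gronwallBound_of_norm_deriv_right_le
    (f := f) (f' := f') (δ := |f x₀|) (K := M) (ε := 0) (a := x₀) (b := x)
    (fun z _ => (hd z).continuousAt.continuousWithinAt)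
    (fun z _ => (hd z).hasDerivWithinAt)
    (le_of_eq (Real.norm_eq_abs _))
    (fun z _ => by simpa [Real.norm_eq_abs] using hb z)
  have h2 := h x ⟨hx, le_rfl⟩
  rwa [gronwallBound_ε0, Real.norm_eq_abs] at h2

private lemma gron_two {M : ℝ} {f f' : ℝ → ℝ}
    (hd : ∀ z, HasDerivAt f (f' z) z) (hb : ∀ z, |f' z| ≤ M * |f z|)
    (x₀ x : ℝ) : |f x| ≤ |f x₀| * Real.exp (M * |x - x₀|) := by
  rcases le_total x₀ x with h | h
  · rw [abs_of_nonneg (sub_nonneg.2 h)]; exact gron_fwd hd hb h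
  · have hd' : ∀ z, HasDerivAt (fun w => f (-w)) (f' (-z) * (-1)) z := by
      intro z
      have := (hd (-z)).comp z (hasDerivAt_neg z)
      exact this
    have hb' : ∀ z, |f' (-z) * (-1)| ≤ M * |f (-z)| := by
      intro z; rw [abs_mul]; simpa using hb (-z)
    have h2 := gron_fwd (f := fun w => f (-w)) (f' := fun z => f' (-z) * (-1)) hd' hb'
      (x₀ := -x₀) (x := -x) (by linarith)
    simp only [neg_neg] at h2
    rw [abs_of_nonpos (sub_nonpos.2 h)]
    calc |f x| ≤ |f x₀| * Real.exp (M * (-x - -x₀)) := h2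
      _ = |f x₀| * Real.exp (M * -(x - x₀)) := by ring_nf

set_option maxHeartbeats 8000000 in
theorem doss_sussmann_transform
    (sig : ℝ → ℝ) (hC1 : ContDiff ℝ 1 sig) (M : ℝ) (hM : ∀ x, |deriv sig x| ≤ M)
    (g : ℝ → ℝ → ℝ)
    (hg0 : ∀ y, g 0 y = y)
    (hgx : ∀ x y, HasDerivAt (fun x' => g x' y) (sig (g x y)) x)
    (b : ℝ → ℝ) (Kb : NNReal) (hb : LipschitzWith Kb b) (Cb : ℝ) (hbB : ∀ x, |b x| ≤ Cb)
    (F s1 s2 : StieltjesFunction ℝ)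
    (hFc : Continuous F) (hF0 : F 0 = 0)
    (hs1 : Continuous s1) (hs2 : Continuous s2)
    (s : ℝ → ℝ) (hs : ∀ t, s t = s1 t - s2 t) (hs0 : s 0 = 0)
    (x₀ : ℝ) (Y : ℝ → ℝ) (hYc : Continuous Y)
    -- `Y` solves the reduced ODE `Y(t) = x₀ + ∫₀ᵗ ρ(s(u),Y(u)) b(g(s(u),Y(u))) dμ(u)`
    -- with `ρ(x,y) = exp(-∫₀ˣ σ'(g(z,y)) dz) = (∂g/∂y)⁻¹`
    (hYeq : ∀ t ≥ (0 : ℝ),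
      Y t = x₀ + ∫ u in Ioc (0 : ℝ) t,
        Real.exp (-(∫ z in (0 : ℝ)..(s u), deriv sig (g z (Y u)))) *
          b (g (s u) (Y u)) ∂F.measure) :
    -- then `X := g(s(·), Y(·))` solves `X = x₀ + ∫ σ(X) ds + ∫ b(X) dμ`
    ∀ t ≥ (0 : ℝ),
      g (s t) (Y t) = x₀ +
        ((∫ u in Ioc (0 : ℝ) t, sig (g (s u) (Y u)) ∂s1.measure) -
          ∫ u in Ioc (0 : ℝ) t, sig (g (s u) (Y u)) ∂s2.measure) +
        ∫ u in Ioc (0 : ℝ) t, b (g (s u) (Y u)) ∂F.measure := by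
  -- ## Basic facts about `sig`
  have hM0 : 0 ≤ M := (abs_nonneg _).trans (hM 0)
  have hσdiff : Differentiable ℝ sig := hC1.differentiable one_ne_zero
  have hσd : ∀ x, HasDerivAt sig (deriv sig x) x := fun x => (hσdiff x).hasDerivAt
  have hσ'c : Continuous (deriv sig) := hC1.continuous_deriv le_rfl
  have hσc : Continuous sig := hC1.continuous
  have hlip : ∀ w w', |sig w - sig w'| ≤ M * |w - w'| := by
    intro w w'
    have h1 : LipschitzWith M.toNNReal sig := by
      apply lipschitzWith_of_nnnorm_deriv_le hσdiff
      intro x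
      rw [← NNReal.coe_le_coe, coe_nnnorm, Real.norm_eq_abs, Real.coe_toNNReal M hM0]
      exact hM x
    have h2 := h1.dist_le_mul w w'
    rwa [Real.dist_eq, Real.dist_eq, Real.coe_toNNReal M hM0] at h2
  have hsc : Continuous s := by
    have h : s = fun u => s1 u - s2 u := funext hs
    rw [h]; exact hs1.sub hs2
  -- ## Basic facts about `g`
  have hgcx : ∀ y, Continuous fun x => g x y := fun y =>
    continuous_iff_continuousAt.2 fun x => (hgx x y).continuousAt
  have hσg : ∀ y, Continuous fun z => sig (g z y) := fun y => hσc.comp (hgcx y)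
  have hσ'g : ∀ y, Continuous fun z => deriv sig (g z y) := fun y => hσ'c.comp (hgcx y)
  have hftc : ∀ (y x₀' x : ℝ), g x y - g x₀' y = ∫ z in x₀'..x, sig (g z y) := fun y x₀' x =>
    (intervalIntegral.integral_eq_sub_of_hasDerivAt (fun z _ => hgx z y)
      ((hσg y).intervalIntegrable _ _)).symm
  have hgd2 : ∀ (y y' x₀' x : ℝ),
      |g x y' - g x y| ≤ |g x₀' y' - g x₀' y| * Real.exp (M * |x - x₀'|) := by
    intro y y' x₀' x
    exact gron_two (f := fun z => g z y' - g z y) (f' := fun z => sig (g z y') - sig (g z y))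
      (fun z => (hgx z y').sub (hgx z y)) (fun z => hlip _ _) x₀' x
  have hgdiff : ∀ (x y y' : ℝ), |g x y' - g x y| ≤ |y' - y| * Real.exp (M * |x|) := by
    intro x y y'
    have h := hgd2 y y' 0 x
    simpa [hg0] using h
  have hgne : ∀ (y y' : ℝ), y ≠ y' → ∀ x, g x y' ≠ g x y := by
    intro y y' hyy x hEq
    apply hyy
    have h1 : |g 0 y' - g 0 y| ≤ 0 := by simpa [hEq] using hgd2 y y' x 0
    have h2 := abs_eq_zero.1 (le_antisymm h1 (abs_nonneg _))
    rw [hg0, hg0] at h2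
    exact (sub_eq_zero.1 h2).symm
  -- ## The logarithmic-derivative quotient `c`
  set c : ℝ → ℝ → ℝ → ℝ := fun y y' z =>
    if g z y' = g z y then deriv sig (g z y)
    else (sig (g z y') - sig (g z y)) / (g z y' - g z y) with hc_def
  have hc_eq_same : ∀ y z, c y y z = deriv sig (g z y) := by
    intro y z; rw [hc_def]; simp
  have hc_eq_of_ne : ∀ y y' z, y ≠ y' →
      c y y' z = (sig (g z y') - sig (g z y)) / (g z y' - g z y) := by
    intro y y' z h; rw [hc_def]; exact if_neg (hgne y y' h z)
  have hcc : ∀ y y', Continuous (c y y') := by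
    intro y y'
    rcases eq_or_ne y y' with rfl | h
    · have h1 : c y y = fun z => deriv sig (g z y) := funext fun z => hc_eq_same y z
      rw [h1]; exact hσ'g y
    · have h1 : c y y' = fun z => (sig (g z y') - sig (g z y)) / (g z y' - g z y) :=
        funext fun z => hc_eq_of_ne y y' z h
      rw [h1]
      exact ((hσg y').sub (hσg y)).div ((hgcx y').sub (hgcx y))
        (fun z => sub_ne_zero.2 (hgne y y' h z))
  have hcM : ∀ y y' z, |c y y' z| ≤ M := by
    intro y y' z
    rcases eq_or_ne y y' with rfl | h
    · rw [hc_eq_same]; exact hM _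
    · rw [hc_eq_of_ne y y' z h, abs_div,
        div_le_iff₀ (abs_pos.2 (sub_ne_zero.2 (hgne y y' h z)))]
      exact hlip _ _
  -- ## The exact representation of the `y`-increment of the flow
  have hrep : ∀ (y y' x : ℝ),
      g x y' - g x y = (y' - y) * Real.exp (∫ z in (0:ℝ)..x, c y y' z) := by
    intro y y' x
    rcases eq_or_ne y y' with rfl | h
    · simp
    · have hI : ∀ z, HasDerivAt (fun w => ∫ u in (0:ℝ)..w, c y y' u) (c y y' z) z :=
        fun z => ((hcc y y').integral_hasStrictDerivAt 0 z).hasDerivAt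
      have hh : ∀ z, HasDerivAt
          (fun w => (g w y' - g w y) * Real.exp (-(∫ u in (0:ℝ)..w, c y y' u))) 0 z := by
        intro z
        have h1 := ((hgx z y').sub (hgx z y)).mul ((hI z).neg.exp)
        refine h1.congr_deriv ?_
        simp only [Pi.sub_apply, Pi.neg_apply]
        have hkey : (g z y' - g z y) * c y y' z = sig (g z y') - sig (g z y) := by
          rw [hc_eq_of_ne y y' z h, mul_comm,
            div_mul_cancel₀ _ (sub_ne_zero.2 (hgne y y' h z))]
        rw [← hkey]; ring
      have hconst := is_const_of_deriv_eq_zero (𝕜 := ℝ)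
        (fun z => (hh z).differentiableAt) (fun z => (hh z).deriv) x 0
      simp only [intervalIntegral.integral_same, neg_zero, Real.exp_zero, mul_one, hg0] at hconst
      have h2 : g x y' - g x y
          = (g x y' - g x y) * Real.exp (-(∫ u in (0:ℝ)..x, c y y' u)) *
            Real.exp (∫ u in (0:ℝ)..x, c y y' u) := by
        rw [mul_assoc, ← Real.exp_add, neg_add_cancel, Real.exp_zero, mul_one]
      rw [h2, hconst]
  -- ## Local bounds for `g`
  have hsupg : ∀ R : ℝ, 0 ≤ R → ∃ B, 0 ≤ B ∧ ∀ z y : ℝ, |z| ≤ R → |y| ≤ R → |g z y| ≤ B := by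
    intro R hR
    obtain ⟨B₀, hB₀⟩ := (isCompact_Icc (a := -R) (b := R)).exists_bound_of_continuousOn
      (hgcx 0).continuousOn
    have hB₀0 : 0 ≤ B₀ := le_trans (norm_nonneg _) (hB₀ 0 ⟨neg_nonpos.2 hR, hR⟩)
    refine ⟨B₀ + R * Real.exp (M * R), by positivity, ?_⟩
    intro z y hz hy
    have h1 : |g z 0| ≤ B₀ := by
      have := hB₀ z (by rw [mem_Icc]; exact abs_le.1 hz)
      simpa [Real.norm_eq_abs] using this
    have h2 : |g z y - g z 0| ≤ |y| * Real.exp (M * |z|) := by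
      simpa using hgdiff z 0 y
    have h3 : |y| * Real.exp (M * |z|) ≤ R * Real.exp (M * R) :=
      mul_le_mul hy (Real.exp_le_exp.2 (mul_le_mul_of_nonneg_left hz hM0))
        (Real.exp_pos _).le hR
    have h4 : |g z y| ≤ |g z 0| + |g z y - g z 0| := by
      have := abs_add_le (g z 0) (g z y - g z 0); simpa using this
    linarith
  have hgxLip : ∀ R : ℝ, 0 ≤ R → ∃ C, 0 ≤ C ∧
      (∀ z y : ℝ, |z| ≤ R → |y| ≤ R → |sig (g z y)| ≤ C) ∧
      ∀ x x' y : ℝ, |x| ≤ R → |x'| ≤ R → |y| ≤ R → |g x' y - g x y| ≤ C * |x' - x| := by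
    intro R hR
    obtain ⟨B, hB0, hB⟩ := hsupg R hR
    have hCb : ∀ z y : ℝ, |z| ≤ R → |y| ≤ R → |sig (g z y)| ≤ |sig 0| + M * B := by
      intro z y hz hy
      have h1 : |sig (g z y) - sig 0| ≤ M * |g z y - 0| := hlip _ _
      rw [sub_zero] at h1
      have h2 : M * |g z y| ≤ M * B := mul_le_mul_of_nonneg_left (hB z y hz hy) hM0
      have h3 := abs_sub_abs_le_abs_sub (sig (g z y)) (sig 0)
      linarith
    refine ⟨|sig 0| + M * B, by positivity, hCb, ?_⟩
    intro x x' y hx hx' hy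
    rw [show g x' y - g x y = ∫ z in x..x', sig (g z y) from hftc y x x']
    have h := intervalIntegral.norm_integral_le_of_norm_le_const (C := |sig 0| + M * B)
      (f := fun z => sig (g z y)) (a := x) (b := x') ?_
    · simpa [Real.norm_eq_abs] using h
    · intro z hz
      have h2 := (uIoc_abs hz).2
      rw [Real.norm_eq_abs]
      exact hCb z y (le_trans h2 (max_le hx hx')) hy
  -- ## Joint continuity of `g`
  have hgc : Continuous fun p : ℝ × ℝ => g p.1 p.2 := by
    rw [continuous_iff_continuousAt]
    rintro ⟨x₁, y₁⟩
    have hR0 : (0:ℝ) ≤ |x₁| + |y₁| + 1 := by positivity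
    obtain ⟨C, hC0, hCσ', hCx'⟩ := hgxLip (|x₁| + |y₁| + 1) hR0
    apply continuousAt_of_locally_lipschitz zero_lt_one
      (C + Real.exp (M * (|x₁| + |y₁| + 1)))
    intro p hp
    have hd1 : dist p.1 x₁ ≤ dist p (x₁, y₁) := by rw [Prod.dist_eq]; exact le_max_left _ _
    have hd2 : dist p.2 y₁ ≤ dist p (x₁, y₁) := by rw [Prod.dist_eq]; exact le_max_right _ _
    have ha1 : |p.1 - x₁| < 1 := by rw [← Real.dist_eq]; exact lt_of_le_of_lt hd1 hp
    have ha2 : |p.2 - y₁| < 1 := by rw [← Real.dist_eq]; exact lt_of_le_of_lt hd2 hp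
    have hx1 : |p.1| ≤ |x₁| + |y₁| + 1 := by
      have := abs_sub_abs_le_abs_sub p.1 x₁
      have := abs_nonneg y₁
      linarith
    have hy1 : |p.2| ≤ |x₁| + |y₁| + 1 := by
      have := abs_sub_abs_le_abs_sub p.2 y₁
      have := abs_nonneg x₁
      linarith
    have hx₁R : |x₁| ≤ |x₁| + |y₁| + 1 := by have := abs_nonneg y₁; linarith
    have hy₁R : |y₁| ≤ |x₁| + |y₁| + 1 := by have := abs_nonneg x₁; linarith
    have hb1 : |g p.1 p.2 - g x₁ p.2| ≤ C * |p.1 - x₁| := hCx' x₁ p.1 p.2 hx₁R hx1 hy1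
    have hb2 : |g x₁ p.2 - g x₁ y₁| ≤ |p.2 - y₁| * Real.exp (M * |x₁|) := hgdiff x₁ y₁ p.2
    have hb3 : Real.exp (M * |x₁|) ≤ Real.exp (M * (|x₁| + |y₁| + 1)) :=
      Real.exp_le_exp.2 (mul_le_mul_of_nonneg_left hx₁R hM0)
    calc dist (g p.1 p.2) (g x₁ y₁) = |g p.1 p.2 - g x₁ y₁| := Real.dist_eq _ _
      _ ≤ |g p.1 p.2 - g x₁ p.2| + |g x₁ p.2 - g x₁ y₁| := abs_sub_le _ _ _
      _ ≤ (C + Real.exp (M * (|x₁| + |y₁| + 1))) * dist p (x₁, y₁) := by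
          rw [show dist p.1 x₁ = |p.1 - x₁| from Real.dist_eq _ _] at hd1
          rw [show dist p.2 y₁ = |p.2 - y₁| from Real.dist_eq _ _] at hd2
          have q1 : C * |p.1 - x₁| ≤ C * dist p (x₁, y₁) :=
            mul_le_mul_of_nonneg_left hd1 hC0
          have q2 : |p.2 - y₁| * Real.exp (M * |x₁|)
              ≤ dist p (x₁, y₁) * Real.exp (M * (|x₁| + |y₁| + 1)) :=
            mul_le_mul hd2 hb3 (Real.exp_pos _).le dist_nonneg
          linarith [hb1, hb2, q1, q2]
  -- ## Continuity composites
  have hXc : Continuous fun u => g (s u) (Y u) := hgc.comp (hsc.prodMk hYc)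
  have hbc : Continuous b := hb.continuous
  have hσXc : Continuous fun u => sig (g (s u) (Y u)) := hσc.comp hXc
  have hbXc : Continuous fun u => b (g (s u) (Y u)) := hbc.comp hXc
  have hρIc : Continuous fun u => ∫ z in (0:ℝ)..(s u), deriv sig (g z (Y u)) := by
    apply intervalIntegral.continuous_parametric_intervalIntegral_of_continuous (μ := volume)
      (f := fun u z => deriv sig (g z (Y u))) ?_ hsc
    exact hσ'c.comp (hgc.comp (continuous_snd.prodMk (hYc.comp continuous_fst)))
  have hIntc : Continuous fun u =>
      Real.exp (-(∫ z in (0:ℝ)..(s u), deriv sig (g z (Y u)))) * b (g (s u) (Y u)) :=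
    (Real.continuous_exp.comp hρIc.neg).mul hbXc
  have hY0 : Y 0 = x₀ := by
    have := hYeq 0 le_rfl
    simpa [Set.Ioc_self] using this
  -- ## Splitting of set integrals
  have hsplit : ∀ (ν : Measure ℝ) [IsLocallyFiniteMeasure ν] (h : ℝ → ℝ), Continuous h →
      ∀ a a' : ℝ, 0 ≤ a → a ≤ a' →
      (∫ u in Ioc (0:ℝ) a', h u ∂ν) = (∫ u in Ioc (0:ℝ) a, h u ∂ν) + ∫ u in Ioc a a', h u ∂ν := by
    intro ν _ h hc a a' ha haa'
    rw [← Set.Ioc_union_Ioc_eq_Ioc ha haa',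
      setIntegral_union (Set.Ioc_disjoint_Ioc_of_le le_rfl) measurableSet_Ioc
        hc.integrableOn_Ioc hc.integrableOn_Ioc]
  have hYd : ∀ a a' : ℝ, 0 ≤ a → a ≤ a' →
      Y a' - Y a = ∫ u in Ioc a a',
        Real.exp (-(∫ z in (0:ℝ)..(s u), deriv sig (g z (Y u)))) *
          b (g (s u) (Y u)) ∂F.measure := by
    intro a a' ha haa'
    have h1 := hYeq a ha
    have h2 := hYeq a' (le_trans ha haa')
    have h3 : (∫ u in Ioc (0:ℝ) a',
          Real.exp (-(∫ z in (0:ℝ)..(s u), deriv sig (g z (Y u)))) *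
            b (g (s u) (Y u)) ∂F.measure)
        = (∫ u in Ioc (0:ℝ) a,
          Real.exp (-(∫ z in (0:ℝ)..(s u), deriv sig (g z (Y u)))) *
            b (g (s u) (Y u)) ∂F.measure)
          + ∫ u in Ioc a a',
          Real.exp (-(∫ z in (0:ℝ)..(s u), deriv sig (g z (Y u)))) *
            b (g (s u) (Y u)) ∂F.measure :=
      hsplit F.measure _ hIntc a a' ha haa'
    rw [h1, h2, h3]; ring
  -- ## Main argument
  intro t ht
  have habs0 : ∀ q : ℝ, (∀ ε > 0, |q| ≤ ε) → q = 0 := by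
    intro q hq
    by_contra hne
    have h2 := abs_pos.2 hne
    have h1 := hq (|q|/2) (by linarith)
    linarith
  suffices habs : ∀ ε > 0,
      |g (s t) (Y t) - x₀ -
        ((∫ u in Ioc (0:ℝ) t, sig (g (s u) (Y u)) ∂s1.measure) -
          (∫ u in Ioc (0:ℝ) t, sig (g (s u) (Y u)) ∂s2.measure) +
          ∫ u in Ioc (0:ℝ) t, b (g (s u) (Y u)) ∂F.measure)| ≤ ε by
    have hQ := habs0 _ habs
    linarith [hQ]
  intro ε hε
  -- bounds on the compact time interval
  obtain ⟨R, hR0, hR⟩ : ∃ R, 0 ≤ R ∧ ∀ u ∈ Icc (0:ℝ) t, |s u| ≤ R ∧ |Y u| ≤ R := by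
    obtain ⟨Rs, hRs⟩ := (isCompact_Icc (a := (0:ℝ)) (b := t)).exists_bound_of_continuousOn
      hsc.continuousOn
    obtain ⟨RY, hRY⟩ := (isCompact_Icc (a := (0:ℝ)) (b := t)).exists_bound_of_continuousOn
      hYc.continuousOn
    refine ⟨max 0 (max Rs RY), le_max_left _ _, fun u hu => ⟨?_, ?_⟩⟩
    · have h := hRs u hu; rw [Real.norm_eq_abs] at h
      exact h.trans ((le_max_left Rs RY).trans (le_max_right 0 _))
    · have h := hRY u hu; rw [Real.norm_eq_abs] at h
      exact h.trans ((le_max_right Rs RY).trans (le_max_right 0 _))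
  obtain ⟨B, hB0, hB⟩ := hsupg R hR0
  obtain ⟨Cσ, hCσ0, hCσ, hCx⟩ := hgxLip R hR0
  obtain ⟨Λ, hΛdef⟩ : ∃ x : ℝ, x = Cσ + Real.exp (M * R) := ⟨_, rfl⟩
  have hΛ0 : 0 < Λ := by rw [hΛdef]; positivity
  have hCb0 : 0 ≤ Cb := (abs_nonneg _).trans (hbB 0)
  have hV0 : 0 ≤ (s1 t - s1 0) + (s2 t - s2 0) := by
    have h1 := s1.mono ht
    have h2 := s2.mono ht
    linarith
  have hW0 : 0 ≤ F t := by rw [← hF0]; exact F.mono ht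
  have hMΛV : 0 ≤ M * Λ * ((s1 t - s1 0) + (s2 t - s2 0)) :=
    mul_nonneg (mul_nonneg hM0 hΛ0.le) hV0
  have hMCbW : 0 ≤ M * Cb * (F t) := mul_nonneg (mul_nonneg hM0 hCb0) hW0
  have hRCbW : 0 ≤ R * Cb * (F t) := mul_nonneg (mul_nonneg hR0 hCb0) hW0
  -- choice of ε₁
  obtain ⟨ε₁, hε₁def⟩ : ∃ x : ℝ, x = min (1/(4*(R+1))) (ε/(16*R*Cb*(F t) + 1)) := ⟨_, rfl⟩
  have hd16 : 0 < 16*R*Cb*(F t) + 1 := by linarith [hRCbW]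
  have hε₁0 : 0 < ε₁ := by
    rw [hε₁def]
    exact lt_min (div_pos one_pos (by linarith)) (div_pos hε hd16)
  have hε₁a : 2*ε₁*R ≤ 1/2 := by
    have h1 : ε₁ ≤ 1/(4*(R+1)) := by rw [hε₁def]; exact min_le_left _ _
    rw [le_div_iff₀ (by linarith : (0:ℝ) < 4*(R+1))] at h1
    linarith [hε₁0]
  have hε₁b : ε₁*(16*R*Cb*(F t) + 1) ≤ ε := by
    have h1 : ε₁ ≤ ε/(16*R*Cb*(F t) + 1) := by rw [hε₁def]; exact min_le_right _ _
    rwa [le_div_iff₀ hd16] at h1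
  -- modulus of continuity for `deriv sig` on `[-B, B]`
  obtain ⟨η, hη0, hη⟩ : ∃ η > 0, ∀ w w' : ℝ, w ∈ Icc (-B) B → w' ∈ Icc (-B) B →
      |w - w'| ≤ η → |deriv sig w - deriv sig w'| ≤ ε₁ := by
    have huc := (isCompact_Icc (a := -B) (b := B)).uniformContinuousOn_of_continuous
      hσ'c.continuousOn
    rw [Metric.uniformContinuousOn_iff_le] at huc
    obtain ⟨η, hη0, H⟩ := huc ε₁ hε₁0
    refine ⟨η, hη0, fun w w' hw hw' hd => ?_⟩
    have := H w hw w' hw' (by rwa [Real.dist_eq])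
    rwa [Real.dist_eq] at this
  -- choice of η₂
  obtain ⟨η₂, hη₂def⟩ : ∃ x : ℝ, x = min (η * Real.exp (-(M*R))) (min (1/(2*(M+1)))
    (ε/(8*M*Λ*((s1 t - s1 0) + (s2 t - s2 0)) + 8*M*Cb*(F t) + 1))) := ⟨_, rfl⟩
  have hd8 : 0 < 8*M*Λ*((s1 t - s1 0) + (s2 t - s2 0)) + 8*M*Cb*(F t) + 1 := by
    linarith [hMΛV, hMCbW]
  have hη₂0 : 0 < η₂ := by
    rw [hη₂def]
    exact lt_min (mul_pos hη0 (Real.exp_pos _))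
      (lt_min (div_pos one_pos (by linarith)) (div_pos hε hd8))
  have hη₂a : Real.exp (M*R) * η₂ ≤ η := by
    have h1 : η₂ ≤ η * Real.exp (-(M*R)) := by rw [hη₂def]; exact min_le_left _ _
    calc Real.exp (M*R) * η₂ ≤ Real.exp (M*R) * (η * Real.exp (-(M*R))) :=
          mul_le_mul_of_nonneg_left h1 (Real.exp_pos _).le
      _ = η := by rw [mul_comm (η) _, ← mul_assoc, ← Real.exp_add, add_neg_cancel,
          Real.exp_zero, one_mul]
  have hη₂b : M*η₂ ≤ 1/2 := by
    have h1 : η₂ ≤ 1/(2*(M+1)) := by rw [hη₂def]; exact (min_le_right _ _).trans (min_le_left _ _)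
    rw [le_div_iff₀ (by linarith : (0:ℝ) < 2*(M+1))] at h1
    linarith [hη₂0]
  have hη₂c : η₂ * (8*M*Λ*((s1 t - s1 0) + (s2 t - s2 0)) + 8*M*Cb*(F t) + 1) ≤ ε := by
    have h1 : η₂ ≤ ε/(8*M*Λ*((s1 t - s1 0) + (s2 t - s2 0)) + 8*M*Cb*(F t) + 1) := by
      rw [hη₂def]; exact (min_le_right _ _).trans (min_le_right _ _)
    rwa [le_div_iff₀ hd8] at h1
  -- modulus of continuity for `s` and `Y` on `[0, t]`
  obtain ⟨δ, hδ0, hδ⟩ : ∃ δ > 0, ∀ u ∈ Icc (0:ℝ) t, ∀ u' ∈ Icc (0:ℝ) t,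
      |u - u'| ≤ δ → |s u - s u'| ≤ η₂ ∧ |Y u - Y u'| ≤ η₂ := by
    have hucs := (isCompact_Icc (a := (0:ℝ)) (b := t)).uniformContinuousOn_of_continuous
      hsc.continuousOn
    have hucY := (isCompact_Icc (a := (0:ℝ)) (b := t)).uniformContinuousOn_of_continuous
      hYc.continuousOn
    rw [Metric.uniformContinuousOn_iff_le] at hucs hucY
    obtain ⟨δ1, hδ10, H1⟩ := hucs η₂ hη₂0
    obtain ⟨δ2, hδ20, H2⟩ := hucY η₂ hη₂0
    refine ⟨min δ1 δ2, lt_min hδ10 hδ20, fun u hu u' hu' hd => ⟨?_, ?_⟩⟩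
    · have := H1 u hu u' hu' (by rw [Real.dist_eq]; exact hd.trans (min_le_left _ _))
      rwa [Real.dist_eq] at this
    · have := H2 u hu u' hu' (by rw [Real.dist_eq]; exact hd.trans (min_le_right _ _))
      rwa [Real.dist_eq] at this
  -- choice of the partition
  obtain ⟨n, hn⟩ := exists_nat_gt (t/δ)
  have hn0 : 0 < (n:ℝ) := lt_of_le_of_lt (div_nonneg ht hδ0.le) hn
  have hmesh : t/(n:ℝ) < δ := by
    rw [div_lt_iff₀ hn0]
    have := (div_lt_iff₀ hδ0).1 hn
    linarith [this]
  have hmesh0 : 0 ≤ t/(n:ℝ) := div_nonneg ht hn0.le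
  obtain ⟨p, hpdef⟩ : ∃ p : ℕ → ℝ, p = fun i : ℕ => (i:ℝ) * (t/(n:ℝ)) :=
    ⟨fun i : ℕ => (i:ℝ) * (t/(n:ℝ)), rfl⟩
  have hp0 : p 0 = 0 := by rw [hpdef]; simp
  have hpn : p n = t := by rw [hpdef]; field_simp
  have hpstep : ∀ i : ℕ, p (i+1) - p i = t/(n:ℝ) := by
    intro i; rw [hpdef]; push_cast; ring
  have hpmono : ∀ i : ℕ, p i ≤ p (i+1) := by
    intro i; have := hpstep i; linarith
  have hpmem : ∀ i : ℕ, i ≤ n → p i ∈ Icc (0:ℝ) t := by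
    intro i hi
    constructor
    · rw [hpdef]; exact mul_nonneg (Nat.cast_nonneg _) hmesh0
    · rw [hpdef]; simp only []
      calc (i:ℝ) * (t/(n:ℝ)) ≤ (n:ℝ) * (t/(n:ℝ)) :=
            mul_le_mul_of_nonneg_right (Nat.cast_le.2 hi) hmesh0
        _ = t := by field_simp
  -- the quotient `c` is close to `deriv sig` along close trajectories
  have hcnear : ∀ y y' z : ℝ, |z| ≤ R → |y| ≤ R → |y'| ≤ R → |y' - y| ≤ η₂ →
      |c y y' z - deriv sig (g z y)| ≤ ε₁ := by
    intro y y' z hz hy hy' hyy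
    have hp : |g z y| ≤ B := hB z y hz hy
    have hq : |g z y'| ≤ B := hB z y' hz hy'
    have hpq : |g z y' - g z y| ≤ η := by
      have h1 : |g z y' - g z y| ≤ |y' - y| * Real.exp (M * |z|) := hgdiff z y y'
      have h2 : Real.exp (M * |z|) ≤ Real.exp (M * R) :=
        Real.exp_le_exp.2 (mul_le_mul_of_nonneg_left hz hM0)
      have h3 : |y' - y| * Real.exp (M * |z|) ≤ η₂ * Real.exp (M * |z|) :=
        mul_le_mul_of_nonneg_right hyy (Real.exp_pos _).le
      have h4 : η₂ * Real.exp (M * |z|) ≤ η₂ * Real.exp (M * R) :=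
        mul_le_mul_of_nonneg_left h2 hη₂0.le
      calc |g z y' - g z y| ≤ η₂ * Real.exp (M * R) := by linarith
        _ ≤ η := by rw [mul_comm]; exact hη₂a
    by_cases hqq : g z y' = g z y
    · simp only [hc_def, if_pos hqq, sub_self, abs_zero]
      exact hε₁0.le
    · have hceq : c y y' z = (sig (g z y') - sig (g z y)) / (g z y' - g z y) := by
        simp only [hc_def, if_neg hqq]
      have hd : g z y' - g z y ≠ 0 := sub_ne_zero.2 hqq
      have hσftc : sig (g z y') - sig (g z y) = ∫ w in (g z y)..(g z y'), deriv sig w :=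
        (intervalIntegral.integral_eq_sub_of_hasDerivAt (fun w _ => hσd w)
          (hσ'c.intervalIntegrable _ _)).symm
      have hconst : deriv sig (g z y) * (g z y' - g z y)
          = ∫ _w in (g z y)..(g z y'), deriv sig (g z y) := by
        rw [intervalIntegral.integral_const, smul_eq_mul, mul_comm]
      have hnum : sig (g z y') - sig (g z y) - deriv sig (g z y) * (g z y' - g z y)
          = ∫ w in (g z y)..(g z y'), (deriv sig w - deriv sig (g z y)) := by
        rw [intervalIntegral.integral_sub (hσ'c.intervalIntegrable _ _)
          intervalIntegrable_const, ← hσftc, ← hconst]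
      have hbnd : |∫ w in (g z y)..(g z y'), (deriv sig w - deriv sig (g z y))|
          ≤ ε₁ * |g z y' - g z y| := by
        have h := intervalIntegral.norm_integral_le_of_norm_le_const (C := ε₁)
          (f := fun w => deriv sig w - deriv sig (g z y)) (a := g z y) (b := g z y') ?_
        · simpa [Real.norm_eq_abs] using h
        · intro w hw
          obtain ⟨hw1, hw2⟩ := uIoc_abs hw
          rw [Real.norm_eq_abs]
          exact hη w (g z y) (mem_Icc.2 (abs_le.1 (hw2.trans (max_le hp hq))))
            (mem_Icc.2 (abs_le.1 hp)) (hw1.trans hpq)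
      rw [hceq]
      have heq2 : (sig (g z y') - sig (g z y)) / (g z y' - g z y) - deriv sig (g z y)
          = (sig (g z y') - sig (g z y) - deriv sig (g z y) * (g z y' - g z y))
            / (g z y' - g z y) := by
        field_simp
      rw [heq2, abs_div, div_le_iff₀ (abs_pos.2 hd), hnum]
      exact hbnd
  -- the per-interval estimate
  have key : ∀ a a' : ℝ, a ∈ Icc (0:ℝ) t → a' ∈ Icc (0:ℝ) t → a ≤ a' → a' - a ≤ t/(n:ℝ) →
      |(g (s a') (Y a') - g (s a) (Y a)) -
        ((∫ u in Ioc a a', sig (g (s u) (Y u)) ∂s1.measure) -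
         (∫ u in Ioc a a', sig (g (s u) (Y u)) ∂s2.measure) +
         ∫ u in Ioc a a', b (g (s u) (Y u)) ∂F.measure)| ≤
      2*M*Λ*η₂ * ((s1 a' - s1 a) + (s2 a' - s2 a))
        + 2*(2*ε₁*R + M*η₂)*Cb * (F a' - F a) := by
    intro a a' haI ha'I haa' hlen
    obtain ⟨hsa, hYa⟩ := hR a haI
    obtain ⟨hsa', hYa'⟩ := hR a' ha'I
    have hadel : |a' - a| ≤ δ := by
      rw [abs_of_nonneg (by linarith)]
      linarith [hmesh]
    obtain ⟨hsd, hYdist⟩ := hδ a' ha'I a haI hadel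
    have hexpR : Real.exp (M * |s a|) ≤ Real.exp (M * R) :=
      Real.exp_le_exp.2 (mul_le_mul_of_nonneg_left hsa hM0)
    -- closeness of `X u` to `X a` on the interval
    have hXu : ∀ u ∈ Ioc a a', |g (s u) (Y u) - g (s a) (Y a)| ≤ Λ * η₂ := by
      intro u hu
      have huI : u ∈ Icc (0:ℝ) t := ⟨le_trans haI.1 hu.1.le, le_trans hu.2 ha'I.2⟩
      obtain ⟨hsu, hYu⟩ := hR u huI
      have hud : |u - a| ≤ δ := by
        rw [abs_of_nonneg (by linarith [hu.1.le])]
        linarith [hu.2, hmesh]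
      obtain ⟨hsud, hYud⟩ := hδ u huI a haI hud
      have h1 : |g (s u) (Y u) - g (s a) (Y u)| ≤ Cσ * |s u - s a| :=
        hCx (s a) (s u) (Y u) hsa hsu hYu
      have h2 : |g (s a) (Y u) - g (s a) (Y a)| ≤ |Y u - Y a| * Real.exp (M * |s a|) :=
        hgdiff (s a) (Y a) (Y u)
      have h3 := abs_sub_le (g (s u) (Y u)) (g (s a) (Y u)) (g (s a) (Y a))
      have e1 : Cσ * |s u - s a| ≤ Cσ * η₂ := mul_le_mul_of_nonneg_left hsud hCσ0
      have e2 : |Y u - Y a| * Real.exp (M * |s a|) ≤ η₂ * Real.exp (M * |s a|) :=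
        mul_le_mul_of_nonneg_right hYud (Real.exp_pos _).le
      have e3 : η₂ * Real.exp (M * |s a|) ≤ η₂ * Real.exp (M * R) :=
        mul_le_mul_of_nonneg_left hexpR hη₂0.le
      rw [hΛdef]
      linarith [h1, h2, h3, e1, e2, e3]
    -- generic Stieltjes-integral estimate (applied to `s1` and `s2`)
    have hE12 : ∀ ν : StieltjesFunction ℝ,
        |(∫ u in Ioc a a', sig (g (s u) (Y u)) ∂ν.measure)
          - sig (g (s a) (Y a)) * (ν a' - ν a)| ≤ M*Λ*η₂ * (ν a' - ν a) := by
      intro ν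
      have hνfin : ν.measure (Ioc a a') < ⊤ := by
        rw [ν.measure_Ioc]; exact ENNReal.ofReal_lt_top
      have hνm : (ν.measure (Ioc a a')).toReal = ν a' - ν a := by
        rw [ν.measure_Ioc, ENNReal.toReal_ofReal (sub_nonneg.2 (ν.mono haa'))]
      have hconst : (∫ _u in Ioc a a', sig (g (s a) (Y a)) ∂ν.measure)
          = sig (g (s a) (Y a)) * (ν a' - ν a) := by
        rw [setIntegral_const, measureReal_def, hνm, smul_eq_mul, mul_comm]
      have hsub : (∫ u in Ioc a a', sig (g (s u) (Y u)) ∂ν.measure)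
            - sig (g (s a) (Y a)) * (ν a' - ν a)
          = ∫ u in Ioc a a', (sig (g (s u) (Y u)) - sig (g (s a) (Y a))) ∂ν.measure := by
        rw [← hconst, ← integral_sub hσXc.integrableOn_Ioc
          (integrableOn_const hνfin.ne)]
      rw [hsub]
      have h := norm_setIntegral_le_of_norm_le_const hνfin
        (C := M*Λ*η₂) (f := fun u => sig (g (s u) (Y u)) - sig (g (s a) (Y a))) ?_
      · rw [measureReal_def, hνm] at h; rwa [Real.norm_eq_abs] at h
      · intro u hu
        rw [Real.norm_eq_abs]
        have h1 : |sig (g (s u) (Y u)) - sig (g (s a) (Y a))|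
            ≤ M * |g (s u) (Y u) - g (s a) (Y a)| := hlip _ _
        have h2 : M * |g (s u) (Y u) - g (s a) (Y a)| ≤ M * (Λ * η₂) :=
          mul_le_mul_of_nonneg_left (hXu u hu) hM0
        calc |sig (g (s u) (Y u)) - sig (g (s a) (Y a))| ≤ M * (Λ * η₂) := le_trans h1 h2
          _ = M*Λ*η₂ := by ring
    -- the `ds`-part estimate
    have hT1 : |(g (s a') (Y a')) - (g (s a) (Y a')) - sig (g (s a) (Y a)) * (s a' - s a)|
        ≤ M*Λ*η₂ * |s a' - s a| := by
      rw [hftc (Y a') (s a) (s a')]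
      have hconst2 : sig (g (s a) (Y a)) * (s a' - s a)
          = ∫ _z in (s a)..(s a'), sig (g (s a) (Y a)) := by
        rw [intervalIntegral.integral_const, smul_eq_mul, mul_comm]
      rw [hconst2, ← intervalIntegral.integral_sub ((hσg (Y a')).intervalIntegrable _ _)
        intervalIntegrable_const]
      have h := intervalIntegral.norm_integral_le_of_norm_le_const (C := M*Λ*η₂)
        (f := fun z => sig (g z (Y a')) - sig (g (s a) (Y a))) (a := s a) (b := s a') ?_
      · simpa [Real.norm_eq_abs] using h
      · intro z hz
        obtain ⟨hz1, hz2⟩ := uIoc_abs hz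
        have hzR : |z| ≤ R := le_trans hz2 (max_le hsa hsa')
        rw [Real.norm_eq_abs]
        have h1 : |g z (Y a') - g (s a) (Y a')| ≤ Cσ * |z - s a| :=
          hCx (s a) z (Y a') hsa hzR hYa'
        have h2 : |g (s a) (Y a') - g (s a) (Y a)| ≤ |Y a' - Y a| * Real.exp (M * |s a|) :=
          hgdiff (s a) (Y a) (Y a')
        have h3 := abs_sub_le (g z (Y a')) (g (s a) (Y a')) (g (s a) (Y a))
        have h4 : |z - s a| ≤ η₂ := le_trans hz1 hsd
        have h5 : |sig (g z (Y a')) - sig (g (s a) (Y a))|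
            ≤ M * |g z (Y a') - g (s a) (Y a)| := hlip _ _
        have e1 : Cσ * |z - s a| ≤ Cσ * η₂ := mul_le_mul_of_nonneg_left h4 hCσ0
        have e2 : |Y a' - Y a| * Real.exp (M * |s a|) ≤ η₂ * Real.exp (M * |s a|) :=
          mul_le_mul_of_nonneg_right hYdist (Real.exp_pos _).le
        have e3 : η₂ * Real.exp (M * |s a|) ≤ η₂ * Real.exp (M * R) :=
          mul_le_mul_of_nonneg_left hexpR hη₂0.le
        have h6 : |g z (Y a') - g (s a) (Y a)| ≤ Λ * η₂ := by
          rw [hΛdef]; linarith [h1, h2, h3, e1, e2, e3]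
        calc |sig (g z (Y a')) - sig (g (s a) (Y a))| ≤ M * (Λ*η₂) :=
              le_trans h5 (mul_le_mul_of_nonneg_left h6 hM0)
          _ = M*Λ*η₂ := by ring
    -- the `dμ`-part estimate
    have hδ₃1 : 2*ε₁*R + M*η₂ ≤ 1 := by linarith [hε₁a, hη₂b]
    have hT2 : |(g (s a) (Y a')) - (g (s a) (Y a))
        - ∫ u in Ioc a a', b (g (s u) (Y u)) ∂F.measure|
        ≤ 2*(2*ε₁*R + M*η₂)*Cb * (F a' - F a) := by
      have hFfin : F.measure (Ioc a a') < ⊤ := by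
        rw [F.measure_Ioc]; exact ENNReal.ofReal_lt_top
      have hFm : (F.measure (Ioc a a')).toReal = F a' - F a := by
        rw [F.measure_Ioc, ENNReal.toReal_ofReal (sub_nonneg.2 (F.mono haa'))]
      have hint1 : Continuous fun u => Real.exp ((∫ z in (0:ℝ)..(s a), c (Y a) (Y a') z)
          - ∫ z in (0:ℝ)..(s u), deriv sig (g z (Y u))) * b (g (s u) (Y u)) :=
        (Real.continuous_exp.comp (continuous_const.sub hρIc)).mul hbXc
      have h1 : g (s a) (Y a') - g (s a) (Y a)
          = ∫ u in Ioc a a', Real.exp ((∫ z in (0:ℝ)..(s a), c (Y a) (Y a') z)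
              - ∫ z in (0:ℝ)..(s u), deriv sig (g z (Y u))) * b (g (s u) (Y u)) ∂F.measure := by
        calc g (s a) (Y a') - g (s a) (Y a)
            = (Y a' - Y a) * Real.exp (∫ z in (0:ℝ)..(s a), c (Y a) (Y a') z) :=
              hrep (Y a) (Y a') (s a)
          _ = (∫ u in Ioc a a', Real.exp (-(∫ z in (0:ℝ)..(s u), deriv sig (g z (Y u)))) *
                b (g (s u) (Y u)) ∂F.measure)
              * Real.exp (∫ z in (0:ℝ)..(s a), c (Y a) (Y a') z) := by
              rw [hYd a a' haI.1 haa']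
          _ = ∫ u in Ioc a a', (Real.exp (-(∫ z in (0:ℝ)..(s u), deriv sig (g z (Y u)))) *
                b (g (s u) (Y u)))
              * Real.exp (∫ z in (0:ℝ)..(s a), c (Y a) (Y a') z) ∂F.measure :=
              (MeasureTheory.integral_mul_const _ _).symm
          _ = ∫ u in Ioc a a', Real.exp ((∫ z in (0:ℝ)..(s a), c (Y a) (Y a') z)
              - ∫ z in (0:ℝ)..(s u), deriv sig (g z (Y u))) * b (g (s u) (Y u)) ∂F.measure := by
              congr 1
              funext u
              rw [sub_eq_add_neg, Real.exp_add]
              ring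
      have h2 : g (s a) (Y a') - g (s a) (Y a)
            - (∫ u in Ioc a a', b (g (s u) (Y u)) ∂F.measure)
          = ∫ u in Ioc a a', (Real.exp ((∫ z in (0:ℝ)..(s a), c (Y a) (Y a') z)
              - ∫ z in (0:ℝ)..(s u), deriv sig (g z (Y u))) - 1) * b (g (s u) (Y u)) ∂F.measure := by
        rw [h1, ← integral_sub hint1.integrableOn_Ioc hbXc.integrableOn_Ioc]
        congr 1
        funext u
        ring
      rw [h2]
      have h := norm_setIntegral_le_of_norm_le_const hFfin
        (C := 2*(2*ε₁*R + M*η₂)*Cb)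
        (f := fun u => (Real.exp ((∫ z in (0:ℝ)..(s a), c (Y a) (Y a') z)
          - ∫ z in (0:ℝ)..(s u), deriv sig (g z (Y u))) - 1) * b (g (s u) (Y u))) ?_
      · rw [measureReal_def, hFm] at h; rwa [Real.norm_eq_abs] at h
      · intro u hu
        have huI : u ∈ Icc (0:ℝ) t := ⟨le_trans haI.1 hu.1.le, le_trans hu.2 ha'I.2⟩
        obtain ⟨hsu, hYu⟩ := hR u huI
        have hud : |u - a| ≤ δ := by
          rw [abs_of_nonneg (by linarith [hu.1.le])]
          linarith [hu.2, hmesh]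
        obtain ⟨hsud, hYud⟩ := hδ u huI a haI hud
        have hE : |(∫ z in (0:ℝ)..(s a), c (Y a) (Y a') z)
            - ∫ z in (0:ℝ)..(s u), deriv sig (g z (Y u))| ≤ 2*ε₁*R + M*η₂ := by
          have e1 : (∫ z in (0:ℝ)..(s a), (c (Y a) (Y a') z - deriv sig (g z (Y u))))
              = (∫ z in (0:ℝ)..(s a), c (Y a) (Y a') z)
                - ∫ z in (0:ℝ)..(s a), deriv sig (g z (Y u)) :=
            intervalIntegral.integral_sub ((hcc _ _).intervalIntegrable _ _)
              ((hσ'g (Y u)).intervalIntegrable _ _)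
          have e2 : (∫ z in (0:ℝ)..(s a), deriv sig (g z (Y u)))
                - ∫ z in (0:ℝ)..(s u), deriv sig (g z (Y u))
              = ∫ z in (s u)..(s a), deriv sig (g z (Y u)) :=
            intervalIntegral.integral_interval_sub_left
              ((hσ'g (Y u)).intervalIntegrable _ _) ((hσ'g (Y u)).intervalIntegrable _ _)
          have e3 : |∫ z in (0:ℝ)..(s a), (c (Y a) (Y a') z - deriv sig (g z (Y u)))|
              ≤ (2*ε₁) * |s a - 0| := by
            have h' := intervalIntegral.norm_integral_le_of_norm_le_const (C := 2*ε₁)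
              (f := fun z => c (Y a) (Y a') z - deriv sig (g z (Y u))) (a := 0) (b := s a) ?_
            · simpa [Real.norm_eq_abs] using h'
            · intro z hz
              obtain ⟨hz1, hz2⟩ := uIoc_abs hz
              have hzR : |z| ≤ R := by
                rw [abs_zero, max_eq_right (abs_nonneg _)] at hz2
                exact hz2.trans hsa
              rw [Real.norm_eq_abs]
              have c1 : |c (Y a) (Y a') z - deriv sig (g z (Y a))| ≤ ε₁ :=
                hcnear (Y a) (Y a') z hzR hYa hYa' hYdist
              have c2 : |deriv sig (g z (Y a)) - deriv sig (g z (Y u))| ≤ ε₁ := by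
                apply hη
                · exact mem_Icc.2 (abs_le.1 (hB z (Y a) hzR hYa))
                · exact mem_Icc.2 (abs_le.1 (hB z (Y u) hzR hYu))
                · have d1 : |g z (Y a) - g z (Y u)| ≤ |Y a - Y u| * Real.exp (M * |z|) :=
                    hgdiff z (Y u) (Y a)
                  have d2 : |Y a - Y u| ≤ η₂ := by rwa [abs_sub_comm] at hYud
                  have d3 : Real.exp (M*|z|) ≤ Real.exp (M*R) :=
                    Real.exp_le_exp.2 (mul_le_mul_of_nonneg_left hzR hM0)
                  have d4 : |Y a - Y u| * Real.exp (M*|z|) ≤ η₂ * Real.exp (M*|z|) :=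
                    mul_le_mul_of_nonneg_right d2 (Real.exp_pos _).le
                  have d5 : η₂ * Real.exp (M*|z|) ≤ η₂ * Real.exp (M*R) :=
                    mul_le_mul_of_nonneg_left d3 hη₂0.le
                  calc |g z (Y a) - g z (Y u)| ≤ η₂ * Real.exp (M*R) := by linarith
                    _ ≤ η := by rw [mul_comm]; exact hη₂a
              calc |c (Y a) (Y a') z - deriv sig (g z (Y u))|
                  ≤ |c (Y a) (Y a') z - deriv sig (g z (Y a))|
                    + |deriv sig (g z (Y a)) - deriv sig (g z (Y u))| :=
                    abs_sub_le _ _ _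
                _ ≤ 2*ε₁ := by linarith
          have e4 : |∫ z in (s u)..(s a), deriv sig (g z (Y u))| ≤ M * |s a - s u| := by
            have h' := intervalIntegral.norm_integral_le_of_norm_le_const (C := M)
              (f := fun z => deriv sig (g z (Y u))) (a := s u) (b := s a)
              (fun z _ => by rw [Real.norm_eq_abs]; exact hM _)
            simpa [Real.norm_eq_abs] using h'
          have e5 : |s a - 0| ≤ R := by rwa [sub_zero]
          have e6 : |s a - s u| ≤ η₂ := by rwa [abs_sub_comm] at hsud
          have e8 : (∫ z in (0:ℝ)..(s a), c (Y a) (Y a') z)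
              - ∫ z in (0:ℝ)..(s u), deriv sig (g z (Y u))
              = (∫ z in (0:ℝ)..(s a), (c (Y a) (Y a') z - deriv sig (g z (Y u))))
                + ∫ z in (s u)..(s a), deriv sig (g z (Y u)) := by
            linarith [e1, e2]
          have e9 : (2*ε₁) * |s a - 0| ≤ 2*ε₁*R := by
            have h'' := mul_le_mul_of_nonneg_left e5 (by linarith [hε₁0] : (0:ℝ) ≤ 2*ε₁)
            linarith [h'']
          have e10 : M * |s a - s u| ≤ M * η₂ := mul_le_mul_of_nonneg_left e6 hM0
          rw [e8]
          calc |(∫ z in (0:ℝ)..(s a), (c (Y a) (Y a') z - deriv sig (g z (Y u))))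
                + ∫ z in (s u)..(s a), deriv sig (g z (Y u))|
              ≤ |∫ z in (0:ℝ)..(s a), (c (Y a) (Y a') z - deriv sig (g z (Y u)))|
                + |∫ z in (s u)..(s a), deriv sig (g z (Y u))| := abs_add_le _ _
            _ ≤ 2*ε₁*R + M*η₂ := by linarith [e3, e4]
        rw [Real.norm_eq_abs, abs_mul]
        have hexp1 : |Real.exp ((∫ z in (0:ℝ)..(s a), c (Y a) (Y a') z)
            - ∫ z in (0:ℝ)..(s u), deriv sig (g z (Y u))) - 1|
            ≤ 2*(2*ε₁*R + M*η₂) := by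
          have h' := Real.abs_exp_sub_one_le (le_trans hE hδ₃1)
          linarith [h', hE]
        have hb2 : |b (g (s u) (Y u))| ≤ Cb := hbB _
        have hnn : 0 ≤ 2*(2*ε₁*R + M*η₂) := by
          linarith [mul_nonneg hε₁0.le hR0, mul_nonneg hM0 hη₂0.le]
        calc |Real.exp ((∫ z in (0:ℝ)..(s a), c (Y a) (Y a') z)
              - ∫ z in (0:ℝ)..(s u), deriv sig (g z (Y u))) - 1| * |b (g (s u) (Y u))|
            ≤ (2*(2*ε₁*R + M*η₂)) * Cb := mul_le_mul hexp1 hb2 (abs_nonneg _) hnn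
          _ = 2*(2*ε₁*R + M*η₂)*Cb := by ring
    -- combine the four estimates
    have hsplit_s : s a' - s a = (s1 a' - s1 a) - (s2 a' - s2 a) := by
      rw [hs, hs]; ring
    have habs_s : |s a' - s a| ≤ (s1 a' - s1 a) + (s2 a' - s2 a) := by
      rw [hsplit_s]
      have h1 := sub_nonneg.2 (s1.mono haa')
      have h2 := sub_nonneg.2 (s2.mono haa')
      rw [abs_le]
      constructor <;> linarith
    have hEs1 := hE12 s1
    have hEs2 := hE12 s2
    have hdecomp : (g (s a') (Y a') - g (s a) (Y a)) -
        ((∫ u in Ioc a a', sig (g (s u) (Y u)) ∂s1.measure) -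
         (∫ u in Ioc a a', sig (g (s u) (Y u)) ∂s2.measure) +
         ∫ u in Ioc a a', b (g (s u) (Y u)) ∂F.measure)
        = ((g (s a') (Y a')) - (g (s a) (Y a')) - sig (g (s a) (Y a)) * (s a' - s a))
          - ((∫ u in Ioc a a', sig (g (s u) (Y u)) ∂s1.measure)
              - sig (g (s a) (Y a)) * (s1 a' - s1 a))
          + ((∫ u in Ioc a a', sig (g (s u) (Y u)) ∂s2.measure)
              - sig (g (s a) (Y a)) * (s2 a' - s2 a))
          + ((g (s a) (Y a') - g (s a) (Y a))
              - ∫ u in Ioc a a', b (g (s u) (Y u)) ∂F.measure) := by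
      rw [hsplit_s]; ring
    have habs4 : ∀ x y z w : ℝ, |x - y + z + w| ≤ |x| + |y| + |z| + |w| := by
      intro x y z w
      calc |x - y + z + w| ≤ |x - y + z| + |w| := abs_add_le _ _
        _ ≤ |x - y| + |z| + |w| := by linarith [abs_add_le (x - y) z]
        _ ≤ |x| + |y| + |z| + |w| := by linarith [abs_sub x y]
    rw [hdecomp]
    have hMΛη : 0 ≤ M*Λ*η₂ := mul_nonneg (mul_nonneg hM0 hΛ0.le) hη₂0.le
    calc |((g (s a') (Y a')) - (g (s a) (Y a')) - sig (g (s a) (Y a)) * (s a' - s a))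
          - ((∫ u in Ioc a a', sig (g (s u) (Y u)) ∂s1.measure)
              - sig (g (s a) (Y a)) * (s1 a' - s1 a))
          + ((∫ u in Ioc a a', sig (g (s u) (Y u)) ∂s2.measure)
              - sig (g (s a) (Y a)) * (s2 a' - s2 a))
          + ((g (s a) (Y a') - g (s a) (Y a))
              - ∫ u in Ioc a a', b (g (s u) (Y u)) ∂F.measure)|
        ≤ |(g (s a') (Y a')) - (g (s a) (Y a')) - sig (g (s a) (Y a)) * (s a' - s a)|
          + |(∫ u in Ioc a a', sig (g (s u) (Y u)) ∂s1.measure)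
              - sig (g (s a) (Y a)) * (s1 a' - s1 a)|
          + |(∫ u in Ioc a a', sig (g (s u) (Y u)) ∂s2.measure)
              - sig (g (s a) (Y a)) * (s2 a' - s2 a)|
          + |(g (s a) (Y a') - g (s a) (Y a))
              - ∫ u in Ioc a a', b (g (s u) (Y u)) ∂F.measure| := habs4 _ _ _ _
      _ ≤ 2*M*Λ*η₂ * ((s1 a' - s1 a) + (s2 a' - s2 a))
          + 2*(2*ε₁*R + M*η₂)*Cb * (F a' - F a) := by
          linarith [hT1, hEs1, hEs2, hT2, mul_le_mul_of_nonneg_left habs_s hMΛη]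
  -- summation over the partition
  have hsum_int : ∀ (ν : Measure ℝ) [IsLocallyFiniteMeasure ν] (h : ℝ → ℝ), Continuous h →
      (∑ i ∈ Finset.range n, ∫ u in Ioc (p i) (p (i+1)), h u ∂ν)
        = ∫ u in Ioc (0:ℝ) t, h u ∂ν := by
    intro ν _ h hc
    have h1 : ∀ i ∈ Finset.range n, (∫ u in Ioc (p i) (p (i+1)), h u ∂ν)
        = (∫ u in Ioc (0:ℝ) (p (i+1)), h u ∂ν) - ∫ u in Ioc (0:ℝ) (p i), h u ∂ν := by
      intro i hi
      have hi' := Finset.mem_range.1 hi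
      have h2 := hsplit ν h hc (p i) (p (i+1)) (hpmem i (le_of_lt hi')).1 (hpmono i)
      linarith
    rw [Finset.sum_congr rfl h1,
      Finset.sum_range_sub (fun i => ∫ u in Ioc (0:ℝ) (p i), h u ∂ν), hpn, hp0]
    simp [Set.Ioc_self]
  have htot : g (s t) (Y t) - x₀ -
      ((∫ u in Ioc (0:ℝ) t, sig (g (s u) (Y u)) ∂s1.measure) -
        (∫ u in Ioc (0:ℝ) t, sig (g (s u) (Y u)) ∂s2.measure) +
        ∫ u in Ioc (0:ℝ) t, b (g (s u) (Y u)) ∂F.measure)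
      = ∑ i ∈ Finset.range n,
        ((g (s (p (i+1))) (Y (p (i+1))) - g (s (p i)) (Y (p i))) -
          ((∫ u in Ioc (p i) (p (i+1)), sig (g (s u) (Y u)) ∂s1.measure) -
           (∫ u in Ioc (p i) (p (i+1)), sig (g (s u) (Y u)) ∂s2.measure) +
           ∫ u in Ioc (p i) (p (i+1)), b (g (s u) (Y u)) ∂F.measure)) := by
    have e0 : (∑ i ∈ Finset.range n,
        (g (s (p (i+1))) (Y (p (i+1))) - g (s (p i)) (Y (p i)))) = g (s t) (Y t) - x₀ := by
      rw [Finset.sum_range_sub (fun i => g (s (p i)) (Y (p i))), hpn, hp0, hs0, hg0, hY0]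
    have e1 : (∑ i ∈ Finset.range n,
        ∫ u in Ioc (p i) (p (i+1)), sig (g (s u) (Y u)) ∂s1.measure)
        = ∫ u in Ioc (0:ℝ) t, sig (g (s u) (Y u)) ∂s1.measure := hsum_int s1.measure _ hσXc
    have e2 : (∑ i ∈ Finset.range n,
        ∫ u in Ioc (p i) (p (i+1)), sig (g (s u) (Y u)) ∂s2.measure)
        = ∫ u in Ioc (0:ℝ) t, sig (g (s u) (Y u)) ∂s2.measure := hsum_int s2.measure _ hσXc
    have e3 : (∑ i ∈ Finset.range n,
        ∫ u in Ioc (p i) (p (i+1)), b (g (s u) (Y u)) ∂F.measure)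
        = ∫ u in Ioc (0:ℝ) t, b (g (s u) (Y u)) ∂F.measure := hsum_int F.measure _ hbXc
    have esep : (∑ i ∈ Finset.range n,
        (g (s (p (i+1))) (Y (p (i+1))) - g (s (p i)) (Y (p i))))
        = (∑ i ∈ Finset.range n, g (s (p (i+1))) (Y (p (i+1))))
          - ∑ i ∈ Finset.range n, g (s (p i)) (Y (p i)) := Finset.sum_sub_distrib _ _
    simp only [Finset.sum_sub_distrib, Finset.sum_add_distrib]
    linarith [e0, e1, e2, e3, esep]
  rw [htot]
  calc |∑ i ∈ Finset.range n,
        ((g (s (p (i+1))) (Y (p (i+1))) - g (s (p i)) (Y (p i))) -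
          ((∫ u in Ioc (p i) (p (i+1)), sig (g (s u) (Y u)) ∂s1.measure) -
           (∫ u in Ioc (p i) (p (i+1)), sig (g (s u) (Y u)) ∂s2.measure) +
           ∫ u in Ioc (p i) (p (i+1)), b (g (s u) (Y u)) ∂F.measure))|
      ≤ ∑ i ∈ Finset.range n,
        |(g (s (p (i+1))) (Y (p (i+1))) - g (s (p i)) (Y (p i))) -
          ((∫ u in Ioc (p i) (p (i+1)), sig (g (s u) (Y u)) ∂s1.measure) -
           (∫ u in Ioc (p i) (p (i+1)), sig (g (s u) (Y u)) ∂s2.measure) +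
           ∫ u in Ioc (p i) (p (i+1)), b (g (s u) (Y u)) ∂F.measure)| :=
      Finset.abs_sum_le_sum_abs _ _
    _ ≤ ∑ i ∈ Finset.range n,
        (2*M*Λ*η₂ * ((s1 (p (i+1)) - s1 (p i)) + (s2 (p (i+1)) - s2 (p i)))
          + 2*(2*ε₁*R + M*η₂)*Cb * (F (p (i+1)) - F (p i))) := by
        apply Finset.sum_le_sum
        intro i hi
        have hi' := Finset.mem_range.1 hi
        exact key (p i) (p (i+1)) (hpmem i (le_of_lt hi')) (hpmem (i+1) hi')
          (hpmono i) (le_of_eq (hpstep i))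
    _ = 2*M*Λ*η₂ * ((s1 t - s1 0) + (s2 t - s2 0))
          + 2*(2*ε₁*R + M*η₂)*Cb * (F t - F 0) := by
        rw [Finset.sum_add_distrib, ← Finset.mul_sum, ← Finset.mul_sum,
          Finset.sum_add_distrib, Finset.sum_range_sub (fun i => s1 (p i)),
          Finset.sum_range_sub (fun i => s2 (p i)),
          Finset.sum_range_sub (fun i => F (p i)), hpn, hp0]
    _ ≤ ε := by
        rw [hF0, sub_zero]
        linarith [hη₂c, hε₁b, hη₂0, hε₁0, hε.le]
end
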